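/- arXiv:1803.01377 — 12 statements merged into one kernel-verified Lean document; each statement's English description precedes it below -/
import Mathlib

section
/- Let S be a semigroup, A an alphabet, and suppose there exists a universal sequence for S over A (i.e., a sequence of words w₁, w₂, … in the free semigroup A⁺ such that for every sequence s₁, s₂, … of elements of S there is a semigroup homomorphism φ : A⁺ → S with φ(wₙ) = sₙ for all n). Then for every countable alphabet B, a sequence (u₁, u₂, …) of words in B⁺ is universal for S if and only if the sequence (v₁, v₂, …) is universal for S, where vₘ is obtained from uₘ by replacing every occurrence of the letter bⱼ ∈ B by the word wⱼ ∈ A⁺. -/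
/-- A sequence of words in the free semigroup over `A` is universal for a semigroup `S`
if every sequence of elements of `S` is the image of the words under a single
semigroup homomorphism. -/
def IsUniversal (S : Type*) [Semigroup S] {A : Type*} (w : ℕ → FreeSemigroup A) : Prop :=
  ∀ s : ℕ → S, ∃ φ : FreeSemigroup A →ₙ* S, ∀ n, φ (w n) = s n

theorem stmt0 {S A B : Type*} [Semigroup S] [Countable B]
    (w : ℕ → FreeSemigroup A) (hw : IsUniversal S w)
    (e : B ↪ ℕ) (u : ℕ → FreeSemigroup B) :
    IsUniversal S u ↔
      IsUniversal S (fun m => (FreeSemigroup.lift (fun b => w (e b))) (u m)) := by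
  constructor
  · intro hu s
    rcases isEmpty_or_nonempty S with hS | hS
    · exact (hS.false (s 0)).elim
    obtain ⟨φ, hφ⟩ := hu s
    classical
    set t : ℕ → S := fun j =>
      if h : ∃ b, e b = j then φ (FreeSemigroup.of h.choose) else Classical.arbitrary S
      with ht
    obtain ⟨ψ, hψ⟩ := hw t
    refine ⟨ψ, fun m => ?_⟩
    have key : ψ.comp (FreeSemigroup.lift fun b => w (e b)) = φ := by
      apply FreeSemigroup.hom_ext
      funext b
      have h : ∃ b', e b' = e b := ⟨b, rfl⟩
      have hb : h.choose = b := e.injective h.choose_spec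
      simp only [Function.comp_apply, MulHom.comp_apply, FreeSemigroup.lift_of, hψ, ht]
      rw [dif_pos h, hb]
    calc ψ ((FreeSemigroup.lift fun b => w (e b)) (u m)) = φ (u m) := by rw [← key]; rfl
      _ = s m := hφ m
  · intro hv s
    obtain ⟨ψ, hψ⟩ := hv s
    exact ⟨ψ.comp (FreeSemigroup.lift fun b => w (e b)), hψ⟩
end

section
/- Let X and Y be infinite sets with |X| < |Y|. Then every universal sequence for the symmetric group Sym(X) is also a universal sequence for Sym(Y). -/
/-- Conjugation by an equivalence, as a monoid hom between permutation groups. -/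
def permCongrHom {α β : Type*} (e : α ≃ β) : Equiv.Perm α →* Equiv.Perm β where
  toFun f := e.permCongr f
  map_one' := by ext x; simp
  map_mul' f g := by ext x; simp [Equiv.Perm.mul_apply]

/-- If `X` and `Y` are infinite with `|X| < |Y|`, every universal sequence for
`Sym(X)` is universal for `Sym(Y)`. -/
theorem stmt4 {X Y : Type u} {A : Type*} [Infinite X] [Infinite Y] [Countable A]
    (hXY : Cardinal.mk X < Cardinal.mk Y)
    (w : ℕ → FreeSemigroup A) (hw : IsUniversal (Equiv.Perm X) w) :
    IsUniversal (Equiv.Perm Y) w := by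
  classical
  intro s
  -- set up the action of a countable group generated by the `s n`
  let ρ : FreeGroup ℕ →* Equiv.Perm Y := FreeGroup.lift s
  letI : MulAction (FreeGroup ℕ) Y := MulAction.compHom Y ρ
  haveI : Countable (FreeGroup ℕ) := FreeGroup.toWord_injective.countable
  have horb : ∀ y : Y, (MulAction.orbit (FreeGroup ℕ) y).Countable := fun y =>
    Set.countable_range fun g : FreeGroup ℕ => g • y
  set Q := Quotient (MulAction.orbitRel (FreeGroup ℕ) Y) with hQ
  let π : Y → Q := Quotient.mk (MulAction.orbitRel (FreeGroup ℕ) Y)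
  have hclass : ∀ c : Q, ({y : Y | π y = c}).Countable := by
    intro c
    obtain ⟨y0, rfl⟩ := Quotient.exists_rep c
    refine (horb y0).mono ?_
    intro y hy
    exact MulAction.orbitRel_apply.mp (Quotient.eq''.mp hy)
  have hX0 : Cardinal.aleph0 ≤ Cardinal.mk X := Cardinal.aleph0_le_mk X
  have hYbig : Cardinal.aleph0 < Cardinal.mk Y := lt_of_le_of_lt hX0 hXY
  -- |Y| ≤ |Q| * ℵ₀
  have hY1 : Cardinal.mk Y ≤ Cardinal.mk Q * Cardinal.aleph0 := by
    calc Cardinal.mk Y = Cardinal.mk (Σ c : Q, {y : Y // π y = c}) :=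
          (Cardinal.mk_congr (Equiv.sigmaFiberEquiv π)).symm
      _ = Cardinal.sum (fun c : Q => Cardinal.mk {y : Y // π y = c}) := Cardinal.mk_sigma _
      _ ≤ Cardinal.sum (fun _ : Q => Cardinal.aleph0) := by
          refine Cardinal.sum_le_sum _ _ (fun c => ?_)
          haveI : Countable {y : Y // π y = c} := by
            have := (hclass c).to_subtype; exact this
          exact Cardinal.mk_le_aleph0
      _ = Cardinal.mk Q * Cardinal.aleph0 := Cardinal.sum_const' _ _
  have hQY : Cardinal.mk Q = Cardinal.mk Y := by
    refine le_antisymm (Cardinal.mk_le_of_surjective (f := π) Quotient.exists_rep) ?_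
    rcases le_or_gt Cardinal.aleph0 (Cardinal.mk Q) with h | h
    · rwa [Cardinal.mul_aleph0_eq h] at hY1
    · exfalso
      have : Cardinal.mk Y ≤ Cardinal.aleph0 := by
        refine hY1.trans ?_
        calc Cardinal.mk Q * Cardinal.aleph0 ≤ Cardinal.aleph0 * Cardinal.aleph0 :=
              mul_le_mul' h.le le_rfl
          _ = Cardinal.aleph0 := Cardinal.aleph0_mul_aleph0
      exact absurd this (not_le.mpr hYbig)
  have hprod : Cardinal.mk (Y × X) = Cardinal.mk Y := by
    rw [Cardinal.mk_prod, Cardinal.lift_id, Cardinal.lift_id,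
      Cardinal.mul_eq_max (Cardinal.aleph0_le_mk Y) hX0, max_eq_left hXY.le]
  obtain ⟨q⟩ : Nonempty (Q ≃ Y × X) := Cardinal.eq.mp (hQY.trans hprod.symm)
  -- the block map
  let β : Y → Y := fun y => (q (π y)).1
  have hπs : ∀ (n : ℕ) (y : Y), π (s n y) = π y := by
    intro n y
    refine Quotient.sound (MulAction.orbitRel_apply.mpr ?_)
    exact MulAction.mem_orbit_iff.mpr ⟨FreeGroup.of n, by
      show ρ (FreeGroup.of n) y = s n y
      simp [ρ]⟩
  have hβs : ∀ (n : ℕ) (y : Y), β (s n y) = β y := by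
    intro n y; show (q (π (s n y))).1 = (q (π y)).1; rw [hπs]
  -- the fibers of β all have cardinality |X|
  let F : Y → Type u := fun j => {y : Y // β y = j}
  have hFX : ∀ j : Y, Cardinal.mk (F j) = Cardinal.mk X := by
    intro j
    refine le_antisymm ?_ ?_
    · -- F j is a union of |X| countable classes
      have hsub : {y : Y | β y = j} ⊆ ⋃ x : X, {y : Y | π y = q.symm (j, x)} := by
        intro y hy
        refine Set.mem_iUnion.mpr ⟨(q (π y)).2, ?_⟩
        show π y = q.symm (j, (q (π y)).2)
        rw [Equiv.eq_symm_apply]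
        exact Prod.ext hy rfl
      calc Cardinal.mk (F j) = Cardinal.mk {y : Y | β y = j} := rfl
        _ ≤ Cardinal.mk (⋃ x : X, {y : Y | π y = q.symm (j, x)}) :=
            Cardinal.mk_le_mk_of_subset hsub
        _ ≤ Cardinal.sum (fun x : X => Cardinal.mk {y : Y | π y = q.symm (j, x)}) :=
            Cardinal.mk_iUnion_le_sum_mk
        _ ≤ Cardinal.sum (fun _ : X => Cardinal.aleph0) := by
            refine Cardinal.sum_le_sum _ _ (fun x => ?_)
            haveI : Countable {y : Y | π y = q.symm (j, x)} := by
              have := (hclass (q.symm (j, x))).to_subtype; exact this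
            exact Cardinal.mk_le_aleph0
        _ = Cardinal.mk X * Cardinal.aleph0 := Cardinal.sum_const' _ _
        _ = Cardinal.mk X := Cardinal.mul_aleph0_eq hX0
    · -- X injects into F j by picking representatives of classes
      have hinj : Function.Injective (fun x : X =>
          (⟨(q.symm (j, x)).out, by
            have ho : π (q.symm (j, x)).out = q.symm (j, x) := Quotient.out_eq _
            show (q (π (q.symm (j, x)).out)).1 = j
            rw [ho, Equiv.apply_symm_apply]⟩ : F j)) := by
        intro x x' h
        have h1 : (q.symm (j, x)).out = (q.symm (j, x')).out := congrArg Subtype.val h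
        have h2 := q.symm.injective (Quotient.out_injective h1)
        exact (Prod.mk.injEq _ _ _ _).mp h2 |>.2
      exact Cardinal.mk_le_of_injective hinj
  -- choose bijections and blockwise permutations of X
  let e : ∀ j : Y, X ≃ F j := fun j => Classical.choice (Cardinal.eq.mp (hFX j).symm)
  let hpres : ∀ (n : ℕ) (j : Y) (y : Y), β (s n y) = j ↔ β y = j := by
    intro n j y; rw [hβs]
  let t : ℕ → ∀ j : Y, Equiv.Perm X := fun n j =>
    permCongrHom (e j).symm ((s n).subtypePerm (hpres n j))
  choose φ hφ using fun j : Y => hw (fun n => t n j)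
  -- assemble the homomorphism into Perm Y
  let E : (Σ j : Y, F j) ≃ Y := Equiv.sigmaFiberEquiv β
  refine ⟨(permCongrHom E).toMulHom.comp
    (((Equiv.Perm.sigmaCongrRightHom F).toMulHom).comp
      (Pi.mulHom (fun j => (permCongrHom (e j)).toMulHom.comp (φ j)))), ?_⟩
  intro n
  ext y
  have hyβ : β y = β y := rfl
  -- unfold everything
  show E ((Equiv.Perm.sigmaCongrRightHom F
      (fun j => permCongrHom (e j) (φ j (w n)))) (E.symm y)) = s n y
  have hφn : ∀ j, permCongrHom (e j) (φ j (w n)) = (s n).subtypePerm (hpres n j) := by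
    intro j
    rw [hφ j n]
    ext v
    simp [t, permCongrHom]
  rw [funext hφn]
  have hEsymm : E.symm y = ⟨β y, ⟨y, rfl⟩⟩ := rfl
  rw [hEsymm]
  rfl
end

section
/- Let X and Y be infinite sets with |X| < |Y|. Then every universal sequence for the symmetric inverse monoid I(X) is also a universal sequence for I(Y). -/
/-- The symmetric inverse monoid `I(X)`: partial bijections of `X` under
composition of partial functions. -/
instance pequivSemigroup (X : Type*) : Semigroup (PEquiv X X) where
  mul f g := f.trans g
  mul_assoc := PEquiv.trans_assoc

namespace Stmt5Aux

open Cardinal Relation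

attribute [local instance] Classical.propDecidable

universe u v

variable {Y X : Type u}

section Glue

variable (k : Y → Y) (g : ∀ c : Y, {y : Y // k y = c} ≃ X)

/-- Total "coordinate" map sending `y` to its coordinate inside its fiber. -/
def G (y : Y) : X := g (k y) ⟨y, rfl⟩

/-- Inverse of the coordinate map, given the fiber. -/
def H (c : Y) (x : X) : Y := ((g c).symm x : Y)

lemma k_H (c : Y) (x : X) : k (H k g c x) = c := ((g c).symm x).2

lemma G_spec (y c : Y) (h : k y = c) : g c ⟨y, h⟩ = G k g y := by
  subst h; rfl

lemma G_H (c : Y) (x : X) : G k g (H k g c x) = x := by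
  rw [← G_spec k g _ c (k_H k g c x)]
  have h : (⟨H k g c x, k_H k g c x⟩ : {y : Y // k y = c}) = (g c).symm x :=
    Subtype.ext rfl
  rw [h, Equiv.apply_symm_apply]

lemma H_G (y : Y) : H k g (k y) (G k g y) = y := by
  simp [H, G]

/-- The partial bijection from `Y` to `X` defined on the fiber over `c`. -/
noncomputable def iota (c : Y) : PEquiv Y X where
  toFun y := if k y = c then some (G k g y) else none
  invFun x := some (H k g c x)
  inv y x := by
    simp only [Option.mem_def, Option.some.injEq]
    constructor
    · rintro rfl
      rw [if_pos (k_H k g c x), Option.some.injEq, G_H]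
    · intro h
      by_cases hc : k y = c
      · rw [if_pos hc, Option.some.injEq] at h
        subst hc
        rw [← h, H_G]
      · rw [if_neg hc] at h
        exact absurd h (by simp)

lemma glue_aux (p : Y → PEquiv X X) (a b : Y)
    (h : (p (k b) (G k g b)).map (H k g (k b)) = some a) :
    ((p (k a)).symm (G k g a)).map (H k g (k a)) = some b := by
  rw [Option.map_eq_some_iff] at h
  obtain ⟨x, hx, ha⟩ := h
  have hk : k a = k b := by rw [← ha]; exact k_H k g _ x
  have hG : G k g a = x := by rw [← ha]; exact G_H k g _ x
  rw [hk, hG, (p (k b)).eq_some_iff.2 hx]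
  simp only [Option.map_some, Option.some.injEq]
  exact H_G k g b

/-- Glue a family of partial bijections of `X`, one for each fiber, to a partial
bijection of `Y`. -/
def glue (p : Y → PEquiv X X) : PEquiv Y Y where
  toFun y := (p (k y) (G k g y)).map (H k g (k y))
  invFun y := ((p (k y)).symm (G k g y)).map (H k g (k y))
  inv a b := by
    constructor
    · intro h
      have := glue_aux k g (fun c => (p c).symm) a b h
      simpa only [PEquiv.symm_symm] using this
    · intro h
      exact glue_aux k g p b a h

lemma glue_mul (p q : Y → PEquiv X X) :
    glue k g (fun c => p c * q c) = glue k g p * glue k g q := by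
  refine PEquiv.ext fun y => ?_
  show ((p (k y)).trans (q (k y)) (G k g y)).map (H k g (k y)) =
    ((glue k g p).trans (glue k g q)) y
  show ((p (k y) (G k g y)).bind (q (k y)) : Option X).map (H k g (k y)) =
    ((p (k y) (G k g y)).map (H k g (k y))).bind
      (fun z => (q (k z) (G k g z)).map (H k g (k z)))
  cases hx : p (k y) (G k g y) with
  | none => simp
  | some x =>
    simp only [Option.map_some, Option.bind_some]
    rw [k_H k g, G_H k g]

end Glue

theorem partA (k : Y → Y) (g : ∀ c : Y, {y : Y // k y = c} ≃ X)
    {A : Type v} (w : ℕ → FreeSemigroup A)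
    (hw : IsUniversal (PEquiv X X) w)
    (s : ℕ → PEquiv Y Y)
    (hinv : ∀ n a b, s n a = some b → k b = k a) :
    ∃ φ : FreeSemigroup A →ₙ* PEquiv Y Y, ∀ n, φ (w n) = s n := by
  classical
  let t : Y → ℕ → PEquiv X X := fun c n =>
    (iota k g c).symm.trans ((s n).trans (iota k g c))
  choose φ hφ using fun c => hw (t c)
  refine ⟨⟨fun u => glue k g (fun c => φ c u), ?_⟩, ?_⟩
  · intro u v
    show glue k g _ = glue k g (fun c => φ c u) * glue k g (fun c => φ c v)
    rw [← glue_mul]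
    congr 1
    funext c
    exact map_mul (φ c) u v
  · intro n
    show glue k g (fun c => φ c (w n)) = s n
    have ht : (fun c => φ c (w n)) = fun c => t c n := funext fun c => hφ c n
    rw [ht]
    refine PEquiv.ext fun y => ?_
    show ((t (k y) n) (G k g y)).map (H k g (k y)) = s n y
    show ((((iota k g (k y)).symm (G k g y)).bind
      ((s n).trans (iota k g (k y)))) : Option X).map (H k g (k y)) = s n y
    show ((some (H k g (k y) (G k g y))).bind
      (fun z => ((s n) z).bind (iota k g (k y)))).map (H k g (k y)) = s n y
    rw [Option.bind_some, H_G]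
    cases hz : s n y with
    | none => simp
    | some z =>
      have hkz : k z = k y := hinv n y z hz
      simp only [Option.bind_some]
      show ((if k z = k y then some (G k g z) else none) : Option X).map
        (H k g (k y)) = some z
      rw [if_pos hkz, Option.map_some, ← hkz, H_G]

section Reach

variable (s : ℕ → PEquiv Y Y)

def rstep (a : Y) (p : ℕ × Bool) : Option Y :=
  if p.2 then s p.1 a else (s p.1).symm a

def reach : Y → List (ℕ × Bool) → Option Y
  | a, [] => some a
  | a, p :: l => (rstep s a p).bind fun b => reach b l

lemma reach_append (l1 l2 : List (ℕ × Bool)) (a : Y) :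
    reach s a (l1 ++ l2) = (reach s a l1).bind fun b => reach s b l2 := by
  induction l1 generalizing a with
  | nil => simp [reach]
  | cons p l ih =>
    simp only [List.cons_append, reach]
    cases h : rstep s a p with
    | none => simp
    | some b => simp [ih]

lemma rstep_flip {a b : Y} {p : ℕ × Bool} (h : rstep s a p = some b) :
    rstep s b (p.1, !p.2) = some a := by
  rcases p with ⟨n, b'⟩
  cases b' with
  | true =>
    simp only [rstep] at h ⊢
    exact (s n).eq_some_iff.2 h
  | false =>
    simp only [rstep] at h ⊢
    exact (s n).symm.eq_some_iff.2 h

lemma reach_flip : ∀ (l : List (ℕ × Bool)) (a b : Y), reach s a l = some b →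
    reach s b ((l.map fun p => (p.1, !p.2)).reverse) = some a := by
  intro l
  induction l with
  | nil =>
    intro a b h
    simp only [reach, Option.some.injEq] at h
    subst h; simp [reach]
  | cons p l ih =>
    intro a b h
    simp only [reach] at h
    cases hc : rstep s a p with
    | none => rw [hc] at h; simp at h
    | some c =>
      rw [hc] at h
      simp only [Option.bind_some] at h
      have h1 := ih c b h
      simp only [List.map_cons, List.reverse_cons]
      rw [reach_append, h1, Option.bind_some]
      show (rstep s c (p.1, !p.2)).bind (fun b => reach s b []) = some a
      rw [rstep_flip s hc]
      rfl

lemma exists_reach {a b : Y}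
    (h : EqvGen (fun x y => ∃ n, s n x = some y) a b) :
    ∃ l, reach s a l = some b := by
  induction h with
  | rel x y hxy =>
    obtain ⟨n, hn⟩ := hxy
    exact ⟨[(n, true)], by simp [reach, rstep, hn]⟩
  | refl x => exact ⟨[], rfl⟩
  | symm x y _ ih =>
    obtain ⟨l, hl⟩ := ih
    exact ⟨_, reach_flip s l x y hl⟩
  | trans x y z _ _ ih1 ih2 =>
    obtain ⟨l1, h1⟩ := ih1
    obtain ⟨l2, h2⟩ := ih2
    exact ⟨l1 ++ l2, by rw [reach_append, h1, Option.bind_some, h2]⟩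

lemma countable_rel (a : Y) :
    Countable {b : Y // EqvGen (fun x y => ∃ n, s n x = some y) a b} := by
  classical
  have h : ∀ z : {b : Y // EqvGen (fun x y => ∃ n, s n x = some y) a b},
      ∃ l, reach s a l = some z.1 := fun z => exists_reach s z.2
  choose f hf using h
  have hinj : Function.Injective f := by
    intro z1 z2 hz
    apply Subtype.ext
    have h1 := hf z1
    rw [hz, hf z2] at h1
    exact Option.some.inj h1.symm
  exact hinj.countable

end Reach

theorem exists_kg [Infinite X] [Infinite Y] (hXY : Cardinal.mk X < Cardinal.mk Y)
    (s : ℕ → PEquiv Y Y) :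
    ∃ (k : Y → Y) (g : ∀ c : Y, {y : Y // k y = c} ≃ X),
      ∀ n a b, s n a = some b → k b = k a := by
  classical
  set r : Y → Y → Prop := fun x y => ∃ n, s n x = some y with hr
  set St : Setoid Y := EqvGen.setoid r with hSt
  have hcount : ∀ q : Quotient St, Countable {y : Y // Quotient.mk St y = q} := by
    intro q
    induction q using Quotient.ind with
    | _ a =>
      haveI := countable_rel s a
      have hinj : Function.Injective
          (fun y : {y : Y // Quotient.mk St y = Quotient.mk St a} =>
            (⟨y.1, EqvGen.symm _ _ (Quotient.exact y.2)⟩ :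
              {b : Y // EqvGen r a b})) := by
        intro y1 y2 h
        have h2 : y1.1 = y2.1 :=
          congrArg (fun z : {b : Y // EqvGen r a b} => (z : Y)) h
        exact Subtype.ext h2
      exact hinj.countable
  have haleY : (ℵ₀ : Cardinal) < #Y := lt_of_le_of_lt (Cardinal.aleph0_le_mk X) hXY
  have h1 : #(Quotient St) ≤ #Y := Cardinal.mk_quotient_le
  have h2 : #Y ≤ #(Quotient St) * ℵ₀ := by
    have e1 := Equiv.sigmaFiberEquiv (fun y : Y => Quotient.mk St y)
    have hYeq : #Y = Cardinal.sum
        (fun q : Quotient St => #{y : Y // Quotient.mk St y = q}) := by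
      rw [← Cardinal.mk_sigma]
      exact (Cardinal.mk_congr e1).symm
    rw [hYeq, ← Cardinal.sum_const']
    exact Cardinal.sum_le_sum _ _
      (fun q => by haveI := hcount q; exact Cardinal.mk_le_aleph0)
  have h3 : #Y ≤ #(Quotient St) := by
    have hmax := h2.trans (Cardinal.mul_le_max _ _)
    rw [max_assoc, max_self] at hmax
    rcases le_max_iff.mp hmax with h | h
    · exact h
    · exact absurd h (not_le.mpr haleY)
  have hQ : #(Quotient St) = #(Y × X) := by
    rw [Cardinal.mk_prod, Cardinal.lift_id, Cardinal.lift_id,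
      Cardinal.mul_eq_left (Cardinal.aleph0_le_mk Y) hXY.le (Cardinal.mk_ne_zero X)]
    exact le_antisymm h1 h3
  obtain ⟨e⟩ := Cardinal.eq.mp hQ
  set k : Y → Y := fun y => (e (Quotient.mk St y)).1 with hk
  choose N hN using fun q : Quotient St =>
    (countable_iff_exists_injective _).mp (hcount q)
  set M : Quotient St → Y → ℕ := fun q y =>
    if h : Quotient.mk St y = q then N q ⟨y, h⟩ else 0 with hM
  have hfib : ∀ c : Y, #{y : Y // k y = c} = #X := by
    intro c
    apply le_antisymm
    · have hle : #{y : Y // k y = c} ≤ #(X × ℕ) := by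
        apply Cardinal.mk_le_of_injective
          (f := fun y : {y : Y // k y = c} =>
            (((e (Quotient.mk St y.1)).2 : X), M (Quotient.mk St y.1) y.1))
        intro y1 y2 h
        have h1 : (e (Quotient.mk St y1.1)).2 = (e (Quotient.mk St y2.1)).2 :=
          congrArg Prod.fst h
        have h2 : M (Quotient.mk St y1.1) y1.1 = M (Quotient.mk St y2.1) y2.1 :=
          congrArg Prod.snd h
        have hq : Quotient.mk St y1.1 = Quotient.mk St y2.1 := by
          apply e.injective
          apply Prod.ext
          · exact y1.2.trans y2.2.symm
          · exact h1
        rw [← hq] at h2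
        simp only [hM, dif_pos rfl, dif_pos hq.symm] at h2
        have h4 := hN (Quotient.mk St y1.1) h2
        have h5 : y1.1 = y2.1 :=
          congrArg (fun z : {y : Y // Quotient.mk St y = Quotient.mk St y1.1} => (z : Y)) h4
        exact Subtype.ext h5
      have hXN : #(X × ℕ) = #X := by
        simp [Cardinal.mul_aleph0_eq (Cardinal.aleph0_le_mk X)]
      rwa [hXN] at hle
    · apply Cardinal.mk_le_of_injective
        (f := fun x : X => (⟨(e.symm (c, x)).out, by
          show (e (Quotient.mk St (e.symm (c, x)).out)).1 = c
          rw [Quotient.out_eq, Equiv.apply_symm_apply]⟩ : {y : Y // k y = c}))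
      intro x1 x2 h
      have h1 : (e.symm (c, x1)).out = (e.symm (c, x2)).out :=
        congrArg Subtype.val h
      have h2 := Quotient.out_injective h1
      have h3 := e.symm.injective h2
      exact (Prod.ext_iff.mp h3).2
  refine ⟨k, fun c => Classical.choice (Cardinal.eq.mp (hfib c)), ?_⟩
  intro n a b hab
  have : Quotient.mk St a = Quotient.mk St b :=
    Quotient.sound (EqvGen.rel a b ⟨n, hab⟩)
  show (e (Quotient.mk St b)).1 = (e (Quotient.mk St a)).1
  rw [this]

end Stmt5Aux

/-- If `X` and `Y` are infinite with `|X| < |Y|`, every universal sequence for the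
symmetric inverse monoid `I(X)` is universal for `I(Y)`. -/
theorem stmt5 {X Y : Type u} {A : Type*} [Infinite X] [Infinite Y] [Countable A]
    (hXY : Cardinal.mk X < Cardinal.mk Y)
    (w : ℕ → FreeSemigroup A) (hw : IsUniversal (PEquiv X X) w) :
    IsUniversal (PEquiv Y Y) w := by
  intro s
  obtain ⟨k, g, hinv⟩ := Stmt5Aux.exists_kg hXY s
  exact Stmt5Aux.partA k g w hw s hinv
end

section
/- Let X and Y be infinite sets with 2^ℵ₀ < |X| < |Y| and suppose |X| is a regular cardinal. Then every universal sequence for Sym(Y) is also a universal sequence for Sym(X). -/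
open Cardinal
namespace Stmt6Proof
noncomputable section
universe u v

theorem freeGroup_countable {β : Type v} [Countable β] : Countable (FreeGroup β) := by
  unfold FreeGroup; infer_instance

theorem perm_cancel {G α : Type*} [Group G] (a : G →* Equiv.Perm α) (g g' : G) (x : α) :
    a g x = a g' x ↔ a (g'⁻¹ * g) x = x := by
  rw [map_mul, Equiv.Perm.mul_apply, map_inv]
  constructor
  · intro h; rw [h, Equiv.Perm.coe_inv, Equiv.symm_apply_apply]
  · intro h
    have h2 := congrArg (a g') h
    rwa [Equiv.Perm.coe_inv, Equiv.apply_symm_apply] at h2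

def orbS {α : Type u} (a : FreeGroup ℕ →* Equiv.Perm α) : Setoid α where
  r x y := ∃ g, a g x = y
  iseqv := by
    refine ⟨fun x => ⟨1, by simp⟩, ?_, ?_⟩
    · rintro x y ⟨g, rfl⟩
      exact ⟨g⁻¹, by simp [map_inv]⟩
    · rintro x y z ⟨g, rfl⟩ ⟨h, rfl⟩
      exact ⟨h * g, by simp [map_mul]⟩

def stabS {α : Type u} (a : FreeGroup ℕ →* Equiv.Perm α) (x : α) : Set (FreeGroup ℕ) :=
  {g | a g x = x}

section Constr

variable {X : Type u} (Y : Type u) (σ : ℕ → Equiv.Perm X)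

def aX : FreeGroup ℕ →* Equiv.Perm X := FreeGroup.lift σ

theorem aX_of (n : ℕ) : aX σ (FreeGroup.of n) = σ n := FreeGroup.lift_apply_of

abbrev QXt := Quotient (orbS (aX σ))

def qX (x : X) : QXt σ := Quotient.mk _ x

theorem qX_out (τ : QXt σ) : qX σ τ.out = τ := Quotient.out_eq τ

theorem qX_eq {x y : X} (h : ∃ g, aX σ g x = y) : qX σ x = qX σ y := Quotient.sound h

theorem qX_exact {x y : X} (h : qX σ x = qX σ y) : ∃ g, aX σ g x = y := Quotient.exact h

theorem qX_aX (g : FreeGroup ℕ) (x : X) : qX σ (aX σ g x) = qX σ x :=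
  qX_eq σ ⟨g⁻¹, by rw [map_inv, Equiv.Perm.coe_inv, Equiv.symm_apply_apply]⟩

def typ (τ : QXt σ) : Set (FreeGroup ℕ) := stabS (aX σ) τ.out

def mm (s : Set (FreeGroup ℕ)) : Cardinal.{u} := #{τ : QXt σ // typ σ τ = s}

def Rst : Set X := {x | mm σ (typ σ (qX σ x)) < #X}

def NRs : Set X := (Rst σ)ᶜ

theorem typ_congr {x : X} {τ : QXt σ} (h : qX σ x = τ) :
    mm σ (typ σ (qX σ x)) = mm σ (typ σ τ) := by rw [h]

theorem qX_sigma (n : ℕ) (x : X) : qX σ (σ n x) = qX σ x := by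
  refine Quotient.sound ⟨(FreeGroup.of n)⁻¹, ?_⟩
  rw [map_inv, aX_of, Equiv.Perm.coe_inv, Equiv.symm_apply_apply]

theorem NR_inv (n : ℕ) : ∀ x : X, x ∈ NRs σ ↔ σ n x ∈ NRs σ := by
  intro x
  simp only [NRs, Set.mem_compl_iff, Rst, Set.mem_setOf_eq, qX_sigma]

abbrev Wt : Type u := X ⊕ (↥(NRs σ) × Y)

def tP (n : ℕ) : Equiv.Perm (Wt Y σ) :=
  Equiv.sumCongr (σ n) (Equiv.prodCongr ((σ n).subtypePerm (fun x => (NR_inv σ n x).symm)) (Equiv.refl Y))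

def pmap : Wt Y σ → X := Sum.elim id fun q => (q.1 : X)

def smap : Wt Y σ → Option Y := Sum.elim (fun _ => none) fun q => some q.2

theorem pmap_t (n : ℕ) (w : Wt Y σ) : pmap Y σ (tP Y σ n w) = σ n (pmap Y σ w) := by
  cases w <;> rfl

theorem smap_t (n : ℕ) (w : Wt Y σ) : smap Y σ (tP Y σ n w) = smap Y σ w := by
  cases w <;> rfl

theorem pmap_smap_inj {w w' : Wt Y σ} (h1 : pmap Y σ w = pmap Y σ w')
    (h2 : smap Y σ w = smap Y σ w') : w = w' := by
  cases w with
  | inl x =>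
    cases w' with
    | inl x' => simp only [pmap, Sum.elim_inl, id] at h1; rw [h1]
    | inr q => simp [smap] at h2
  | inr q =>
    cases w' with
    | inl x => simp [smap] at h2
    | inr q' =>
      obtain ⟨⟨a, ha⟩, y⟩ := q
      obtain ⟨⟨b, hb⟩, y'⟩ := q'
      simp only [pmap, smap, Sum.elim_inr, Option.some.injEq] at h1 h2
      subst h1; subst h2; rfl

end Constr


section Constr2

variable {X : Type u} (Y : Type u) (σ : ℕ → Equiv.Perm X)
variable {A : Type v} (φ : FreeSemigroup A →ₙ* Equiv.Perm (Wt Y σ))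

def gh : FreeGroup A →* Equiv.Perm (Wt Y σ) :=
  FreeGroup.lift fun a => φ (FreeSemigroup.of a)

def aW : FreeGroup ℕ →* Equiv.Perm (Wt Y σ) := FreeGroup.lift (tP Y σ)

theorem aW_of (n : ℕ) : aW Y σ (FreeGroup.of n) = tP Y σ n := FreeGroup.lift_apply_of

theorem gh_surj_sem : ∀ x : FreeSemigroup A, ∃ g, gh Y σ φ g = φ x := by
  intro x
  induction x using FreeSemigroup.recOnMul with
  | ih1 a => exact ⟨FreeGroup.of a, FreeGroup.lift_apply_of⟩
  | ih2 x y hx hy =>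
    obtain ⟨g, hg⟩ := hx
    obtain ⟨g', hg'⟩ := hy
    exact ⟨g * g', by rw [map_mul, map_mul, hg, hg']⟩

theorem aW_in_gh {w : ℕ → FreeSemigroup A} (hφw : ∀ n, φ (w n) = tP Y σ n) :
    ∀ g : FreeGroup ℕ, ∃ g', gh Y σ φ g' = aW Y σ g := by
  intro g
  induction g using FreeGroup.induction_on with
  | C1 => exact ⟨1, by rw [map_one, map_one]⟩
  | of n =>
    obtain ⟨g', hg'⟩ := gh_surj_sem Y σ φ (w n)
    exact ⟨g', by rw [hg', hφw n, ← aW_of]⟩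
  | inv_of n ih =>
    obtain ⟨g', hg'⟩ := ih
    exact ⟨g'⁻¹, by rw [map_inv, map_inv, hg']⟩
  | mul x y hx hy =>
    obtain ⟨g, hg⟩ := hx
    obtain ⟨g', hg'⟩ := hy
    exact ⟨g * g', by rw [map_mul, map_mul, hg, hg']⟩

theorem pmap_aW : ∀ (g : FreeGroup ℕ) (z : Wt Y σ),
    pmap Y σ (aW Y σ g z) = aX σ g (pmap Y σ z) := by
  intro g
  induction g using FreeGroup.induction_on with
  | C1 => intro z; rw [map_one, map_one]; rfl
  | of n =>
    intro z
    have h1 : aW Y σ (FreeGroup.of n) = tP Y σ n := aW_of Y σ n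
    have h2 : aX σ (FreeGroup.of n) = σ n := aX_of σ n
    show pmap Y σ (aW Y σ (FreeGroup.of n) z) = aX σ (FreeGroup.of n) (pmap Y σ z)
    rw [h1, h2, pmap_t]
  | inv_of n ih =>
    intro z
    show pmap Y σ (aW Y σ (FreeGroup.of n)⁻¹ z) = aX σ (FreeGroup.of n)⁻¹ (pmap Y σ z)
    replace ih : ∀ z : Wt Y σ, pmap Y σ (aW Y σ (FreeGroup.of n) z) =
        aX σ (FreeGroup.of n) (pmap Y σ z) := ih
    have h2 := ih (aW Y σ (FreeGroup.of n)⁻¹ z)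
    rw [← Equiv.Perm.mul_apply, ← map_mul, mul_inv_cancel, map_one, Equiv.Perm.one_apply] at h2
    rw [show (aX σ) ((FreeGroup.of n)⁻¹) = ((aX σ) (FreeGroup.of n))⁻¹ from map_inv _ _,
      Equiv.Perm.eq_inv_iff_eq]
    exact h2.symm
  | mul x y hx hy =>
    intro z
    rw [map_mul, map_mul, Equiv.Perm.mul_apply, Equiv.Perm.mul_apply, hx, hy]

theorem smap_aW : ∀ (g : FreeGroup ℕ) (z : Wt Y σ), smap Y σ (aW Y σ g z) = smap Y σ z := by
  intro g
  induction g using FreeGroup.induction_on with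
  | C1 => intro z; rw [map_one]; rfl
  | of n =>
    intro z
    show smap Y σ (aW Y σ (FreeGroup.of n) z) = smap Y σ z
    rw [aW_of, smap_t]
  | inv_of n ih =>
    intro z
    show smap Y σ (aW Y σ (FreeGroup.of n)⁻¹ z) = smap Y σ z
    replace ih : ∀ z : Wt Y σ, smap Y σ (aW Y σ (FreeGroup.of n) z) = smap Y σ z := ih
    have h2 := ih (aW Y σ (FreeGroup.of n)⁻¹ z)
    rw [← Equiv.Perm.mul_apply, ← map_mul, mul_inv_cancel, map_one, Equiv.Perm.one_apply] at h2
    exact h2.symm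
  | mul x y hx hy =>
    intro z
    rw [map_mul, Equiv.Perm.mul_apply, hx, hy]

theorem aW_inl (g : FreeGroup ℕ) (x : X) :
    aW Y σ g (Sum.inl x) = Sum.inl (aX σ g x) := by
  apply pmap_smap_inj Y σ
  · rw [pmap_aW]; rfl
  · rw [smap_aW]; rfl

theorem stab_transfer (g : FreeGroup ℕ) (z : Wt Y σ) :
    aW Y σ g z = z ↔ aX σ g (pmap Y σ z) = pmap Y σ z := by
  constructor
  · intro h; rw [← pmap_aW, h]
  · intro h
    exact pmap_smap_inj Y σ (by rw [pmap_aW, h]) (smap_aW Y σ g z)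

abbrev QWt := Quotient (orbS (aW Y σ))

def qW (z : Wt Y σ) : QWt Y σ := Quotient.mk _ z

def pbar : QWt Y σ → QXt σ :=
  Quotient.lift (fun z => qX σ (pmap Y σ z)) (fun a b h => by
    have h' : ∃ g, aW Y σ g a = b := h
    obtain ⟨g, rfl⟩ := h'
    have hr : (orbS (aX σ)).r (pmap Y σ a) (pmap Y σ (aW Y σ g a)) :=
      ⟨g, (pmap_aW Y σ g a).symm⟩
    show qX σ (pmap Y σ a) = qX σ (pmap Y σ (aW Y σ g a))
    exact Quotient.sound hr)

theorem pbar_mk (z : Wt Y σ) : pbar Y σ (qW Y σ z) = qX σ (pmap Y σ z) := rfl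

theorem qW_eq {z z' : Wt Y σ} (h : ∃ g, aW Y σ g z = z') : qW Y σ z = qW Y σ z' :=
  Quotient.sound h

theorem qW_exact {z z' : Wt Y σ} (h : qW Y σ z = qW Y σ z') : ∃ g, aW Y σ g z = z' :=
  Quotient.exact h

def typW (O : QWt Y σ) : Set (FreeGroup ℕ) := typ σ (pbar Y σ O)

def orbG (S : Set (Wt Y σ)) : Set (Wt Y σ) :=
  {x | ∃ g s, s ∈ S ∧ gh Y σ φ g s = x}

theorem subset_orbG (S : Set (Wt Y σ)) : S ⊆ orbG Y σ φ S := fun s hs => by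
  show ∃ g s', s' ∈ S ∧ gh Y σ φ g s' = s
  exact ⟨1, s, hs, by rw [map_one, Equiv.Perm.one_apply]⟩

theorem orbG_apply_mem (S : Set (Wt Y σ)) (g : FreeGroup A) {x : Wt Y σ}
    (hx : x ∈ orbG Y σ φ S) : gh Y σ φ g x ∈ orbG Y σ φ S := by
  obtain ⟨g', s, hs, rfl⟩ := hx
  show ∃ g'' s', s' ∈ S ∧ gh Y σ φ g'' s' = gh Y σ φ g (gh Y σ φ g' s)
  exact ⟨g * g', s, hs, by rw [map_mul, Equiv.Perm.mul_apply]⟩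

theorem orbG_iff (S : Set (Wt Y σ)) (g : FreeGroup A) (x : Wt Y σ) :
    x ∈ orbG Y σ φ S ↔ gh Y σ φ g x ∈ orbG Y σ φ S := by
  refine ⟨orbG_apply_mem Y σ φ S g, fun h => ?_⟩
  have h2 := orbG_apply_mem Y σ φ S g⁻¹ h
  rwa [map_inv, Equiv.Perm.coe_inv, Equiv.symm_apply_apply] at h2

def S0 (y₀ : Y) : Set (Wt Y σ) :=
  Sum.inl '' Rst σ ∪ Set.range fun q : ↥(NRs σ) => (Sum.inr (q, y₀) : Wt Y σ)

def Zset (y₀ : Y) : Set (Wt Y σ) := orbG Y σ φ (S0 Y σ y₀)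

theorem Zset_aW {w : ℕ → FreeSemigroup A} (hφw : ∀ n, φ (w n) = tP Y σ n) (y₀ : Y)
    (g : FreeGroup ℕ) {z : Wt Y σ} (hz : z ∈ Zset Y σ φ y₀) :
    aW Y σ g z ∈ Zset Y σ φ y₀ := by
  obtain ⟨g', hg'⟩ := aW_in_gh Y σ φ hφw g
  rw [← hg']
  exact orbG_apply_mem Y σ φ _ g' hz

end Constr2

theorem key {X Y : Type u} {A : Type v} [Infinite X] [Countable A]
    (hcont : Cardinal.continuum < #X) (hXY : #X ≤ #Y) (hreg : (#X).IsRegular)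
    (w : ℕ → FreeSemigroup A) (hw : IsUniversal (Equiv.Perm Y) w) (σ : ℕ → Equiv.Perm X) :
    ∃ ψ : FreeSemigroup A →ₙ* Equiv.Perm X, ∀ n, ψ (w n) = σ n := by
  classical
  have hℵ : ℵ₀ < #X := aleph0_lt_continuum.trans hcont
  have hcF : Countable (FreeGroup ℕ) := freeGroup_countable
  have hcFA : Countable (FreeGroup A) := freeGroup_countable
  -- each orbit is countable
  have horb : ∀ τ : QXt σ, #{x : X // qX σ x = τ} ≤ ℵ₀ := by
    intro τ
    have hsur : Function.Surjective (fun g : FreeGroup ℕ =>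
        (⟨aX σ g τ.out, by rw [qX_aX, qX_out]⟩ : {x : X // qX σ x = τ})) := by
      rintro ⟨x, hx⟩
      obtain ⟨g, hg⟩ := qX_exact σ ((qX_out σ τ).trans hx.symm)
      exact ⟨g, Subtype.ext hg⟩
    have : Countable {x : X // qX σ x = τ} := hsur.countable
    exact Cardinal.mk_le_aleph0
  have hmle : ∀ s : Set (FreeGroup ℕ), mm σ s ≤ #X :=
    fun s => (Cardinal.mk_subtype_le _).trans Cardinal.mk_quotient_le
  -- the set of rare orbits is small
  have hROcard : #{τ : QXt σ // mm σ (typ σ τ) < #X} < #X := by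
    set T := ULift.{u} {s : Set (FreeGroup ℕ) // mm σ s < #X} with hT
    have hTcard : #T < #X := by
      have h1 : #T ≤ Cardinal.lift.{u} #(Set (FreeGroup ℕ)) := by
        rw [hT, Cardinal.mk_uLift]
        exact Cardinal.lift_le.mpr (Cardinal.mk_subtype_le _)
      have h2 : #(Set (FreeGroup ℕ)) ≤ Cardinal.continuum := by
        rw [Cardinal.mk_set, ← Cardinal.two_power_aleph0]
        exact Cardinal.power_le_power_left (by norm_num) Cardinal.mk_le_aleph0
      calc #T ≤ Cardinal.lift.{u} #(Set (FreeGroup ℕ)) := h1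
        _ ≤ Cardinal.lift.{u} Cardinal.continuum := Cardinal.lift_le.mpr h2
        _ = Cardinal.continuum := Cardinal.lift_continuum
        _ < #X := hcont
    have hinj : Function.Injective (fun τ : {τ : QXt σ // mm σ (typ σ τ) < #X} =>
        (⟨ULift.up ⟨typ σ τ.1, τ.2⟩, ⟨τ.1, rfl⟩⟩ :
          Σ s : T, {τ : QXt σ // typ σ τ = s.down.1})) := by
      intro a b h
      have := congrArg (fun p : Σ s : T, {τ : QXt σ // typ σ τ = s.down.1} => p.2.1) h
      exact Subtype.ext this
    calc #{τ : QXt σ // mm σ (typ σ τ) < #X}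
        ≤ #(Σ s : T, {τ : QXt σ // typ σ τ = s.down.1}) := Cardinal.mk_le_of_injective hinj
      _ = Cardinal.sum (fun s : T => mm σ s.down.1) := by rw [Cardinal.mk_sigma]; rfl
      _ < #X := Cardinal.sum_lt_of_isRegular hreg hTcard (fun s => s.down.2)
  have hRstcard : #(Rst σ) < #X := by
    have hinj : Function.Injective (fun x : ↥(Rst σ) =>
        (⟨⟨qX σ x.1, x.2⟩, ⟨x.1, rfl⟩⟩ :
          Σ τ : {τ : QXt σ // mm σ (typ σ τ) < #X}, {y : X // qX σ y = τ.1})) := by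
      intro a b h
      have := congrArg (fun p : Σ τ : {τ : QXt σ // mm σ (typ σ τ) < #X},
        {y : X // qX σ y = τ.1} => p.2.1) h
      exact Subtype.ext this
    calc #(Rst σ) ≤ #(Σ τ : {τ : QXt σ // mm σ (typ σ τ) < #X}, {y : X // qX σ y = τ.1}) :=
        Cardinal.mk_le_of_injective hinj
      _ = Cardinal.sum (fun τ : {τ : QXt σ // mm σ (typ σ τ) < #X} => #{y : X // qX σ y = τ.1}) :=
        Cardinal.mk_sigma _
      _ < #X := Cardinal.sum_lt_of_isRegular hreg hROcard
          (fun τ => (horb τ.1).trans_lt hℵ)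
  have hNRcard : #(NRs σ) = #X := by
    by_contra h
    have hle : #(NRs σ) < #X := lt_of_le_of_ne (Cardinal.mk_subtype_le _) h
    have := Cardinal.mk_sum_compl (Rst σ)
    rw [show (Rst σ)ᶜ = NRs σ from rfl] at this
    exact absurd this (ne_of_lt (Cardinal.add_lt_of_lt hℵ.le hRstcard hle))
  -- cardinality of W
  have hWcard : #(Wt Y σ) = #Y := by
    have h1 : #(Wt Y σ) = #X + #(NRs σ) * #Y := by
      have e1 : Wt Y σ ≃ X ⊕ (↥(NRs σ) × Y) := Equiv.refl _
      rw [Cardinal.mk_congr e1]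
      simp [Cardinal.mk_sum, Cardinal.mk_prod, Cardinal.lift_id]
    rw [h1, hNRcard, Cardinal.mul_eq_max hℵ.le (hℵ.le.trans hXY), max_eq_right hXY,
      Cardinal.add_eq_max hℵ.le, max_eq_right hXY]
  -- transport universality to Perm (Wt Y σ)
  obtain ⟨e⟩ := Cardinal.eq.mp hWcard
  obtain ⟨φY, hφY⟩ := hw fun n => e.symm.trans ((tP Y σ n).trans e)
  have hcnjmul : ∀ g h : Equiv.Perm Y,
      (e.trans ((g * h).trans e.symm) : Equiv.Perm (Wt Y σ)) =
        (e.trans (g.trans e.symm)) * (e.trans (h.trans e.symm)) := by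
    intro g h
    ext x
    simp [Equiv.Perm.mul_apply]
  set cnj : Equiv.Perm Y →ₙ* Equiv.Perm (Wt Y σ) :=
    ⟨fun g => (e.trans (g.trans e.symm) : Equiv.Perm (Wt Y σ)), hcnjmul⟩ with hcnj
  set φ : FreeSemigroup A →ₙ* Equiv.Perm (Wt Y σ) := cnj.comp φY with hφdef
  have hφw : ∀ n, φ (w n) = tP Y σ n := by
    intro n
    rw [hφdef]
    show cnj (φY (w n)) = tP Y σ n
    rw [hφY n, hcnj]
    ext x
    simp
  -- the invariant set Z
  have hY0 : Nonempty Y := by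
    have h0 : (0 : Cardinal) < #Y := lt_of_le_of_lt (by simp) (hℵ.trans_le hXY)
    exact Cardinal.mk_ne_zero_iff.mp h0.ne'
  obtain ⟨y₀⟩ := hY0
  set Z : Set (Wt Y σ) := Zset Y σ φ y₀ with hZdef
  have hZF : ∀ (g : FreeGroup ℕ) {z : Wt Y σ}, z ∈ Z → aW Y σ g z ∈ Z := by
    intro g z hz
    exact Zset_aW Y σ φ hφw y₀ g hz
  have hZcard : #Z ≤ #X := by
    have hS0 : #(S0 Y σ y₀) ≤ #X := by
      calc #(S0 Y σ y₀) ≤ #(Sum.inl '' Rst σ : Set (Wt Y σ)) +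
          #(Set.range fun q : ↥(NRs σ) => (Sum.inr (q, y₀) : Wt Y σ)) := Cardinal.mk_union_le _ _
        _ ≤ #(Rst σ) + #(NRs σ) := add_le_add (Cardinal.mk_image_le) (Cardinal.mk_range_le)
        _ ≤ #X + #X := add_le_add hRstcard.le (Cardinal.mk_subtype_le _)
        _ = #X := Cardinal.add_eq_self hℵ.le
    have hZorb : #Z ≤ ℵ₀ * #(S0 Y σ y₀) := by
      have hsur : Function.Surjective (fun gs : ↥(Set.range (gh Y σ φ)) × ↥(S0 Y σ y₀) =>
          (⟨gs.1.1 gs.2.1, by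
            obtain ⟨g, hg⟩ := gs.1.2
            exact ⟨g, gs.2.1, gs.2.2, by rw [hg]⟩⟩ : ↥Z)) := by
        rintro ⟨x, g, s, hs, rfl⟩
        exact ⟨⟨⟨gh Y σ φ g, ⟨g, rfl⟩⟩, ⟨s, hs⟩⟩, rfl⟩
      have h1 := Cardinal.mk_le_of_surjective hsur
      have h2 : #(↥(Set.range (gh Y σ φ)) × ↥(S0 Y σ y₀)) =
          #(Set.range (gh Y σ φ)) * #(S0 Y σ y₀) := by
        simp [Cardinal.mk_prod, Cardinal.lift_id]
      have h3 : #(Set.range (gh Y σ φ)) ≤ ℵ₀ := by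
        have : Countable ↥(Set.range (gh Y σ φ)) := (Set.countable_range _).to_subtype
        exact Cardinal.mk_le_aleph0
      calc #Z ≤ #(↥(Set.range (gh Y σ φ)) × ↥(S0 Y σ y₀)) := h1
        _ = #(Set.range (gh Y σ φ)) * #(S0 Y σ y₀) := h2
        _ ≤ ℵ₀ * #(S0 Y σ y₀) := mul_le_mul_left h3 _
    calc #Z ≤ ℵ₀ * #(S0 Y σ y₀) := hZorb
      _ ≤ ℵ₀ * #X := mul_le_mul_right hS0 _
      _ ≤ #X * #X := mul_le_mul_left hℵ.le _
      _ = #X := Cardinal.mul_eq_self hℵ.le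
  -- the set of orbit classes of Z
  set ZQ : Set (QWt Y σ) := {O | ∃ z ∈ Z, qW Y σ z = O} with hZQdef
  have hZQcard : #ZQ ≤ #X := by
    have hsur : Function.Surjective (fun z : ↥Z => (⟨qW Y σ z.1, ⟨z.1, z.2, rfl⟩⟩ : ↥ZQ)) := by
      rintro ⟨O, z, hz, rfl⟩
      exact ⟨⟨z, hz⟩, rfl⟩
    exact (Cardinal.mk_le_of_surjective hsur).trans hZcard
  -- counting orbits of each type in Z
  have hcount : ∀ s : Set (FreeGroup ℕ), #{O : ↥ZQ // typW Y σ O.1 = s} = mm σ s := by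
    intro s
    rcases lt_or_eq_of_le (hmle s) with hs | hs
    · -- rare case
      have hform : ∀ O : QWt Y σ, O ∈ ZQ → typW Y σ O = s →
          O = qW Y σ (Sum.inl ((pbar Y σ O).out)) := by
        rintro O ⟨z, hzZ, rfl⟩ htyp
        cases z with
        | inl x =>
          have hpb : pbar Y σ (qW Y σ (Sum.inl x)) = qX σ x := rfl
          obtain ⟨g, hg⟩ := qX_exact σ ((qX_out σ (qX σ x)).symm)
          refine qW_eq Y σ ⟨g, ?_⟩
          rw [aW_inl, hg, hpb]
        | inr q =>
          exfalso
          have hpb : pbar Y σ (qW Y σ (Sum.inr q)) = qX σ (q.1 : X) := rfl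
          have hmem : ¬ ((q.1 : X) ∈ Rst σ) := q.1.2
          apply hmem
          show mm σ (typ σ (qX σ (q.1 : X))) < #X
          have : typ σ (qX σ (q.1 : X)) = s := by rw [← hpb]; exact htyp
          rw [this]
          exact hs
      have hbij : Function.Bijective (fun O : {O : ↥ZQ // typW Y σ O.1 = s} =>
          (⟨pbar Y σ O.1.1, O.2⟩ : {τ : QXt σ // typ σ τ = s})) := by
        constructor
        · intro a b h
          have hpb : pbar Y σ a.1.1 = pbar Y σ b.1.1 := congrArg Subtype.val h
          have ha := hform a.1.1 a.1.2 a.2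
          have hb := hform b.1.1 b.1.2 b.2
          apply Subtype.ext; apply Subtype.ext
          rw [ha, hb, hpb]
        · rintro ⟨τ, hτ⟩
          have hout : (τ.out : X) ∈ Rst σ := by
            show mm σ (typ σ (qX σ τ.out)) < #X
            rw [qX_out, hτ]
            exact hs
          have hZmem : (Sum.inl τ.out : Wt Y σ) ∈ Z := by
            apply subset_orbG
            exact Or.inl ⟨τ.out, hout, rfl⟩
          have hOmem : qW Y σ (Sum.inl τ.out) ∈ ZQ := ⟨Sum.inl τ.out, hZmem, rfl⟩
          have hpb : pbar Y σ (qW Y σ (Sum.inl τ.out)) = τ := by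
            rw [pbar_mk]
            show qX σ τ.out = τ
            exact qX_out σ τ
          have htypO : typW Y σ (qW Y σ (Sum.inl τ.out)) = s := by
            rw [typW, hpb, hτ]
          refine ⟨⟨⟨qW Y σ (Sum.inl τ.out), hOmem⟩, htypO⟩, ?_⟩
          exact Subtype.ext hpb
      have := Cardinal.mk_congr (Equiv.ofBijective _ hbij)
      rw [this]; rfl
    · -- non-rare case
      rw [hs]
      apply le_antisymm
      · exact (Cardinal.mk_subtype_le _).trans hZQcard
      · have hinj : Function.Injective (fun τ : {τ : QXt σ // typ σ τ = s} =>
            (⟨⟨qW Y σ (Sum.inr (⟨τ.1.out, by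
                intro hc
                have hc' : mm σ (typ σ (qX σ τ.1.out)) < #X := hc
                rw [qX_out, τ.2, hs] at hc'
                exact lt_irrefl _ hc'⟩, y₀)),
              ⟨_, subset_orbG Y σ φ _ (Or.inr ⟨_, rfl⟩), rfl⟩⟩,
              by rw [typW, pbar_mk]; show typ σ (qX σ τ.1.out) = s; rw [qX_out, τ.2]⟩ :
              {O : ↥ZQ // typW Y σ O.1 = s})) := by
          intro a b h
          have h1 : qW Y σ _ = qW Y σ _ := congrArg (fun O : {O : ↥ZQ // typW Y σ O.1 = s} => O.1.1) h
          have h2 : qX σ a.1.out = qX σ b.1.out := by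
            have := congrArg (pbar Y σ) h1
            rwa [pbar_mk, pbar_mk] at this
          apply Subtype.ext
          rw [← qX_out σ a.1, ← qX_out σ b.1]
          exact h2
        have := Cardinal.mk_le_of_injective hinj
        have hmm : #{τ : QXt σ // typ σ τ = s} = #X := hs
        rwa [hmm] at this
  -- the matching bijection between orbit classes of Z and orbit classes of X
  have hes : ∀ s : Set (FreeGroup ℕ),
      Nonempty ({O : ↥ZQ // typW Y σ O.1 = s} ≃ {τ : QXt σ // typ σ τ = s}) := by
    intro s
    exact Cardinal.eq.mp (hcount s)
  set es : ∀ s : Set (FreeGroup ℕ),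
      {O : ↥ZQ // typW Y σ O.1 = s} ≃ {τ : QXt σ // typ σ τ = s} :=
    fun s => (hes s).some with hesdef
  set fZ : ↥ZQ → Set (FreeGroup ℕ) := fun O => typW Y σ O.1 with hfZ
  set Φ : ↥ZQ ≃ QXt σ :=
    (Equiv.sigmaFiberEquiv fZ).symm.trans
      ((Equiv.sigmaCongrRight es).trans (Equiv.sigmaFiberEquiv (typ σ))) with hΦdef
  have hΦtyp : ∀ O : ↥ZQ, typ σ (Φ O) = typW Y σ O.1 := by
    intro O
    have h1 : Φ O = (es (fZ O) ⟨O, rfl⟩).1 := rfl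
    rw [h1]
    exact (es (fZ O) ⟨O, rfl⟩).2
  -- representatives of classes of W compatible with pbar
  have hwrep : ∀ O : QWt Y σ, ∃ z : Wt Y σ,
      qW Y σ z = O ∧ pmap Y σ z = (pbar Y σ O).out := by
    intro O
    obtain ⟨z0, hz0⟩ : ∃ z0, qW Y σ z0 = O := ⟨O.out, Quotient.out_eq O⟩
    have h1 : qX σ (pmap Y σ z0) = qX σ ((pbar Y σ O).out) := by
      rw [← hz0, ← pbar_mk Y σ z0]
      rw [hz0]
      exact (qX_out σ (pbar Y σ O)).symm
    obtain ⟨g, hg⟩ := qX_exact σ h1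
    refine ⟨aW Y σ g z0, ?_, ?_⟩
    · rw [← hz0]
      exact (qW_eq Y σ ⟨g, rfl⟩).symm
    · rw [pmap_aW, hg]
  choose wrep hw1 hw2 using hwrep
  -- membership of the chosen witnesses of an element of Z
  have hwrepZ : ∀ O : ↥ZQ, wrep O.1 ∈ Z := by
    rintro ⟨O, z, hzZ, rfl⟩
    obtain ⟨g, hg⟩ := qW_exact Y σ (hw1 (qW Y σ z)).symm
    rw [← hg]
    exact hZF g hzZ
  -- the stabilizer transfer along Φ
  have hstabPhi : ∀ (O : ↥ZQ) (g : FreeGroup ℕ),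
      aW Y σ g (wrep O.1) = wrep O.1 ↔ aX σ g ((Φ O).out) = (Φ O).out := by
    intro O g
    rw [stab_transfer, hw2 O.1]
    have h1 : typ σ (pbar Y σ O.1) = typ σ (Φ O) := (hΦtyp O).symm
    constructor
    · intro h
      have hmem : g ∈ typ σ (pbar Y σ O.1) := h
      rw [h1] at hmem
      exact hmem
    · intro h
      have hmem : g ∈ typ σ (Φ O) := h
      rw [← h1] at hmem
      exact hmem
  have hiff : ∀ (O : ↥ZQ) (g g' : FreeGroup ℕ),
      aW Y σ g (wrep O.1) = aW Y σ g' (wrep O.1) ↔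
        aX σ g ((Φ O).out) = aX σ g' ((Φ O).out) := by
    intro O g g'
    rw [perm_cancel (aW Y σ), perm_cancel (aX σ)]
    exact hstabPhi O _
  -- the map from Z to X
  set OZ : ↥Z → ↥ZQ := fun z => ⟨qW Y σ z.1, ⟨z.1, z.2, rfl⟩⟩ with hOZ
  have hgz : ∀ z : ↥Z, ∃ g, aW Y σ g (wrep (OZ z).1) = z.1 := by
    intro z
    exact qW_exact Y σ ((hw1 ((OZ z).1)).trans (show (OZ z).1 = qW Y σ z.1 from rfl))
  choose gz hgzs using hgz
  set cf : ↥Z → X := fun z => aX σ (gz z) ((Φ (OZ z)).out) with hcf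
  -- independence of the witness
  have hcgen : ∀ (z : ↥Z) (g : FreeGroup ℕ), aW Y σ g (wrep (OZ z).1) = z.1 →
      cf z = aX σ g ((Φ (OZ z)).out) := by
    intro z g hwit
    have h1 : aW Y σ (gz z) (wrep (OZ z).1) = aW Y σ g (wrep (OZ z).1) := by
      rw [hgzs z, hwit]
    exact (hiff (OZ z) (gz z) g).mp h1
  -- class of the image
  have hcq : ∀ z : ↥Z, qX σ (cf z) = Φ (OZ z) := by
    intro z
    rw [hcf]
    show qX σ (aX σ (gz z) ((Φ (OZ z)).out)) = Φ (OZ z)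
    rw [qX_aX, qX_out]
  -- injectivity
  have hcinj : Function.Injective cf := by
    intro z z' h
    have hO : OZ z = OZ z' := Φ.injective (by rw [← hcq z, ← hcq z', h])
    have h2 : aX σ (gz z) ((Φ (OZ z)).out) = aX σ (gz z') ((Φ (OZ z)).out) := by
      have hz : cf z = aX σ (gz z) ((Φ (OZ z)).out) := rfl
      have hz' : cf z' = aX σ (gz z') ((Φ (OZ z')).out) := rfl
      rw [← hz, h, hz', hO]
    have h3 := (hiff (OZ z) (gz z) (gz z')).mpr h2
    apply Subtype.ext
    calc z.1 = aW Y σ (gz z) (wrep (OZ z).1) := (hgzs z).symm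
      _ = aW Y σ (gz z') (wrep (OZ z).1) := h3
      _ = aW Y σ (gz z') (wrep (OZ z').1) := by rw [hO]
      _ = z'.1 := hgzs z'
  -- surjectivity
  have hcsurj : Function.Surjective cf := by
    intro x
    set O : ↥ZQ := Φ.symm (qX σ x) with hOdef
    have hΦO : Φ O = qX σ x := Φ.apply_symm_apply _
    have hwZ : wrep O.1 ∈ Z := hwrepZ O
    have h1 : qX σ ((Φ O).out) = qX σ x := by rw [qX_out, hΦO]
    obtain ⟨h, hh⟩ := qX_exact σ h1
    refine ⟨⟨aW Y σ h (wrep O.1), hZF h hwZ⟩, ?_⟩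
    have hOz : OZ ⟨aW Y σ h (wrep O.1), hZF h hwZ⟩ = O := by
      apply Subtype.ext
      show qW Y σ (aW Y σ h (wrep O.1)) = O.1
      exact (qW_eq Y σ ⟨h, rfl⟩).symm.trans (hw1 O.1)
    have hwit : aW Y σ h (wrep ((OZ ⟨aW Y σ h (wrep O.1), hZF h hwZ⟩).1)) =
        (⟨aW Y σ h (wrep O.1), hZF h hwZ⟩ : ↥Z).1 := by
      rw [hOz]
    rw [hcgen _ h hwit, hOz, hh]
  -- equivariance
  have hceqv : ∀ (n : ℕ) (z : ↥Z) (hz' : tP Y σ n z.1 ∈ Z),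
      cf ⟨tP Y σ n z.1, hz'⟩ = σ n (cf z) := by
    intro n z hz'
    have hO : OZ ⟨tP Y σ n z.1, hz'⟩ = OZ z := by
      apply Subtype.ext
      show qW Y σ (tP Y σ n z.1) = qW Y σ z.1
      refine (qW_eq Y σ ⟨FreeGroup.of n, ?_⟩).symm
      rw [aW_of]
    have hwit : aW Y σ (FreeGroup.of n * gz z)
        (wrep ((OZ ⟨tP Y σ n z.1, hz'⟩).1)) = (⟨tP Y σ n z.1, hz'⟩ : ↥Z).1 := by
      rw [hO]
      show aW Y σ (FreeGroup.of n * gz z) (wrep ((OZ z).1)) = tP Y σ n z.1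
      rw [map_mul, Equiv.Perm.mul_apply, hgzs z, aW_of]
    rw [hcgen _ _ hwit, hO]
    show aX σ (FreeGroup.of n * gz z) ((Φ (OZ z)).out) = σ n (cf z)
    rw [map_mul, Equiv.Perm.mul_apply, aX_of]
  -- the bijection
  set cE : ↥Z ≃ X := Equiv.ofBijective cf ⟨hcinj, hcsurj⟩ with hcE
  have hcEapp : ∀ z : ↥Z, cE z = cf z := fun z => rfl
  -- invariance of Z under all images of φ
  have hZiffgh : ∀ (x : FreeSemigroup A) (z : Wt Y σ), z ∈ Z ↔ φ x z ∈ Z := by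
    intro x z
    obtain ⟨g, hg⟩ := gh_surj_sem Y σ φ x
    rw [← hg]
    exact orbG_iff Y σ φ _ g z
  -- the conjugated restriction map
  set Θ : Equiv.Perm (Wt Y σ) → Equiv.Perm X := fun g =>
    if hg : ∀ z : Wt Y σ, z ∈ Z ↔ g z ∈ Z then
      cE.symm.trans ((g.subtypePerm (fun z => (hg z).symm)).trans cE)
    else 1 with hΘ
  have hΘapp : ∀ (g : Equiv.Perm (Wt Y σ)) (hg : ∀ z : Wt Y σ, z ∈ Z ↔ g z ∈ Z),
      Θ g = cE.symm.trans ((g.subtypePerm (fun z => (hg z).symm)).trans cE) := by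
    intro g hg
    rw [hΘ]
    exact dif_pos hg
  have hΘmul : ∀ g h : Equiv.Perm (Wt Y σ), (∀ z : Wt Y σ, z ∈ Z ↔ g z ∈ Z) →
      (∀ z : Wt Y σ, z ∈ Z ↔ h z ∈ Z) → Θ (g * h) = Θ g * Θ h := by
    intro g h hg hh
    have hgh : ∀ z : Wt Y σ, z ∈ Z ↔ (g * h) z ∈ Z := by
      intro z
      rw [Equiv.Perm.mul_apply]
      exact (hh z).trans (hg (h z))
    rw [hΘapp g hg, hΘapp h hh, hΘapp _ hgh]
    ext x
    simp only [Equiv.trans_apply, Equiv.Perm.mul_apply, Equiv.symm_apply_apply,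
      Equiv.Perm.subtypePerm_apply]
  -- the final homomorphism
  set ψ : FreeSemigroup A →ₙ* Equiv.Perm X :=
    FreeSemigroup.lift (fun a => Θ (φ (FreeSemigroup.of a))) with hψdef
  have hψ : ∀ x : FreeSemigroup A, ψ x = Θ (φ x) := by
    intro x
    induction x using FreeSemigroup.recOnMul with
    | ih1 a => rfl
    | ih2 a y ha hy =>
      rw [map_mul, map_mul, ha, hy]
      exact (hΘmul (φ (FreeSemigroup.of a)) (φ y) (hZiffgh _) (hZiffgh _)).symm
  refine ⟨ψ, fun n => ?_⟩
  rw [hψ (w n), hφw n]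
  -- finally : Θ (tP Y σ n) = σ n
  have htZ : ∀ z : Wt Y σ, z ∈ Z ↔ tP Y σ n z ∈ Z := by
    intro z
    constructor
    · intro hz
      have h2 := hZF (FreeGroup.of n) hz
      rwa [aW_of] at h2
    · intro hz
      have h2 := hZF (FreeGroup.of n)⁻¹ hz
      rwa [map_inv, aW_of, Equiv.Perm.coe_inv, Equiv.symm_apply_apply] at h2
  rw [hΘapp _ htZ]
  ext x
  simp only [Equiv.trans_apply, Equiv.Perm.subtypePerm_apply]
  have h3 := hceqv n (cE.symm x) ((htZ _).mp (cE.symm x).2)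
  calc cE ⟨tP Y σ n ((cE.symm x) : Wt Y σ), (htZ _).mp (cE.symm x).2⟩
      = cf ⟨tP Y σ n ((cE.symm x) : Wt Y σ), (htZ _).mp (cE.symm x).2⟩ := rfl
    _ = σ n (cf (cE.symm x)) := h3
    _ = σ n (cE (cE.symm x)) := rfl
    _ = σ n x := by rw [Equiv.apply_symm_apply]

end
end Stmt6Proof

/-- If `2^ℵ₀ < |X| < |Y|` with `|X|` regular, every universal sequence for
`Sym(Y)` is universal for `Sym(X)`. -/
theorem stmt6 {X Y : Type u} {A : Type*} [Infinite X] [Infinite Y] [Countable A]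
    (hcont : Cardinal.continuum < Cardinal.mk X)
    (hXY : Cardinal.mk X < Cardinal.mk Y)
    (hreg : (Cardinal.mk X).IsRegular)
    (w : ℕ → FreeSemigroup A) (hw : IsUniversal (Equiv.Perm Y) w) :
    IsUniversal (Equiv.Perm X) w := by
  intro s
  exact Stmt6Proof.key hcont hXY.le hreg w hw s
end

section
/- Let X and Y be infinite sets with 2^ℵ₀ < |X| ≤ |Y|. Then the set of universal sequences for Sym(X) equals the set of universal sequences for Sym(Y). (The regularity assumption on |X| can be removed by passing through the successor cardinal of 2^ℵ₀, which is regular.) -/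
open Cardinal

universe u v

namespace Stmt7

theorem Equiv.Perm.inv_apply_self {α : Type*} (f : Equiv.Perm α) (x : α) : f⁻¹ (f x) = x :=
  f.symm_apply_apply x

theorem Equiv.Perm.apply_inv_self {α : Type*} (f : Equiv.Perm α) (x : α) : f (f⁻¹ x) = x :=
  f.apply_symm_apply x

instance {α : Type*} [Countable α] : Countable (FreeGroup α) := by
  classical
  exact FreeGroup.toWord_injective.countable
instance : Infinite (FreeGroup ℕ) := Infinite.of_injective FreeGroup.of FreeGroup.of_injective

abbrev Lam : Type u := ULift.{u} (Set ℕ)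

lemma mk_Lam : #(Lam.{u}) = 𝔠 := by
  rw [Cardinal.mk_uLift, Cardinal.mk_set, Cardinal.mk_nat, Cardinal.two_power_aleph0,
    Cardinal.lift_continuum]

/-- realizability of a sequence of permutations by the word sequence `w` -/
def Rlz {A : Type v} (w : ℕ → FreeSemigroup A) (Z : Type u) (f : ℕ → Equiv.Perm Z) : Prop :=
  ∃ φ : FreeSemigroup A →ₙ* Equiv.Perm Z, ∀ n, φ (w n) = f n

def unitPerm (σ τ : ℕ → Equiv.Perm (Lam.{u})) (n : ℕ) :
    Equiv.Perm (Lam.{u} ⊕ Lam.{u} × Lam.{u}) :=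
  (σ n).sumCongr ((τ n).prodCongr (Equiv.refl _))

/-- the `X`-independent characterization -/
def Cw {A : Type v} (w : ℕ → FreeSemigroup A) : Prop :=
  ∀ σ τ : ℕ → Equiv.Perm (Lam.{u}), Rlz w (Lam.{u} ⊕ Lam.{u} × Lam.{u}) (unitPerm σ τ)

/-- `Equiv.permCongr` as a `MulEquiv`. -/
def permCongrM {Z Z' : Type u} (e : Z ≃ Z') : Equiv.Perm Z ≃* Equiv.Perm Z' where
  toFun f := (e.symm.trans f).trans e
  invFun f := (e.trans f).trans e.symm
  left_inv f := by ext z; simp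
  right_inv f := by ext z; simp
  map_mul' f g := by ext z; simp [Equiv.Perm.mul_apply]

@[simp] lemma permCongrM_apply {Z Z' : Type u} (e : Z ≃ Z') (f : Equiv.Perm Z) (z : Z') :
    permCongrM e f z = e (f (e.symm z)) := rfl

@[simp] lemma permCongrM_symm_apply {Z Z' : Type u} (e : Z ≃ Z') (f : Equiv.Perm Z') (z : Z) :
    (permCongrM e).symm f z = e.symm (f (e z)) := rfl

lemma rlz_congr {A : Type v} {w : ℕ → FreeSemigroup A} {Z Z' : Type u} {f : ℕ → Equiv.Perm Z}
    {f' : ℕ → Equiv.Perm Z'} (e : Z ≃ Z') (he : ∀ n z, e (f n z) = f' n (e z))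
    (h : Rlz w Z f) : Rlz w Z' f' := by
  obtain ⟨φ, hφ⟩ := h
  refine ⟨⟨fun v => permCongrM e (φ v), fun a b => by simp [map_mul]⟩, fun n => ?_⟩
  ext z'
  simp only [MulHom.coe_mk, hφ n, permCongrM_apply]
  rw [he n (e.symm z'), Equiv.apply_symm_apply]

lemma rlz_sigma {A : Type v} {w : ℕ → FreeSemigroup A} {I : Type u} {Z : I → Type u}
    (uu : ∀ i, ℕ → Equiv.Perm (Z i)) (h : ∀ i, Rlz w (Z i) (uu i)) :
    Rlz w (Σ i, Z i) (fun n => Equiv.sigmaCongrRight (fun i => uu i n)) := by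
  choose φ hφ using h
  refine ⟨⟨fun v => Equiv.sigmaCongrRight (fun i => φ i v), ?_⟩, ?_⟩
  · intro v v'
    show Equiv.sigmaCongrRight (fun i => φ i (v * v')) =
      Equiv.sigmaCongrRight (fun i => φ i v) * Equiv.sigmaCongrRight (fun i => φ i v')
    simp only [map_mul]
    ext ⟨i, z⟩
    all_goals rfl
  · intro n
    show Equiv.sigmaCongrRight (fun i => φ i (w n)) = Equiv.sigmaCongrRight (fun i => uu i n)
    simp only [hφ]

lemma univ_congr {A : Type v} {w : ℕ → FreeSemigroup A} {Z Z' : Type u} (e : Z ≃ Z')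
    (h : IsUniversal (Equiv.Perm Z) w) : IsUniversal (Equiv.Perm Z') w := by
  intro f
  obtain ⟨φ, hφ⟩ := h (fun n => (permCongrM e).symm (f n))
  refine ⟨⟨fun v => permCongrM e (φ v), fun a b => by simp [map_mul]⟩, fun n => ?_⟩
  simp only [MulHom.coe_mk, hφ n]
  exact (permCongrM e).apply_symm_apply (f n)

theorem univ_to_C {X : Type u} {A : Type v} [Countable A] (w : ℕ → FreeSemigroup A)
    (hX : 𝔠 ≤ #X) (hU : IsUniversal (Equiv.Perm X) w) : Cw.{u} w := by
  classical
  have hc0 : ℵ₀ ≤ #X := le_trans aleph0_le_continuum hX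
  have hmk : #(Lam.{u} ⊕ Lam.{u} × X) = #X := by
    rw [Cardinal.mk_sum, Cardinal.mk_prod, Cardinal.lift_id, Cardinal.lift_id,
      Cardinal.lift_id, mk_Lam, Cardinal.mul_eq_max aleph0_le_continuum hc0,
      max_eq_right hX, Cardinal.add_eq_max aleph0_le_continuum, max_eq_right hX]
  obtain ⟨e⟩ : Nonempty (X ≃ (Lam.{u} ⊕ Lam.{u} × X)) := Cardinal.eq.mp hmk.symm
  have hU' : IsUniversal (Equiv.Perm (Lam.{u} ⊕ Lam.{u} × X)) w := univ_congr e hU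
  intro σ τ
  set Z := (Lam.{u} ⊕ Lam.{u} × X) with hZdef
  set g : ℕ → Equiv.Perm Z := fun n => (σ n).sumCongr ((τ n).prodCongr (Equiv.refl X))
    with hgdef
  obtain ⟨φ, hφ⟩ := hU' g
  set ρ : FreeGroup A →* Equiv.Perm Z := FreeGroup.lift (fun a => φ (FreeSemigroup.of a))
    with hρdef
  have hρφ : ∀ v : FreeSemigroup A, ∃ u : FreeGroup A, ρ u = φ v := by
    intro v
    induction v using FreeSemigroup.recOnMul with
    | ih1 a => exact ⟨FreeGroup.of a, by rw [hρdef, FreeGroup.lift_apply_of]⟩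
    | ih2 x y hx hy =>
      obtain ⟨ux, hx⟩ := hx; obtain ⟨uy, hy⟩ := hy
      exact ⟨ux * uy, by rw [map_mul, hx, hy, ← map_mul]⟩
  obtain ⟨W₀, hW₀⟩ := Cardinal.le_mk_iff_exists_set.mp hX
  set planted : Set Z := (Set.range (Sum.inl : Lam.{u} → Z)) ∪
    (Sum.inr '' (Set.univ ×ˢ W₀)) with hpldef
  set P : Set Z := {z | ∃ u : FreeGroup A, ∃ z₀ ∈ planted, ρ u z₀ = z} with hPdef
  have hplP : planted ⊆ P := fun z hz => ⟨1, z, hz, by simp⟩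
  have hPu : ∀ (u : FreeGroup A) (z : Z), z ∈ P → ρ u z ∈ P := by
    rintro u z ⟨u₀, z₀, h₀, rfl⟩
    exact ⟨u * u₀, z₀, h₀, by rw [map_mul]; rfl⟩
  have hPiff : ∀ (v : FreeSemigroup A) (z : Z), z ∈ P ↔ φ v z ∈ P := by
    intro v z
    obtain ⟨u, hu⟩ := hρφ v
    rw [← hu]
    constructor
    · exact hPu u z
    · intro h
      have h2 := hPu u⁻¹ _ h
      rwa [map_inv, Equiv.Perm.inv_apply_self] at h2
  set ρτ : FreeGroup ℕ →* Equiv.Perm (Lam.{u}) := FreeGroup.lift τ with hρτdef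
  set η : FreeGroup ℕ →* Equiv.Perm Z := FreeGroup.lift g with hηdef
  have hηg : ∀ n, η (FreeGroup.of n) = g n := fun n => by rw [hηdef, FreeGroup.lift_apply_of]
  have hρτg : ∀ n, ρτ (FreeGroup.of n) = τ n := fun n => by rw [hρτdef, FreeGroup.lift_apply_of]
  have hgn : ∀ n (l : Lam.{u}) (x : X), g n (Sum.inr (l, x)) = Sum.inr (τ n l, x) := by
    intro n l x
    rfl
  have hηr : ∀ (u : FreeGroup ℕ) (l : Lam.{u}) (x : X),
      η u (Sum.inr (l, x)) = Sum.inr (ρτ u l, x) := by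
    intro u
    induction u using FreeGroup.induction_on with
    | C1 => intro l x; simp
    | of n =>
      intro l x
      rw [hηg, hρτg, hgn]
    | inv_of n ih =>
      intro l x
      have h2 : η (FreeGroup.of n) (Sum.inr ((ρτ (FreeGroup.of n))⁻¹ l, x)) = Sum.inr (l, x) := by
        rw [ih, Equiv.Perm.apply_inv_self]
      rw [map_inv, map_inv, ← h2, Equiv.Perm.inv_apply_self]
    | mul a b iha ihb =>
      intro l x
      rw [map_mul, map_mul, Equiv.Perm.mul_apply, ihb, iha, Equiv.Perm.mul_apply]
  have hηρ : ∀ u : FreeGroup ℕ, ∃ u' : FreeGroup A, ρ u' = η u := by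
    intro u
    induction u using FreeGroup.induction_on with
    | C1 => exact ⟨1, by rw [map_one, map_one]⟩
    | of n =>
      obtain ⟨u', hu'⟩ := hρφ (w n)
      exact ⟨u', by rw [hu', hφ n, hηg]⟩
    | inv_of n ih =>
      obtain ⟨u', hu'⟩ := ih
      exact ⟨u'⁻¹, by rw [map_inv, map_inv, hu']⟩
    | mul a b iha ihb =>
      obtain ⟨ua, hua⟩ := iha; obtain ⟨ub, hub⟩ := ihb
      exact ⟨ua * ub, by rw [map_mul, map_mul, hua, hub]⟩
  have hPτ : ∀ (l : Lam.{u}) (x : X) (u : FreeGroup ℕ),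
      Sum.inr (l, x) ∈ P → Sum.inr (ρτ u l, x) ∈ P := by
    intro l x u h
    obtain ⟨u', hu'⟩ := hηρ u
    have h2 := hPu u' _ h
    rwa [hu', hηr] at h2
  let sτ : Setoid (Lam.{u}) :=
    { r := fun l l' => ∃ u : FreeGroup ℕ, ρτ u l = l'
      iseqv := by
        refine ⟨fun l => ⟨1, by simp⟩, ?_, ?_⟩
        · rintro a b ⟨u, rfl⟩
          exact ⟨u⁻¹, by rw [map_inv, Equiv.Perm.inv_apply_self]⟩
        · rintro a b c ⟨u, rfl⟩ ⟨u', rfl⟩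
          exact ⟨u' * u, by rw [map_mul]; rfl⟩ }
  set CO : Quotient sτ → Set X :=
    fun c => {x | ∀ l : Lam.{u}, Quotient.mk sτ l = c → Sum.inr (l, x) ∈ P} with hCOdef
  have key : ∀ (l : Lam.{u}) (x : X),
      Sum.inr (l, x) ∈ P ↔ x ∈ CO (Quotient.mk sτ l) := by
    intro l x
    constructor
    · intro h l' hl'
      obtain ⟨u, hu⟩ := Setoid.symm (Quotient.exact hl')
      rw [← hu]
      exact hPτ l x u h
    · intro h
      exact h l rfl
  -- cardinality of P
  have hplmk : #planted ≤ 𝔠 := by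
    have h1 : #(Set.range (Sum.inl : Lam.{u} → Z)) ≤ 𝔠 := mk_Lam.{u} ▸ Cardinal.mk_range_le
    have h2 : #(Sum.inr '' (Set.univ ×ˢ W₀) : Set Z) ≤ 𝔠 := by
      refine le_trans Cardinal.mk_image_le ?_
      rw [Cardinal.mk_congr (Equiv.Set.prod _ _), Cardinal.mk_prod, Cardinal.lift_id,
        Cardinal.lift_id, Cardinal.mk_univ, mk_Lam, hW₀, Cardinal.mul_eq_self aleph0_le_continuum]
    calc #planted ≤ _ + _ := Cardinal.mk_union_le _ _
    _ ≤ 𝔠 + 𝔠 := add_le_add h1 h2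
    _ = 𝔠 := Cardinal.add_eq_self aleph0_le_continuum
  have hne : Nonempty (FreeGroup A) := ⟨1⟩
  obtain ⟨en, hen⟩ := exists_surjective_nat (FreeGroup A)
  have hPmk : #P ≤ 𝔠 := by
    have hPsub : P ⊆ ⋃ m : ULift.{u} ℕ, (fun z => ρ (en m.down) z) '' planted := by
      rintro z ⟨u, z₀, h₀, rfl⟩
      obtain ⟨m, rfl⟩ := hen u
      exact Set.mem_iUnion.mpr ⟨⟨m⟩, ⟨z₀, h₀, rfl⟩⟩
    calc #P ≤ _ := Cardinal.mk_le_mk_of_subset hPsub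
    _ ≤ #(ULift.{u} ℕ) * ⨆ m : ULift.{u} ℕ, #((fun z => ρ (en m.down) z) '' planted) :=
        Cardinal.mk_iUnion_le _
    _ ≤ ℵ₀ * 𝔠 := by
        refine mul_le_mul' (by rw [Cardinal.mk_uLift, Cardinal.mk_nat, Cardinal.lift_aleph0]) ?_
        exact ciSup_le' fun m => le_trans Cardinal.mk_image_le hplmk
    _ = 𝔠 := by
        rw [Cardinal.mul_eq_max (le_refl ℵ₀) aleph0_le_continuum]
        exact max_eq_right aleph0_le_continuum
  have hCOub : ∀ c : Quotient sτ, #(CO c) ≤ 𝔠 := by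
    intro c
    have hinj : Function.Injective
        (fun x : ↥(CO c) => (⟨Sum.inr (c.out, x.val), x.2 c.out (Quotient.out_eq c)⟩ : ↥P)) := by
      intro a b hab
      apply Subtype.ext
      have h5 := congrArg Subtype.val hab
      exact congrArg Prod.snd (Sum.inr.inj h5)
    exact (Cardinal.mk_le_of_injective hinj).trans hPmk
  have hCOlb : ∀ c : Quotient sτ, 𝔠 ≤ #(CO c) := by
    intro c
    have hsub : W₀ ⊆ CO c := by
      intro x hx
      exact fun l _ => hplP (Or.inr ⟨(l, x), ⟨Set.mem_univ l, hx⟩, rfl⟩)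
    calc 𝔠 = #W₀ := hW₀.symm
    _ ≤ #(CO c) := Cardinal.mk_le_mk_of_subset hsub
  have heC : ∀ c : Quotient sτ, Nonempty (↥(CO c) ≃ Lam.{u}) := by
    intro c
    refine Cardinal.eq.mp ?_
    rw [mk_Lam]
    exact le_antisymm (hCOub c) (hCOlb c)
  have eC : ∀ c : Quotient sτ, ↥(CO c) ≃ Lam.{u} := fun c => (heC c).some
  have eCc : ∀ (c c' : Quotient sτ) (_ : c = c') (x : X) (hx : x ∈ CO c) (hx' : x ∈ CO c'),
      eC c ⟨x, hx⟩ = eC c' ⟨x, hx'⟩ := by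
    intro c c' h x hx hx'
    subst h
    rfl
  have hinlP : ∀ l : Lam.{u}, Sum.inl l ∈ P := fun l => hplP (Or.inl ⟨l, rfl⟩)
  obtain ⟨β, hβ1, hβ2⟩ : ∃ β : ↥P ≃ (Lam.{u} ⊕ Lam.{u} × Lam.{u}),
      (∀ l hl, β ⟨Sum.inl l, hl⟩ = Sum.inl l) ∧
      (∀ l x hx, β ⟨Sum.inr (l, x), hx⟩ =
        Sum.inr (l, eC (Quotient.mk sτ l) ⟨x, (key l x).mp hx⟩)) := by
    refine ⟨⟨fun z => match z with
        | ⟨Sum.inl l, _⟩ => Sum.inl l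
        | ⟨Sum.inr (l, x), h⟩ => Sum.inr (l, eC (Quotient.mk sτ l) ⟨x, (key l x).mp h⟩),
      fun t => match t with
        | Sum.inl l => ⟨Sum.inl l, hinlP l⟩
        | Sum.inr (l, y) => ⟨Sum.inr (l, ((eC (Quotient.mk sτ l)).symm y).val),
            (key l _).mpr ((eC (Quotient.mk sτ l)).symm y).property⟩, ?_, ?_⟩,
      fun l hl => rfl, fun l x hx => rfl⟩
    · rintro ⟨l | ⟨l, x⟩, hz⟩
      · rfl
      · apply Subtype.ext
        simp
    · rintro (l | ⟨l, y⟩)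
      · rfl
      · simp
  have hβs1 : ∀ l : Lam.{u}, β.symm (Sum.inl l) = ⟨Sum.inl l, hinlP l⟩ := by
    intro l
    rw [← hβ1 l (hinlP l), Equiv.symm_apply_apply]
  have hβs2 : ∀ (l : Lam.{u}) (y : Lam.{u}),
      β.symm (Sum.inr (l, y)) = ⟨Sum.inr (l, ((eC (Quotient.mk sτ l)).symm y).val),
        (key l _).mpr ((eC (Quotient.mk sτ l)).symm y).property⟩ := by
    intro l y
    rw [Equiv.symm_apply_eq, hβ2]
    refine congrArg (fun t => (Sum.inr (l, t) : Lam.{u} ⊕ Lam.{u} × Lam.{u})) ?_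
    exact ((Equiv.apply_eq_iff_eq_symm_apply _).mpr (Subtype.ext rfl)).symm
  have eCs : ∀ (c c' : Quotient sτ) (_ : c = c') (y : Lam.{u}),
      ((eC c).symm y).val = ((eC c').symm y).val := by
    intro c c' h y
    subst h
    rfl
  refine ⟨⟨fun v => permCongrM β ((φ v).subtypePerm (fun z => (hPiff v z).symm)), fun a b => ?_⟩, fun n => ?_⟩
  · ext t
    simp [Equiv.Perm.mul_apply, Equiv.Perm.subtypePerm_apply, map_mul]
  · ext t
    show permCongrM β ((φ (w n)).subtypePerm (fun z => (hPiff (w n) z).symm)) t = unitPerm σ τ n t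
    rw [permCongrM_apply, Equiv.apply_eq_iff_eq_symm_apply]
    apply Subtype.ext
    rw [Equiv.Perm.subtypePerm_apply]
    match t with
    | Sum.inl l =>
      rw [show unitPerm σ τ n (Sum.inl l) = Sum.inl (σ n l) from rfl, hβs1, hβs1]
      show φ (w n) (Sum.inl l) = Sum.inl (σ n l)
      rw [hφ n]
      rfl
    | Sum.inr (l, y) =>
      have hq : Quotient.mk sτ (τ n l) = Quotient.mk sτ l := by
        apply Quotient.sound
        exact ⟨(FreeGroup.of n)⁻¹, by rw [map_inv, hρτg, Equiv.Perm.inv_apply_self]⟩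
      rw [show unitPerm σ τ n (Sum.inr (l, y)) = Sum.inr (τ n l, y) from rfl, hβs2, hβs2]
      show φ (w n) (Sum.inr (l, ((eC (Quotient.mk sτ l)).symm y).val)) =
        Sum.inr (τ n l, ((eC (Quotient.mk sτ (τ n l))).symm y).val)
      rw [hφ n, hgn, eCs _ _ hq.symm y]
section DirA

variable {X : Type u} (ρ : FreeGroup ℕ →* Equiv.Perm X)

/-- the orbit equivalence relation of the subgroup generated by the `g n` -/
def oS : Setoid X where
  r := fun x y => ∃ u : FreeGroup ℕ, ρ u x = y
  iseqv := by
    refine ⟨fun x => ⟨1, by simp⟩, ?_, ?_⟩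
    · rintro a b ⟨u, rfl⟩
      exact ⟨u⁻¹, by rw [map_inv, Equiv.Perm.inv_apply_self]⟩
    · rintro a b c ⟨u, rfl⟩ ⟨u', rfl⟩
      exact ⟨u' * u, by rw [map_mul]; rfl⟩

abbrev QA := Quotient (oS ρ)

def qmA (x : X) : QA ρ := Quotient.mk (oS ρ) x

def OA (q : QA ρ) : Type u := {x : X // qmA ρ x = q}

lemma qmA_u (u : FreeGroup ℕ) (x : X) : qmA ρ (ρ u x) = qmA ρ x :=
  (Quotient.sound (show (oS ρ).r x (ρ u x) from ⟨u, rfl⟩)).symm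

lemma qmA_out (q : QA ρ) : qmA ρ q.out = q := Quotient.out_eq q

def cmpA (q : QA ρ) : ULift.{u} (Set (FreeGroup ℕ)) := ⟨{u | ρ u q.out = q.out}⟩

def rUA (q : QA ρ) (u : FreeGroup ℕ) : Equiv.Perm (OA ρ q) :=
  (ρ u).subtypePerm (fun x => by rw [qmA_u])

lemma rUA_val (q : QA ρ) (u : FreeGroup ℕ) (z : OA ρ q) :
    (rUA ρ q u z).val = ρ u z.val := rfl

lemma hdecA (q : QA ρ) (z : OA ρ q) : ∃ u : FreeGroup ℕ, ρ u q.out = z.val := by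
  have h1 : qmA ρ q.out = qmA ρ z.val := by rw [qmA_out, z.2]
  exact Quotient.exact h1

noncomputable def pickA (q : QA ρ) (z : OA ρ q) : FreeGroup ℕ := (hdecA ρ q z).choose

lemma pickA_spec (q : QA ρ) (z : OA ρ q) : ρ (pickA ρ q z) q.out = z.val :=
  (hdecA ρ q z).choose_spec

noncomputable def pushA (q q' : QA ρ) (z : OA ρ q) : OA ρ q' :=
  ⟨ρ (pickA ρ q z) q'.out, by rw [qmA_u, qmA_out]⟩

lemma pushA_eq (q q' : QA ρ) (h : cmpA ρ q = cmpA ρ q') (u : FreeGroup ℕ) (z : OA ρ q)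
    (hu : ρ u q.out = z.val) : (pushA ρ q q' z).val = ρ u q'.out := by
  have h1 : ρ (u⁻¹ * pickA ρ q z) q.out = q.out := by
    rw [map_mul, Equiv.Perm.mul_apply, pickA_spec, ← hu, map_inv, Equiv.Perm.inv_apply_self]
  have h2 : ρ (u⁻¹ * pickA ρ q z) q'.out = q'.out := by
    have h3 := congrArg ULift.down h
    have h4 : (u⁻¹ * pickA ρ q z) ∈ {v : FreeGroup ℕ | ρ v q'.out = q'.out} := by
      rw [show {v : FreeGroup ℕ | ρ v q'.out = q'.out} = (cmpA ρ q').down from rfl, ← h3]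
      exact h1
    exact h4
  show ρ (pickA ρ q z) q'.out = ρ u q'.out
  have h4 := congrArg (ρ u) h2
  rw [map_mul, map_inv, Equiv.Perm.mul_apply, Equiv.Perm.apply_inv_self] at h4
  exact h4

lemma pushA_pushA (q q' : QA ρ) (h : cmpA ρ q = cmpA ρ q') (z : OA ρ q) :
    pushA ρ q' q (pushA ρ q q' z) = z := by
  apply Subtype.ext
  have h1 : (pushA ρ q q' z).val = ρ (pickA ρ q z) q'.out := rfl
  have h2 := pushA_eq ρ q' q h.symm (pickA ρ q z) (pushA ρ q q' z) h1.symm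
  rw [h2, pickA_spec]

noncomputable def oEA (q q' : QA ρ) (h : cmpA ρ q = cmpA ρ q') : OA ρ q ≃ OA ρ q' where
  toFun := pushA ρ q q'
  invFun := pushA ρ q' q
  left_inv := pushA_pushA ρ q q' h
  right_inv := pushA_pushA ρ q' q h.symm

lemma oEA_comm (q q' : QA ρ) (h : cmpA ρ q = cmpA ρ q') (u : FreeGroup ℕ) (z : OA ρ q) :
    oEA ρ q q' h (rUA ρ q u z) = rUA ρ q' u (oEA ρ q q' h z) := by
  apply Subtype.ext
  have h1 : ρ (u * pickA ρ q z) q.out = (rUA ρ q u z).val := by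
    rw [map_mul, Equiv.Perm.mul_apply, pickA_spec]
    rfl
  have h2 := pushA_eq ρ q q' h _ _ h1
  show (pushA ρ q q' (rUA ρ q u z)).val = (rUA ρ q' u (oEA ρ q q' h z)).val
  rw [h2, map_mul, Equiv.Perm.mul_apply]
  rfl

lemma oEA_symm_comm (q q' : QA ρ) (h : cmpA ρ q = cmpA ρ q') (u : FreeGroup ℕ) (z : OA ρ q') :
    (oEA ρ q q' h).symm (rUA ρ q' u z) = rUA ρ q u ((oEA ρ q q' h).symm z) := by
  rw [Equiv.symm_apply_eq, oEA_comm, Equiv.apply_symm_apply]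

lemma oEA_val_congr (q₀ q q' : QA ρ) (hq : q = q') (h : cmpA ρ q₀ = cmpA ρ q)
    (h' : cmpA ρ q₀ = cmpA ρ q') (zm : OA ρ q₀) :
    (oEA ρ q₀ q h zm).val = (oEA ρ q₀ q' h' zm).val := by
  subst hq
  rfl

abbrev TT : Type u := Lam.{u} ⊕ Lam.{u} × Lam.{u}

lemma grand (hX : 𝔠 < #X) : ∃ (J : Type u) (σJ τJ : J → ℕ → Equiv.Perm (Lam.{u}))
    (E : X ≃ (J × TT.{u})),
    ∀ (n : ℕ) (x : X), E (ρ (FreeGroup.of n) x) =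
      ((E x).1, unitPerm (σJ (E x).1) (τJ (E x).1) n (E x).2) := by
  classical
  have hc0 : ℵ₀ ≤ #X := aleph0_le_continuum.trans hX.le
  have hOle : ∀ q : QA ρ, #(OA ρ q) ≤ ℵ₀ := by
    intro q
    have hsur : Function.Surjective (fun u : ULift.{u} (FreeGroup ℕ) =>
        (⟨ρ u.down q.out, by rw [qmA_u, qmA_out]⟩ : OA ρ q)) := by
      intro z
      exact ⟨⟨pickA ρ q z⟩, Subtype.ext (pickA_spec ρ q z)⟩
    have h1 := Cardinal.mk_le_of_surjective hsur
    rwa [Cardinal.mk_uLift, Cardinal.mk_eq_aleph0 (FreeGroup ℕ), Cardinal.lift_aleph0] at h1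
  have hQmk : #X ≤ #(QA ρ) * ℵ₀ := by
    calc #X = #(Σ q : QA ρ, OA ρ q) := Cardinal.mk_congr (Equiv.sigmaFiberEquiv (qmA ρ)).symm
    _ = Cardinal.sum (fun q : QA ρ => #(OA ρ q)) := Cardinal.mk_sigma _
    _ ≤ Cardinal.sum (fun _ : QA ρ => ℵ₀) := Cardinal.sum_le_sum _ _ hOle
    _ = #(QA ρ) * ℵ₀ := Cardinal.sum_const' _ _
  have hSet : #(ULift.{u} (Set (FreeGroup ℕ))) = 𝔠 := by
    rw [Cardinal.mk_uLift, Cardinal.mk_set, Cardinal.mk_eq_aleph0 (FreeGroup ℕ),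
      Cardinal.two_power_aleph0, Cardinal.lift_continuum]
  obtain ⟨Sb0, hSb0⟩ : ∃ Sb : ULift.{u} (Set (FreeGroup ℕ)),
      𝔠 < #({q : QA ρ // cmpA ρ q = Sb}) := by
    by_contra hcon
    push_neg at hcon
    have h1 : #(QA ρ) ≤ 𝔠 := by
      calc #(QA ρ) = #(Σ Sb : ULift.{u} (Set (FreeGroup ℕ)), {q : QA ρ // cmpA ρ q = Sb}) :=
        Cardinal.mk_congr (Equiv.sigmaFiberEquiv (cmpA ρ)).symm
      _ = Cardinal.sum (fun Sb => #({q : QA ρ // cmpA ρ q = Sb})) := Cardinal.mk_sigma _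
      _ ≤ Cardinal.sum (fun _ : ULift.{u} (Set (FreeGroup ℕ)) => 𝔠) :=
        Cardinal.sum_le_sum _ _ hcon
      _ = #(ULift.{u} (Set (FreeGroup ℕ))) * 𝔠 := Cardinal.sum_const' _ _
      _ = 𝔠 := by rw [hSet, Cardinal.mul_eq_self aleph0_le_continuum]
    refine absurd hX (not_lt.mpr ?_)
    calc #X ≤ #(QA ρ) * ℵ₀ := hQmk
    _ ≤ 𝔠 * 𝔠 := mul_le_mul' h1 aleph0_le_continuum
    _ = 𝔠 := Cardinal.mul_eq_self aleph0_le_continuum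
  set big : ULift.{u} (Set (FreeGroup ℕ)) → Prop :=
    fun S => 𝔠 < #({q : QA ρ // cmpA ρ q = S}) with hbigdef
  have hbigS : ∀ S : {S // big S}, 𝔠 < #({q : QA ρ // cmpA ρ q = S.val}) := fun S => S.2
  have hfibne : ∀ S : {S // big S}, Nonempty {q : QA ρ // cmpA ρ q = S.val} := by
    intro S
    rw [← Cardinal.mk_ne_zero_iff]
    exact ne_of_gt (lt_of_le_of_lt (Cardinal.zero_le _) (hbigS S))
  let base : ∀ S : {S // big S}, {q : QA ρ // cmpA ρ q = S.val} := fun S => (hfibne S).some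
  let M : {S // big S} → Type u := fun S => OA ρ (base S).val
  have hMle : ∀ S, #(M S) ≤ ℵ₀ := fun S => hOle _
  have hMne : ∀ S, Nonempty (M S) := fun S => ⟨⟨(base S).val.out, qmA_out ρ _⟩⟩
  have hMLam : ∀ S : {S // big S}, #(M S × Lam.{u}) = 𝔠 := by
    intro S
    rw [Cardinal.mk_prod, Cardinal.lift_id, Cardinal.lift_id, mk_Lam]
    apply le_antisymm
    · calc #(M S) * 𝔠 ≤ ℵ₀ * 𝔠 := mul_le_mul' (hMle S) le_rfl
      _ = 𝔠 := by
          rw [Cardinal.mul_eq_max le_rfl aleph0_le_continuum]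
          exact max_eq_right aleph0_le_continuum
    · calc 𝔠 = 1 * 𝔠 := (one_mul _).symm
      _ ≤ #(M S) * 𝔠 := by
          refine mul_le_mul' ?_ le_rfl
          rw [Cardinal.one_le_iff_ne_zero]
          exact Cardinal.mk_ne_zero_iff.mpr (hMne S)
  let vS : ∀ S : {S // big S}, (M S × Lam.{u}) ≃ Lam.{u} := fun S =>
    (Cardinal.eq.mp (by rw [hMLam S, mk_Lam])).some
  have hmkT : #(TT.{u}) = 𝔠 := by
    rw [Cardinal.mk_sum, Cardinal.mk_prod]
    simp only [Cardinal.lift_id]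
    rw [mk_Lam, Cardinal.mul_eq_self aleph0_le_continuum,
      Cardinal.add_eq_self aleph0_le_continuum]
  have hsplit : ∀ S : {S // big S}, Nonempty ({q : QA ρ // cmpA ρ q = S.val} ≃
      (({q : QA ρ // cmpA ρ q = S.val} × TT.{u}) ⊕ TT.{u})) := by
    intro S
    refine Cardinal.eq.mp ?_
    have hk : ℵ₀ ≤ #({q : QA ρ // cmpA ρ q = S.val}) := aleph0_le_continuum.trans (hbigS S).le
    rw [Cardinal.mk_sum, Cardinal.mk_prod]
    simp only [Cardinal.lift_id]
    rw [hmkT, Cardinal.mul_eq_max hk aleph0_le_continuum, max_eq_left (hbigS S).le,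
      Cardinal.add_eq_max hk, max_eq_left (hbigS S).le]
  let rS : ∀ S : {S // big S}, {q : QA ρ // cmpA ρ q = S.val} ≃
      (({q : QA ρ // cmpA ρ q = S.val} × TT.{u}) ⊕ TT.{u}) := fun S => (hsplit S).some
  -- the small part
  let QsT : Type u := {q : QA ρ // ¬ big (cmpA ρ q)}
  let SQ : Type u := Σ q : QsT, OA ρ q.val
  have hSQ : #SQ ≤ 𝔠 := by
    have hQsT : #QsT ≤ 𝔠 := by
      have h1 : #QsT = #(Σ S : {S // ¬ big S}, {q : QsT // (⟨cmpA ρ q.val, q.2⟩ : {S // ¬ big S}) = S}) :=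
        Cardinal.mk_congr (Equiv.sigmaFiberEquiv (fun q : QsT => (⟨cmpA ρ q.val, q.2⟩ : {S // ¬ big S}))).symm
      rw [h1, Cardinal.mk_sigma]
      calc Cardinal.sum (fun S : {S // ¬ big S} =>
            #({q : QsT // (⟨cmpA ρ q.val, q.2⟩ : {S // ¬ big S}) = S})) ≤
          Cardinal.sum (fun _ : {S // ¬ big S} => 𝔠) := by
            refine Cardinal.sum_le_sum _ _ ?_
            intro S
            have hinj : Function.Injective (fun p : {q : QsT // (⟨cmpA ρ q.val, q.2⟩ :
                {S // ¬ big S}) = S} => (⟨p.val.val, by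
                  have h2 := congrArg Subtype.val p.2
                  exact h2⟩ : {q : QA ρ // cmpA ρ q = S.val})) := by
              intro a b hab
              apply Subtype.ext
              apply Subtype.ext
              exact congrArg (fun t : {q : QA ρ // cmpA ρ q = S.val} => t.val) hab
            refine le_trans (Cardinal.mk_le_of_injective hinj) ?_
            exact not_lt.mp S.2
      _ = #({S : ULift.{u} (Set (FreeGroup ℕ)) // ¬ big S}) * 𝔠 := Cardinal.sum_const' _ _
      _ ≤ 𝔠 * 𝔠 := by
          refine mul_le_mul' ?_ le_rfl
          exact le_trans (Cardinal.mk_subtype_le _) hSet.le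
      _ = 𝔠 := Cardinal.mul_eq_self aleph0_le_continuum
    calc #SQ = Cardinal.sum (fun q : QsT => #(OA ρ q.val)) := Cardinal.mk_sigma _
    _ ≤ Cardinal.sum (fun _ : QsT => ℵ₀) := Cardinal.sum_le_sum _ _ (fun q => hOle _)
    _ = #QsT * ℵ₀ := Cardinal.sum_const' _ _
    _ ≤ 𝔠 * 𝔠 := mul_le_mul' hQsT aleph0_le_continuum
    _ = 𝔠 := Cardinal.mul_eq_self aleph0_le_continuum
  set Sbig : {S // big S} := ⟨Sb0, hSb0⟩ with hSbigdef
  have hv0ne : Nonempty ((SQ ⊕ (M Sbig × Lam.{u})) ≃ Lam.{u}) := by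
    refine Cardinal.eq.mp ?_
    rw [Cardinal.mk_sum]
    simp only [Cardinal.lift_id]
    rw [hMLam Sbig, mk_Lam]
    apply le_antisymm
    · calc #SQ + 𝔠 ≤ 𝔠 + 𝔠 := add_le_add hSQ le_rfl
      _ = 𝔠 := Cardinal.add_eq_self aleph0_le_continuum
    · exact le_add_self
  let v0 : (SQ ⊕ (M Sbig × Lam.{u})) ≃ Lam.{u} := hv0ne.some
  -- permutations
  let uS : ∀ _ : {S // big S}, ℕ → Equiv.Perm (Lam.{u}) := fun S n =>
    permCongrM (vS S) ((rUA ρ (base S).val (FreeGroup.of n)).prodCongr (Equiv.refl (Lam.{u})))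
  let σ0 : ℕ → Equiv.Perm (Lam.{u}) := fun n => permCongrM v0
    ((Equiv.sigmaCongrRight (fun q : QsT => rUA ρ q.val (FreeGroup.of n))).sumCongr
      ((rUA ρ (base Sbig).val (FreeGroup.of n)).prodCongr (Equiv.refl (Lam.{u}))))
  -- encoders
  let ENC : ∀ S : {S // big S}, (M S × TT.{u}) ≃ TT.{u} := fun S =>
    (Equiv.prodSumDistrib (M S) (Lam.{u}) (Lam.{u} × Lam.{u})).trans
      ((vS S).sumCongr (((Equiv.prodAssoc (M S) (Lam.{u}) (Lam.{u})).symm).trans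
        ((vS S).prodCongr (Equiv.refl (Lam.{u})))))
  let ENC0 : (SQ ⊕ (M Sbig × TT.{u})) ≃ TT.{u} :=
    ((Equiv.refl SQ).sumCongr (Equiv.prodSumDistrib (M Sbig) (Lam.{u}) (Lam.{u} × Lam.{u}))).trans
      ((Equiv.sumAssoc SQ (M Sbig × Lam.{u}) (M Sbig × (Lam.{u} × Lam.{u}))).symm.trans
        (v0.sumCongr (((Equiv.prodAssoc (M Sbig) (Lam.{u}) (Lam.{u})).symm).trans
          ((vS Sbig).prodCongr (Equiv.refl (Lam.{u}))))))
  have hENC1 : ∀ (S : {S // big S}) (zm : M S) (l : Lam.{u}),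
      ENC S (zm, Sum.inl l) = Sum.inl (vS S (zm, l)) := fun S zm l => rfl
  have hENC2 : ∀ (S : {S // big S}) (zm : M S) (l l' : Lam.{u}),
      ENC S (zm, Sum.inr (l, l')) = Sum.inr (vS S (zm, l), l') := fun S zm l l' => rfl
  have hENC0a : ∀ (sq : SQ), ENC0 (Sum.inl sq) = Sum.inl (v0 (Sum.inl sq)) := fun sq => rfl
  have hENC0b : ∀ (zm : M Sbig) (l : Lam.{u}),
      ENC0 (Sum.inr (zm, Sum.inl l)) = Sum.inl (v0 (Sum.inr (zm, l))) := fun zm l => rfl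
  have hENC0c : ∀ (zm : M Sbig) (l l' : Lam.{u}),
      ENC0 (Sum.inr (zm, Sum.inr (l, l'))) = Sum.inr (vS Sbig (zm, l), l') := fun zm l l' => rfl
  -- equivariance of encoders
  have hENCeq : ∀ (S : {S // big S}) (n : ℕ) (zm : M S) (t : TT.{u}),
      ENC S (rUA ρ (base S).val (FreeGroup.of n) zm, t) =
        unitPerm (uS S) (uS S) n (ENC S (zm, t)) := by
    intro S n zm t
    rcases t with l | ⟨l, l'⟩
    · rw [hENC1, hENC1]
      show Sum.inl (vS S (rUA ρ (base S).val (FreeGroup.of n) zm, l)) =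
        Sum.inl (permCongrM (vS S) ((rUA ρ (base S).val (FreeGroup.of n)).prodCongr
          (Equiv.refl (Lam.{u}))) (vS S (zm, l)))
      rw [permCongrM_apply, Equiv.symm_apply_apply]
      rfl
    · rw [hENC2, hENC2]
      show Sum.inr (vS S (rUA ρ (base S).val (FreeGroup.of n) zm, l), l') =
        Sum.inr (permCongrM (vS S) ((rUA ρ (base S).val (FreeGroup.of n)).prodCongr
          (Equiv.refl (Lam.{u}))) (vS S (zm, l)), l')
      rw [permCongrM_apply, Equiv.symm_apply_apply]
      rfl
  have hENC0eq1 : ∀ (n : ℕ) (qs : QsT) (z : OA ρ qs.val),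
      ENC0 (Sum.inl ⟨qs, rUA ρ qs.val (FreeGroup.of n) z⟩) =
        unitPerm σ0 (uS Sbig) n (ENC0 (Sum.inl ⟨qs, z⟩)) := by
    intro n qs z
    rw [hENC0a, hENC0a]
    show Sum.inl (v0 (Sum.inl ⟨qs, rUA ρ qs.val (FreeGroup.of n) z⟩)) =
      Sum.inl (permCongrM v0
        ((Equiv.sigmaCongrRight (fun q : QsT => rUA ρ q.val (FreeGroup.of n))).sumCongr
          ((rUA ρ (base Sbig).val (FreeGroup.of n)).prodCongr (Equiv.refl (Lam.{u}))))
        (v0 (Sum.inl ⟨qs, z⟩)))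
    rw [permCongrM_apply, Equiv.symm_apply_apply]
    rfl
  have hENC0eq2 : ∀ (n : ℕ) (zm : M Sbig) (t : TT.{u}),
      ENC0 (Sum.inr (rUA ρ (base Sbig).val (FreeGroup.of n) zm, t)) =
        unitPerm σ0 (uS Sbig) n (ENC0 (Sum.inr (zm, t))) := by
    intro n zm t
    rcases t with l | ⟨l, l'⟩
    · rw [hENC0b, hENC0b]
      show Sum.inl (v0 (Sum.inr (rUA ρ (base Sbig).val (FreeGroup.of n) zm, l))) =
        Sum.inl (permCongrM v0
          ((Equiv.sigmaCongrRight (fun q : QsT => rUA ρ q.val (FreeGroup.of n))).sumCongr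
            ((rUA ρ (base Sbig).val (FreeGroup.of n)).prodCongr (Equiv.refl (Lam.{u}))))
          (v0 (Sum.inr (zm, l))))
      rw [permCongrM_apply, Equiv.symm_apply_apply]
      rfl
    · rw [hENC0c, hENC0c]
      show Sum.inr (vS Sbig (rUA ρ (base Sbig).val (FreeGroup.of n) zm, l), l') =
        Sum.inr (permCongrM (vS Sbig) ((rUA ρ (base Sbig).val (FreeGroup.of n)).prodCongr
          (Equiv.refl (Lam.{u}))) (vS Sbig (zm, l)), l')
      rw [permCongrM_apply, Equiv.symm_apply_apply]
      rfl
  -- index type and permutation families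
  let J : Type u := Option ((Σ S : {S // big S}, {q : QA ρ // cmpA ρ q = S.val}) ⊕
    {S : {S // big S} // S ≠ Sbig})
  let σJ : J → ℕ → Equiv.Perm (Lam.{u}) := fun j => match j with
    | none => σ0
    | some (Sum.inl p) => uS p.1
    | some (Sum.inr p) => uS p.val
  let τJ : J → ℕ → Equiv.Perm (Lam.{u}) := fun j => match j with
    | none => uS Sbig
    | some (Sum.inl p) => uS p.1
    | some (Sum.inr p) => uS p.val
  -- the grand bijection on the sigma type
  have SigExt : ∀ (p p' : Σ q : QA ρ, OA ρ q), p.1 = p'.1 → p.2.val = p'.2.val → p = p' := by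
    rintro ⟨q, z⟩ ⟨q', z'⟩ h1 h2
    dsimp only at h1 h2
    subst h1
    rw [Subtype.ext h2]
  obtain ⟨F, hFeq⟩ : ∃ F : (Σ q : QA ρ, OA ρ q) ≃ (J × TT.{u}),
      ∀ (n : ℕ) (q : QA ρ) (z : OA ρ q), F ⟨q, rUA ρ q (FreeGroup.of n) z⟩ =
        ((F ⟨q, z⟩).1, unitPerm (σJ (F ⟨q, z⟩).1) (τJ (F ⟨q, z⟩).1) n (F ⟨q, z⟩).2) := by
    set toF : (Σ q : QA ρ, OA ρ q) → (J × TT.{u}) := fun p =>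
      if hb : big (cmpA ρ p.1) then
        if hSb : cmpA ρ p.1 = Sbig.val then
          match rS Sbig ⟨p.1, hSb⟩ with
          | Sum.inl kt => (some (Sum.inl ⟨Sbig, kt.1⟩),
              ENC Sbig ((oEA ρ (base Sbig).val p.1 ((base Sbig).2.trans hSb.symm)).symm p.2,
                kt.2))
          | Sum.inr t => (none,
              ENC0 (Sum.inr ((oEA ρ (base Sbig).val p.1
                ((base Sbig).2.trans hSb.symm)).symm p.2, t)))
        else
          match rS ⟨cmpA ρ p.1, hb⟩ ⟨p.1, rfl⟩ with
          | Sum.inl kt => (some (Sum.inl ⟨⟨cmpA ρ p.1, hb⟩, kt.1⟩),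
              ENC ⟨cmpA ρ p.1, hb⟩ ((oEA ρ (base ⟨cmpA ρ p.1, hb⟩).val p.1
                ((base ⟨cmpA ρ p.1, hb⟩).2)).symm p.2, kt.2))
          | Sum.inr t => (some (Sum.inr ⟨⟨cmpA ρ p.1, hb⟩,
              fun he => hSb (congrArg Subtype.val he)⟩),
              ENC ⟨cmpA ρ p.1, hb⟩ ((oEA ρ (base ⟨cmpA ρ p.1, hb⟩).val p.1
                ((base ⟨cmpA ρ p.1, hb⟩).2)).symm p.2, t))
      else (none, ENC0 (Sum.inl ⟨⟨p.1, hb⟩, p.2⟩)) with htoF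
    set invF : (J × TT.{u}) → (Σ q : QA ρ, OA ρ q) := fun p => match p with
      | (none, t) =>
        match ENC0.symm t with
        | Sum.inl sq => ⟨sq.1.val, sq.2⟩
        | Sum.inr mt => ⟨((rS Sbig).symm (Sum.inr mt.2)).val,
            oEA ρ (base Sbig).val ((rS Sbig).symm (Sum.inr mt.2)).val
              ((base Sbig).2.trans ((rS Sbig).symm (Sum.inr mt.2)).2.symm) mt.1⟩
      | (some (Sum.inl p2), t) =>
        ⟨((rS p2.1).symm (Sum.inl (p2.2, ((ENC p2.1).symm t).2))).val,
          oEA ρ (base p2.1).val ((rS p2.1).symm (Sum.inl (p2.2, ((ENC p2.1).symm t).2))).val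
            ((base p2.1).2.trans
              ((rS p2.1).symm (Sum.inl (p2.2, ((ENC p2.1).symm t).2))).2.symm)
            ((ENC p2.1).symm t).1⟩
      | (some (Sum.inr p2), t) =>
        ⟨((rS p2.val).symm (Sum.inr ((ENC p2.val).symm t).2)).val,
          oEA ρ (base p2.val).val ((rS p2.val).symm (Sum.inr ((ENC p2.val).symm t).2)).val
            ((base p2.val).2.trans
              ((rS p2.val).symm (Sum.inr ((ENC p2.val).symm t).2)).2.symm)
            ((ENC p2.val).symm t).1⟩ with hinvF
    have key_big : ∀ (Sv : ULift.{u} (Set (FreeGroup ℕ))) (hSbv : big Sv) (q' : QA ρ)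
        (hq : cmpA ρ q' = Sv) (hSb : ¬ cmpA ρ q' = Sbig.val) (zm : M ⟨Sv, hSbv⟩)
        (hpr : cmpA ρ (base ⟨Sv, hSbv⟩).val = cmpA ρ q'),
        toF ⟨q', oEA ρ (base ⟨Sv, hSbv⟩).val q' hpr zm⟩ =
          (match rS ⟨Sv, hSbv⟩ ⟨q', hq⟩ with
           | Sum.inl kt => (some (Sum.inl ⟨⟨Sv, hSbv⟩, kt.1⟩), ENC ⟨Sv, hSbv⟩ (zm, kt.2))
           | Sum.inr t => (some (Sum.inr ⟨⟨Sv, hSbv⟩, fun he =>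
               hSb (hq.trans (congrArg Subtype.val he))⟩), ENC ⟨Sv, hSbv⟩ (zm, t))) := by
      intro Sv hSbv q' hq hSb zm hpr
      subst hq
      rw [htoF]
      dsimp only
      rw [dif_pos hSbv, dif_neg hSb]
      rcases hsc : rS ⟨cmpA ρ q', hSbv⟩ ⟨q', rfl⟩ with kt | t
      · dsimp only
        have hzm : (oEA ρ (base ⟨cmpA ρ q', hSbv⟩).val q'
            ((base ⟨cmpA ρ q', hSbv⟩).2)).symm
            (oEA ρ (base ⟨cmpA ρ q', hSbv⟩).val q' hpr zm) = zm :=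
          pushA_pushA ρ _ _ hpr zm
        rw [hzm]
      · dsimp only
        have hzm : (oEA ρ (base ⟨cmpA ρ q', hSbv⟩).val q'
            ((base ⟨cmpA ρ q', hSbv⟩).2)).symm
            (oEA ρ (base ⟨cmpA ρ q', hSbv⟩).val q' hpr zm) = zm :=
          pushA_pushA ρ _ _ hpr zm
        rw [hzm]
    refine ⟨⟨toF, invF, ?_, ?_⟩, ?_⟩
    · -- left inverse
      rintro ⟨q, z⟩
      rw [htoF]
      dsimp only
      by_cases hb : big (cmpA ρ q)
      · rw [dif_pos hb]
        by_cases hSb : cmpA ρ q = Sbig.val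
        · rw [dif_pos hSb]
          rcases hsc : rS Sbig ⟨q, hSb⟩ with kt | t
          · obtain ⟨k, t⟩ := kt
            rw [hinvF]
            dsimp only
            rw [Equiv.symm_apply_apply]
            have hq : (rS Sbig).symm (Sum.inl (k, t)) = ⟨q, hSb⟩ := by
              rw [← hsc]
              exact Equiv.symm_apply_apply _ _
            refine SigExt _ _ ?_ ?_
            · exact congrArg Subtype.val hq
            · dsimp only
              rw [oEA_val_congr ρ (base Sbig).val _ q (congrArg Subtype.val hq) _
                ((base Sbig).2.trans hSb.symm)]
              exact congrArg Subtype.val (Equiv.apply_symm_apply _ z)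
          · rw [hinvF]
            dsimp only
            rw [Equiv.symm_apply_apply]
            have hq : (rS Sbig).symm (Sum.inr t) = ⟨q, hSb⟩ := by
              rw [← hsc]
              exact Equiv.symm_apply_apply _ _
            refine SigExt _ _ ?_ ?_
            · exact congrArg Subtype.val hq
            · dsimp only
              rw [oEA_val_congr ρ (base Sbig).val _ q (congrArg Subtype.val hq) _
                ((base Sbig).2.trans hSb.symm)]
              exact congrArg Subtype.val (Equiv.apply_symm_apply _ z)
        · rw [dif_neg hSb]
          rcases hsc : rS ⟨cmpA ρ q, hb⟩ ⟨q, rfl⟩ with kt | t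
          · obtain ⟨k, t⟩ := kt
            rw [hinvF]
            dsimp only
            rw [Equiv.symm_apply_apply]
            have hq : (rS ⟨cmpA ρ q, hb⟩).symm (Sum.inl (k, t)) = ⟨q, rfl⟩ := by
              rw [← hsc]
              exact Equiv.symm_apply_apply _ _
            refine SigExt _ _ ?_ ?_
            · exact congrArg Subtype.val hq
            · dsimp only
              rw [oEA_val_congr ρ (base ⟨cmpA ρ q, hb⟩).val _ q (congrArg Subtype.val hq) _
                ((base ⟨cmpA ρ q, hb⟩).2)]
              exact congrArg Subtype.val (Equiv.apply_symm_apply _ z)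
          · rw [hinvF]
            dsimp only
            rw [Equiv.symm_apply_apply]
            have hq : (rS ⟨cmpA ρ q, hb⟩).symm (Sum.inr t) = ⟨q, rfl⟩ := by
              rw [← hsc]
              exact Equiv.symm_apply_apply _ _
            refine SigExt _ _ ?_ ?_
            · exact congrArg Subtype.val hq
            · dsimp only
              rw [oEA_val_congr ρ (base ⟨cmpA ρ q, hb⟩).val _ q (congrArg Subtype.val hq) _
                ((base ⟨cmpA ρ q, hb⟩).2)]
              exact congrArg Subtype.val (Equiv.apply_symm_apply _ z)
      · rw [dif_neg hb, hinvF]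
        dsimp only
        rw [Equiv.symm_apply_apply]
    · -- right inverse
      rintro ⟨j, t⟩
      rcases j with _ | jj
      · -- none
        obtain ⟨ww, rfl⟩ : ∃ ww, t = ENC0 ww := ⟨ENC0.symm t, (Equiv.apply_symm_apply _ _).symm⟩
        rcases ww with sq | mt
        · rw [hinvF]
          dsimp only
          rw [Equiv.symm_apply_apply]
          dsimp only
          rw [htoF]
          dsimp only
          rw [dif_neg sq.1.2]
        · obtain ⟨zm, t'⟩ := mt
          rw [hinvF]
          dsimp only
          rw [Equiv.symm_apply_apply]
          dsimp only
          rw [htoF]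
          dsimp only
          have hq' : cmpA ρ ((rS Sbig).symm (Sum.inr t')).val = Sbig.val :=
            ((rS Sbig).symm (Sum.inr t')).2
          have hb' : big (cmpA ρ ((rS Sbig).symm (Sum.inr t')).val) := by
            rw [hq']
            exact Sbig.2
          rw [dif_pos hb', dif_pos hq']
          have hsc2 : rS Sbig ⟨((rS Sbig).symm (Sum.inr t')).val, hq'⟩ = Sum.inr t' := by
            rw [show (⟨((rS Sbig).symm (Sum.inr t')).val, hq'⟩ :
              {q : QA ρ // cmpA ρ q = Sbig.val}) = (rS Sbig).symm (Sum.inr t')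
              from Subtype.ext rfl]
            exact Equiv.apply_symm_apply _ _
          rw [hsc2]
          dsimp only
          have hzm : (oEA ρ (base Sbig).val ((rS Sbig).symm (Sum.inr t')).val
              ((base Sbig).2.trans hq'.symm)).symm
              (oEA ρ (base Sbig).val ((rS Sbig).symm (Sum.inr t')).val
                ((base Sbig).2.trans (((rS Sbig).symm (Sum.inr t')).2).symm) zm) = zm :=
            pushA_pushA ρ _ _ ((base Sbig).2.trans (((rS Sbig).symm (Sum.inr t')).2).symm) zm
          rw [hzm]
      · rcases jj with p2 | p2
        · -- some inl
          obtain ⟨S, k⟩ := p2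
          obtain ⟨ww, rfl⟩ : ∃ ww, t = ENC S ww :=
            ⟨(ENC S).symm t, (Equiv.apply_symm_apply _ _).symm⟩
          obtain ⟨zm, t'⟩ := ww
          rw [hinvF]
          dsimp only
          rw [Equiv.symm_apply_apply]
          dsimp only
          by_cases hv : S = Sbig
          · subst hv
            rw [htoF]
            dsimp only
            have hq' : cmpA ρ ((rS Sbig).symm (Sum.inl (k, t'))).val = Sbig.val :=
              ((rS Sbig).symm (Sum.inl (k, t'))).2
            have hb' : big (cmpA ρ ((rS Sbig).symm (Sum.inl (k, t'))).val) := by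
              rw [hq']
              exact Sbig.2
            rw [dif_pos hb', dif_pos hq']
            have hsc2 : rS Sbig ⟨((rS Sbig).symm (Sum.inl (k, t'))).val, hq'⟩ = Sum.inl (k, t') := by
              rw [show (⟨((rS Sbig).symm (Sum.inl (k, t'))).val, hq'⟩ :
                {q : QA ρ // cmpA ρ q = Sbig.val}) = (rS Sbig).symm (Sum.inl (k, t'))
                from Subtype.ext rfl]
              exact Equiv.apply_symm_apply _ _
            rw [hsc2]
            dsimp only
            have hzm : (oEA ρ (base Sbig).val ((rS Sbig).symm (Sum.inl (k, t'))).val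
                ((base Sbig).2.trans hq'.symm)).symm
                (oEA ρ (base Sbig).val ((rS Sbig).symm (Sum.inl (k, t'))).val
                  ((base Sbig).2.trans (((rS Sbig).symm (Sum.inl (k, t'))).2).symm) zm) = zm :=
              pushA_pushA ρ _ _ ((base Sbig).2.trans (((rS Sbig).symm (Sum.inl (k, t'))).2).symm) zm
            rw [hzm]
          · obtain ⟨Sv, hSbv⟩ := S
            have hSb : ¬ cmpA ρ ((rS ⟨Sv, hSbv⟩).symm (Sum.inl (k, t'))).val = Sbig.val := by
              rw [((rS ⟨Sv, hSbv⟩).symm (Sum.inl (k, t'))).2]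
              exact fun he => hv (Subtype.ext he)
            rw [key_big Sv hSbv _ ((rS ⟨Sv, hSbv⟩).symm (Sum.inl (k, t'))).2 hSb zm _]
            have hsc2 : rS ⟨Sv, hSbv⟩ ⟨((rS ⟨Sv, hSbv⟩).symm (Sum.inl (k, t'))).val,
                ((rS ⟨Sv, hSbv⟩).symm (Sum.inl (k, t'))).2⟩ = Sum.inl (k, t') := by
              rw [show (⟨((rS ⟨Sv, hSbv⟩).symm (Sum.inl (k, t'))).val,
                ((rS ⟨Sv, hSbv⟩).symm (Sum.inl (k, t'))).2⟩ :
                {q : QA ρ // cmpA ρ q = Sv}) = (rS ⟨Sv, hSbv⟩).symm (Sum.inl (k, t'))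
                from Subtype.ext rfl]
              exact Equiv.apply_symm_apply _ _
            rw [hsc2]
        · -- some inr
          obtain ⟨S, hne⟩ := p2
          obtain ⟨ww, rfl⟩ : ∃ ww, t = ENC S ww :=
            ⟨(ENC S).symm t, (Equiv.apply_symm_apply _ _).symm⟩
          obtain ⟨zm, t'⟩ := ww
          rw [hinvF]
          dsimp only
          rw [Equiv.symm_apply_apply]
          dsimp only
          obtain ⟨Sv, hSbv⟩ := S
          have hSb : ¬ cmpA ρ ((rS ⟨Sv, hSbv⟩).symm (Sum.inr t')).val = Sbig.val := by
            rw [((rS ⟨Sv, hSbv⟩).symm (Sum.inr t')).2]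
            exact fun he => hne (Subtype.ext he)
          rw [key_big Sv hSbv _ ((rS ⟨Sv, hSbv⟩).symm (Sum.inr t')).2 hSb zm _]
          have hsc2 : rS ⟨Sv, hSbv⟩ ⟨((rS ⟨Sv, hSbv⟩).symm (Sum.inr t')).val,
              ((rS ⟨Sv, hSbv⟩).symm (Sum.inr t')).2⟩ = Sum.inr t' := by
            rw [show (⟨((rS ⟨Sv, hSbv⟩).symm (Sum.inr t')).val,
              ((rS ⟨Sv, hSbv⟩).symm (Sum.inr t')).2⟩ :
              {q : QA ρ // cmpA ρ q = Sv}) = (rS ⟨Sv, hSbv⟩).symm (Sum.inr t')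
              from Subtype.ext rfl]
            exact Equiv.apply_symm_apply _ _
          rw [hsc2]
    · -- the equivariance property
      intro n q z
      simp only [Equiv.coe_fn_mk]
      by_cases hb : big (cmpA ρ q)
      · by_cases hSb : cmpA ρ q = Sbig.val
        · rcases hsc : rS Sbig ⟨q, hSb⟩ with kt | t
          · obtain ⟨k, t⟩ := kt
            have h0 : toF ⟨q, z⟩ = (some (Sum.inl ⟨Sbig, k⟩),
                ENC Sbig ((oEA ρ (base Sbig).val q ((base Sbig).2.trans hSb.symm)).symm z,
                  t)) := by
              rw [htoF]
              dsimp only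
              rw [dif_pos hb, dif_pos hSb, hsc]
            have h1 : toF ⟨q, rUA ρ q (FreeGroup.of n) z⟩ = (some (Sum.inl ⟨Sbig, k⟩),
                ENC Sbig ((oEA ρ (base Sbig).val q ((base Sbig).2.trans hSb.symm)).symm
                  (rUA ρ q (FreeGroup.of n) z), t)) := by
              rw [htoF]
              dsimp only
              rw [dif_pos hb, dif_pos hSb, hsc]
            rw [h0, h1, oEA_symm_comm]
            exact congrArg (Prod.mk _) (hENCeq Sbig n _ t)
          · have h0 : toF ⟨q, z⟩ = (none, ENC0 (Sum.inr
                ((oEA ρ (base Sbig).val q ((base Sbig).2.trans hSb.symm)).symm z, t))) := by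
              rw [htoF]
              dsimp only
              rw [dif_pos hb, dif_pos hSb, hsc]
            have h1 : toF ⟨q, rUA ρ q (FreeGroup.of n) z⟩ = (none, ENC0 (Sum.inr
                ((oEA ρ (base Sbig).val q ((base Sbig).2.trans hSb.symm)).symm
                  (rUA ρ q (FreeGroup.of n) z), t))) := by
              rw [htoF]
              dsimp only
              rw [dif_pos hb, dif_pos hSb, hsc]
            rw [h0, h1, oEA_symm_comm]
            exact congrArg (Prod.mk _) (hENC0eq2 n _ t)
        · rcases hsc : rS ⟨cmpA ρ q, hb⟩ ⟨q, rfl⟩ with kt | t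
          · obtain ⟨k, t⟩ := kt
            have h0 : toF ⟨q, z⟩ = (some (Sum.inl ⟨⟨cmpA ρ q, hb⟩, k⟩),
                ENC ⟨cmpA ρ q, hb⟩ ((oEA ρ (base ⟨cmpA ρ q, hb⟩).val q
                  ((base ⟨cmpA ρ q, hb⟩).2)).symm z, t)) := by
              rw [htoF]
              dsimp only
              rw [dif_pos hb, dif_neg hSb, hsc]
            have h1 : toF ⟨q, rUA ρ q (FreeGroup.of n) z⟩ = (some (Sum.inl ⟨⟨cmpA ρ q, hb⟩, k⟩),
                ENC ⟨cmpA ρ q, hb⟩ ((oEA ρ (base ⟨cmpA ρ q, hb⟩).val q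
                  ((base ⟨cmpA ρ q, hb⟩).2)).symm (rUA ρ q (FreeGroup.of n) z), t)) := by
              rw [htoF]
              dsimp only
              rw [dif_pos hb, dif_neg hSb, hsc]
            rw [h0, h1, oEA_symm_comm]
            exact congrArg (Prod.mk _) (hENCeq _ n _ t)
          · have h0 : toF ⟨q, z⟩ = (some (Sum.inr ⟨⟨cmpA ρ q, hb⟩,
                fun he => hSb (congrArg Subtype.val he)⟩),
                ENC ⟨cmpA ρ q, hb⟩ ((oEA ρ (base ⟨cmpA ρ q, hb⟩).val q
                  ((base ⟨cmpA ρ q, hb⟩).2)).symm z, t)) := by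
              rw [htoF]
              dsimp only
              rw [dif_pos hb, dif_neg hSb, hsc]
            have h1 : toF ⟨q, rUA ρ q (FreeGroup.of n) z⟩ = (some (Sum.inr ⟨⟨cmpA ρ q, hb⟩,
                fun he => hSb (congrArg Subtype.val he)⟩),
                ENC ⟨cmpA ρ q, hb⟩ ((oEA ρ (base ⟨cmpA ρ q, hb⟩).val q
                  ((base ⟨cmpA ρ q, hb⟩).2)).symm (rUA ρ q (FreeGroup.of n) z), t)) := by
              rw [htoF]
              dsimp only
              rw [dif_pos hb, dif_neg hSb, hsc]
            rw [h0, h1, oEA_symm_comm]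
            exact congrArg (Prod.mk _) (hENCeq _ n _ t)
      · have h0 : toF ⟨q, z⟩ = (none, ENC0 (Sum.inl ⟨⟨q, hb⟩, z⟩)) := by
          rw [htoF]
          dsimp only
          rw [dif_neg hb]
        have h1 : toF ⟨q, rUA ρ q (FreeGroup.of n) z⟩ =
            (none, ENC0 (Sum.inl ⟨⟨q, hb⟩, rUA ρ q (FreeGroup.of n) z⟩)) := by
          rw [htoF]
          dsimp only
          rw [dif_neg hb]
        rw [h0, h1]
        exact congrArg (Prod.mk _) (hENC0eq1 n ⟨q, hb⟩ z)
  have Fcongr : ∀ (q q' : QA ρ) (h : q = q') (z : OA ρ q) (z' : OA ρ q'),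
      z.val = z'.val → F ⟨q, z⟩ = F ⟨q', z'⟩ := by
    intro q q' h z z' hv
    subst h
    rw [Subtype.ext hv]
  refine ⟨J, σJ, τJ, (Equiv.sigmaFiberEquiv (qmA ρ)).symm.trans F, ?_⟩
  intro n x
  show F ((Equiv.sigmaFiberEquiv (qmA ρ)).symm (ρ (FreeGroup.of n) x)) = _
  have h1 : (Equiv.sigmaFiberEquiv (qmA ρ)).symm (ρ (FreeGroup.of n) x) =
      ⟨qmA ρ (ρ (FreeGroup.of n) x), ⟨ρ (FreeGroup.of n) x, rfl⟩⟩ := rfl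
  have h2 : F ⟨qmA ρ (ρ (FreeGroup.of n) x), ⟨ρ (FreeGroup.of n) x, rfl⟩⟩ =
      F ⟨qmA ρ x, rUA ρ (qmA ρ x) (FreeGroup.of n) ⟨x, rfl⟩⟩ :=
    Fcongr _ _ (qmA_u ρ _ x) _ _ rfl
  rw [h1]
  exact h2.trans (hFeq _ _ _)

end DirA

theorem C_to_univ {X : Type u} {A : Type v} [Countable A] (w : ℕ → FreeSemigroup A)
    (hX : 𝔠 < #X) (hC : Cw.{u} w) : IsUniversal (Equiv.Perm X) w := by
  classical
  intro g
  set ρ : FreeGroup ℕ →* Equiv.Perm X := FreeGroup.lift g with hρdef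
  have hρg : ∀ n, ρ (FreeGroup.of n) = g n := fun n => by rw [hρdef, FreeGroup.lift_apply_of]
  obtain ⟨J, σJ, τJ, E, hE⟩ := grand ρ hX
  have hall : ∀ j : J, Rlz w (TT.{u}) (unitPerm (σJ j) (τJ j)) := fun j => hC (σJ j) (τJ j)
  have hsig : Rlz w (Σ _ : J, TT.{u})
      (fun n => Equiv.sigmaCongrRight (fun j => unitPerm (σJ j) (τJ j) n)) :=
    rlz_sigma _ hall
  have hfin : Rlz w X g := by
    refine rlz_congr ((Equiv.sigmaEquivProd J (TT.{u})).trans E.symm) ?_ hsig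
    intro n p
    obtain ⟨j, t⟩ := p
    show E.symm (j, unitPerm (σJ j) (τJ j) n t) = g n (E.symm (j, t))
    have h2 := hE n (E.symm (j, t))
    rw [Equiv.apply_symm_apply] at h2
    dsimp only at h2
    rw [← h2, Equiv.symm_apply_apply, hρg]
  exact hfin

end Stmt7

/-- If `2^ℵ₀ < |X| ≤ |Y|`, the universal sequences for `Sym(X)` and `Sym(Y)`
coincide. -/
theorem stmt7 {X Y : Type u} {A : Type*} [Infinite X] [Infinite Y] [Countable A]
    (hcont : Cardinal.continuum < Cardinal.mk X)
    (hXY : Cardinal.mk X ≤ Cardinal.mk Y) :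
    {w : ℕ → FreeSemigroup A | IsUniversal (Equiv.Perm X) w} =
      {w : ℕ → FreeSemigroup A | IsUniversal (Equiv.Perm Y) w} := by
  have hY : Cardinal.continuum < Cardinal.mk Y := lt_of_lt_of_le hcont hXY
  ext w
  simp only [Set.mem_setOf_eq]
  constructor
  · intro h
    exact Stmt7.C_to_univ w hY (Stmt7.univ_to_C w hcont.le h)
  · intro h
    exact Stmt7.C_to_univ w hcont (Stmt7.univ_to_C w hY.le h)
end

section
/- Let S be a countable subsemigroup of I(X, α) acting on an infinite set X with |X| > 2^ℵ₀ and |X| regular, where the blocks of S on X are the sets {x·s : s ∈ S¹} for x ∈ X. Define blocks U, V to be equivalent if there is a bijection φ : U → V commuting with the action of every generator of S. Then some equivalence class of this relation has cardinality |X|. -/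
open Cardinal

def Block {X : Type u} (S : Set (PEquiv X X)) (x : X) : Set X :=
  insert x {y | ∃ f ∈ S, f x = some y}

def BlockRel {X : Type u} (S : Set (PEquiv X X)) (U V : Set X) : Prop :=
  ∃ φ : X → X, Set.BijOn φ U V ∧ ∀ f ∈ S, ∀ u ∈ U, (f u).map φ = f (φ u)

section Aux

variable {X : Type u} (S : Set (PEquiv X X))

/-- Action of `S¹` (indexed by `Option ↥S`). -/
def actS : Option ↥S → X → Option X
  | none, x => some x
  | some f, x => (f : PEquiv X X) x

/-- Invariant of a point. -/
def InvS (x : X) : (Option ↥S → Bool) × (Option ↥S → Option ↥S → Prop) :=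
  (fun m => (actS S m x).isSome, fun m m' => actS S m x = actS S m' x)

lemma mem_block_iff (x u : X) : u ∈ Block S x ↔ ∃ m, actS S m x = some u := by
  constructor
  · rintro (rfl | ⟨f, hf, hfx⟩)
    · exact ⟨none, rfl⟩
    · exact ⟨some ⟨f, hf⟩, hfx⟩
  · rintro ⟨m, hm⟩
    cases m with
    | none => exact Or.inl (Option.some_injective _ hm).symm
    | some f => exact Or.inr ⟨f, f.2, hm⟩

lemma actS_comp (hmul : ∀ f ∈ S, ∀ g ∈ S, f.trans g ∈ S) (k : ↥S) (m : Option ↥S) :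
    ∃ c : ↥S, ∀ z : X, actS S (some c) z = (actS S m z).bind (k : PEquiv X X) := by
  cases m with
  | none => exact ⟨k, fun z => rfl⟩
  | some g =>
    exact ⟨⟨(g : PEquiv X X).trans k, hmul _ g.2 _ k.2⟩, fun z => rfl⟩

lemma blockRel_of_inv_eq (hmul : ∀ f ∈ S, ∀ g ∈ S, f.trans g ∈ S) {x y : X}
    (h : InvS S x = InvS S y) : BlockRel S (Block S x) (Block S y) := by
  have H1 : ∀ m, (actS S m x).isSome = (actS S m y).isSome := fun m =>
    congrFun (congrArg Prod.fst h) m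
  have H2 : ∀ m m', actS S m x = actS S m' x ↔ actS S m y = actS S m' y := fun m m' =>
    iff_of_eq (congrFun (congrFun (congrArg Prod.snd h) m) m')
  classical
  set φ : X → X := fun u =>
    if h : ∃ m, actS S m x = some u then (actS S h.choose y).getD u else u with hφ
  have key : ∀ m u, actS S m x = some u → actS S m y = some (φ u) := by
    intro m u hm
    have he : ∃ m, actS S m x = some u := ⟨m, hm⟩
    have h0 : actS S he.choose x = some u := he.choose_spec
    have hxy : actS S m y = actS S he.choose y :=
      (H2 m he.choose).1 (hm.trans h0.symm)
    have hs : (actS S he.choose y).isSome := by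
      rw [← H1, h0]; rfl
    obtain ⟨w, hw⟩ := Option.isSome_iff_exists.1 hs
    have : φ u = w := by simp [hφ, dif_pos he, hw]
    rw [this, hxy, hw]
  refine ⟨φ, ⟨?_, ?_, ?_⟩, ?_⟩
  · intro u hu
    obtain ⟨m, hm⟩ := (mem_block_iff S x u).1 hu
    exact (mem_block_iff S y (φ u)).2 ⟨m, key m u hm⟩
  · intro u hu u' hu' hφu
    obtain ⟨m, hm⟩ := (mem_block_iff S x u).1 hu
    obtain ⟨m', hm'⟩ := (mem_block_iff S x u').1 hu'
    have : actS S m y = actS S m' y := by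
      rw [key m u hm, key m' u' hm', hφu]
    have := (H2 m m').2 this
    rw [hm, hm'] at this
    exact Option.some_injective _ this
  · intro v hv
    obtain ⟨m, hm⟩ := (mem_block_iff S y v).1 hv
    have hs : (actS S m x).isSome := by rw [H1, hm]; rfl
    obtain ⟨u, hu⟩ := Option.isSome_iff_exists.1 hs
    have := key m u hu
    rw [hm] at this
    exact ⟨u, (mem_block_iff S x u).2 ⟨m, hu⟩, (Option.some_injective _ this).symm⟩
  · intro f hf u hu
    obtain ⟨m, hm⟩ := (mem_block_iff S x u).1 hu
    obtain ⟨c, hc⟩ := actS_comp S hmul ⟨f, hf⟩ m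
    have hcx : actS S (some c) x = f u := by rw [hc, hm]; rfl
    have hcy : actS S (some c) y = f (φ u) := by rw [hc, key m u hm]; rfl
    cases hfu : f u with
    | none =>
      have : actS S (some c) y = none := by
        have hs := H1 (some c)
        rw [hcx, hfu] at hs
        exact Option.not_isSome_iff_eq_none.1 (by simp [← hs])
      rw [← hcy, this]; rfl
    | some w =>
      have hw : actS S (some c) x = some w := by rw [hcx, hfu]
      have := key (some c) w hw
      rw [hcy] at this
      rw [this]; rfl

lemma block_countable (hcount : S.Countable) (x : X) : (Block S x).Countable := by
  have : S.Countable := hcount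
  have hsub : {y | ∃ f ∈ S, f x = some y} ⊆
      (fun f : ↥S => ((f : PEquiv X X) x).getD x) '' Set.univ := by
    rintro y ⟨f, hf, hfx⟩
    exact ⟨⟨f, hf⟩, trivial, by simp [hfx]⟩
  have : {y | ∃ f ∈ S, f x = some y}.Countable := by
    refine Set.Countable.mono hsub (Set.Countable.image ?_ _)
    haveI := hcount.to_subtype
    exact Set.countable_univ
  exact (Set.Countable.insert x this)

lemma arrow_le_continuum {A : Type u} {B : Type v} (hA : #A ≤ ℵ₀)
    (hB : Cardinal.lift.{u} #B ≤ Cardinal.continuum.{max u v}) : #(A → B) ≤ 𝔠 := by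
  rw [mk_arrow]
  have hexp : Cardinal.lift.{v} #A ≤ (ℵ₀ : Cardinal.{max u v}) := by
    have := Cardinal.lift_le.{v}.2 hA
    simpa using this
  calc Cardinal.lift.{u} #B ^ Cardinal.lift.{v} #A ≤ 𝔠 ^ Cardinal.lift.{v} #A :=
      power_le_power_right hB
    _ ≤ 𝔠 ^ (ℵ₀ : Cardinal) := power_le_power_left continuum_ne_zero hexp
    _ = 𝔠 := continuum_power_aleph0

end Aux

/-- If `S` is a countable subsemigroup of `I(X, α)` on an infinite set `X` with
`2^ℵ₀ < |X|` regular, then some equivalence class of blocks has cardinality `|X|`. -/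
theorem stmt8 {X : Type u} [Infinite X] (α : Cardinal.{u})
    (S : Set (PEquiv X X)) (hmul : ∀ f ∈ S, ∀ g ∈ S, f.trans g ∈ S)
    (hcount : S.Countable)
    (hα : ∀ f ∈ S, #{x : X | f x = none} ≤ α ∧ #{y : X | f.symm y = none} ≤ α)
    (hcont : Cardinal.continuum < #X) (hreg : (#X).IsRegular) :
    ∃ x : X, #{B : Set X // (∃ y : X, B = Block S y) ∧ BlockRel S (Block S x) B} = #X := by
  classical
  set b : X → Set X := fun y => Block S y with hb
  -- cardinality of the range of b is #X
  have haleph : ℵ₀ ≤ #X := aleph0_le_mk X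
  have hXcov : (⋃ B : Set.range b, (B : Set X)) = Set.univ := by
    ext z
    simp only [Set.mem_iUnion, Set.mem_univ, iff_true]
    exact ⟨⟨b z, ⟨z, rfl⟩⟩, Set.mem_insert _ _⟩
  have hrange_le : #(Set.range b) ≤ #X := mk_range_le
  have hrange_ge : #X ≤ #(Set.range b) := by
    have h1 : #X ≤ #(Set.range b) * ⨆ B : Set.range b, #(B : Set X) := by
      calc #X = #(⋃ B : Set.range b, (B : Set X)) := by rw [hXcov, mk_univ]
        _ ≤ _ := mk_iUnion_le _
    have h2 : (⨆ B : Set.range b, #(B : Set X)) ≤ ℵ₀ := by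
      refine ciSup_le' fun B => ?_
      obtain ⟨y, hy⟩ := B.2
      have hc' : (↑B : Set X).Countable := hy ▸ block_countable S hcount y
      haveI := hc'.to_subtype
      exact mk_le_aleph0
    have hsup : (⨆ B : Set.range b, #(B : Set X)) ≤ ℵ₀ := h2
    have hb0 : ℵ₀ ≤ #(Set.range b) := by
      by_contra hlt
      push_neg at hlt
      have : #X ≤ ℵ₀ * ℵ₀ := h1.trans (mul_le_mul' hlt.le hsup)
      rw [aleph0_mul_aleph0] at this
      exact absurd (this.trans_lt (aleph0_lt_continuum)) hcont.asymm
    calc #X ≤ #(Set.range b) * ℵ₀ := h1.trans (mul_le_mul' le_rfl hsup)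
      _ ≤ #(Set.range b) * #(Set.range b) := mul_le_mul' le_rfl hb0
      _ = #(Set.range b) := mul_eq_self hb0
  have hrange : #(Set.range b) = #X := le_antisymm hrange_le hrange_ge
  -- countably many invariants up to continuum
  haveI := hcount.to_subtype
  have h2c : (2 : Cardinal) ≤ 𝔠 := by
    refine le_trans ?_ aleph0_le_continuum
    exact_mod_cast (nat_lt_aleph0 2).le
  have hOS : #(Option ↥S) ≤ ℵ₀ := mk_le_aleph0
  set C0 := ((Option ↥S → Bool) × (Option ↥S → Option ↥S → Prop)) with hC0def
  have hA : #(Option ↥S → Bool) ≤ 𝔠 := arrow_le_continuum hOS (by simp [mk_bool]; exact h2c)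
  have hBP : #(Option ↥S → Option ↥S → Prop) ≤ 𝔠 := by
    refine arrow_le_continuum hOS ?_
    have : #(Option ↥S → Prop) ≤ 𝔠 := arrow_le_continuum hOS (by simp [mk_Prop]; exact h2c)
    simpa using this
  have hC0 : #C0 ≤ 𝔠 := by
    have := (mk_prod (α := Option ↥S → Bool) (β := Option ↥S → Option ↥S → Prop))
    rw [hC0def, this, lift_id, lift_id]
    calc #(Option ↥S → Bool) * #(Option ↥S → Option ↥S → Prop) ≤ 𝔠 * 𝔠 :=
        mul_le_mul' hA hBP
      _ = 𝔠 := continuum_mul_self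
  -- the pieces
  set T : C0 → Set (Set X) := fun c => b '' (InvS S ⁻¹' {c}) with hT
  have hcov2 : Set.range b ⊆ ⋃ c, T c := by
    rintro B ⟨y, rfl⟩
    exact Set.mem_iUnion.2 ⟨InvS S y, ⟨y, rfl, rfl⟩⟩
  have hex : ∃ c, ¬ #(T c) < #X := by
    by_contra hall
    push_neg at hall
    have hsmall : #(⋃ c, T c) < #X := by
      refine (mk_iUnion_le T).trans_lt ?_
      exact mul_lt_of_lt hreg.1 (hC0.trans_lt hcont)
        (iSup_lt_of_isRegular hreg (hC0.trans_lt hcont) hall)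
    exact absurd (hrange ▸ (mk_le_mk_of_subset hcov2)) hsmall.not_ge
  obtain ⟨c, hc⟩ := hex
  have hcle : #X ≤ #(T c) := not_lt.1 hc
  have hTr : T c ⊆ Set.range b := by
    rintro B ⟨y, _, rfl⟩; exact ⟨y, rfl⟩
  have hne : (T c).Nonempty := by
    rcases Set.eq_empty_or_nonempty (T c) with he | hne
    · exfalso
      rw [he] at hcle
      simp only [mk_emptyCollection] at hcle
      exact (mk_ne_zero X) (le_zero_iff.1 hcle)
    · exact hne
  obtain ⟨B₀, x, hx, rfl⟩ := hne
  refine ⟨x, le_antisymm ?_ ?_⟩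
  · have hsub : {B : Set X | (∃ y : X, B = Block S y) ∧ BlockRel S (Block S x) B} ⊆
        Set.range b := by
      rintro B ⟨⟨y, rfl⟩, -⟩; exact ⟨y, rfl⟩
    exact (mk_le_mk_of_subset hsub).trans hrange_le
  · have hsub : T c ⊆
        {B : Set X | (∃ y : X, B = Block S y) ∧ BlockRel S (Block S x) B} := by
      rintro B ⟨y, hy, rfl⟩
      refine ⟨⟨y, rfl⟩, blockRel_of_inv_eq S hmul ?_⟩
      exact hx.trans hy.symm
    exact hcle.trans (mk_le_mk_of_subset hsub)
end

section
/- Let w = (w₁, w₂, …) be a sequence of nonempty words over A = {a, b}, and let S_w be the least submonoid of A* satisfying: (1) if wₙ = s v u v s' with s, s' ∈ S_w and u, v ∈ A* then v ∈ S_w; (2) if wₘ = s v t and wₙ = t' v s' with m ≠ n, s, s' ∈ S_w, then v ∈ S_w. If neither the single letter a nor b belongs to S_w, then either every wₙ lies in aA*b and S_w ⊆ aA*b ∪ {ε}, or every wₙ lies in bA*a and S_w ⊆ bA*a ∪ {ε}. -/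
/-- Words over the two-letter alphabet `A = {a, b}` (the free monoid on `Bool`). -/
abbrev Word := FreeMonoid Bool

/-- The letter `a`. -/
def la : Word := FreeMonoid.of true

/-- The letter `b`. -/
def lb : Word := FreeMonoid.of false

/-- A submonoid `S` of `A*` satisfies the two closure conditions with respect to the
sequence `w`: (1) if `wₙ = s v u v s'` with `s, s' ∈ S` then `v ∈ S`; and (2) if
`wₘ = s v t` and `wₙ = t' v s'` with `m ≠ n` and `s, s' ∈ S`, then `v ∈ S`. -/
def ClosedSw (w : ℕ → Word) (S : Submonoid Word) : Prop :=
  (∀ n v u s s', s ∈ S → s' ∈ S → w n = s * v * u * v * s' → v ∈ S) ∧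
  (∀ m n v s s' t t', m ≠ n → s ∈ S → s' ∈ S → w m = s * v * t → w n = t' * v * s' →
    v ∈ S)

/-- Every nonempty word is either a single letter or has the form
`first-letter * middle * last-letter`. -/
lemma word_cases (x : Word) (hx : x ≠ 1) :
    (∃ c, x = FreeMonoid.of c) ∨
      (∃ c v d, x = FreeMonoid.of c * v * FreeMonoid.of d) := by
  rcases hl : FreeMonoid.toList x with _ | ⟨c, t⟩
  · exact absurd (FreeMonoid.toList.injective (by simpa using hl)) hx
  · rcases List.eq_nil_or_concat t with rfl | ⟨t', d, rfl⟩
    · left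
      exact ⟨c, FreeMonoid.toList.injective (by simpa using hl)⟩
    · right
      refine ⟨c, FreeMonoid.ofList t', d, FreeMonoid.toList.injective ?_⟩
      simp [hl]


private lemma bool_ne_iff {d c : Bool} (h : d ≠ c) : d = !c := by
  cases d <;> cases c <;> simp_all

private lemma bool_ne_not {d c : Bool} (h : d ≠ !c) : d = c := by
  cases d <;> cases c <;> simp_all

private lemma bool_three {x c c' : Bool} (h1 : x ≠ c) (h2 : x ≠ c') (h3 : c' ≠ c) :
    False := by
  cases x <;> cases c <;> cases c' <;> simp_all

/-- If neither `a` nor `b` lies in `S_w`, then either every `wₙ` lies in `aA*b` and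
`S_w ⊆ aA*b ∪ {ε}`, or every `wₙ` lies in `bA*a` and `S_w ⊆ bA*a ∪ {ε}`. -/
theorem stmt10 (w : ℕ → Word) (hne : ∀ n, w n ≠ 1)
    (Sw : Submonoid Word) (hcl : ClosedSw w Sw)
    (hleast : ∀ S : Submonoid Word, ClosedSw w S → Sw ≤ S)
    (ha : la ∉ Sw) (hb : lb ∉ Sw) :
    ((∀ n, ∃ v, w n = la * v * lb) ∧ ∀ x ∈ Sw, x = 1 ∨ ∃ v, x = la * v * lb) ∨
    ((∀ n, ∃ v, w n = lb * v * la) ∧ ∀ x ∈ Sw, x = 1 ∨ ∃ v, x = lb * v * la) := by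
  obtain ⟨hcl1, hcl2⟩ := hcl
  have hletter : ∀ c : Bool, FreeMonoid.of c ∉ Sw := by
    intro c; cases c
    · exact hb
    · exact ha
  -- FL: no word starts with the letter with which another word ends
  have FL : ∀ m n c (t t' : Word), m ≠ n → w m = FreeMonoid.of c * t →
      w n = t' * FreeMonoid.of c → False := by
    intro m n c t t' hmn h1 h2
    exact hletter c (hcl2 m n (FreeMonoid.of c) 1 1 t t' hmn (one_mem _) (one_mem _)
      (by simpa using h1) (by simpa using h2))
  -- B: no word starts and ends (length ≥ 2) with the same letter
  have B : ∀ n c (u : Word), w n = FreeMonoid.of c * u * FreeMonoid.of c → False := by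
    intro n c u h
    exact hletter c (hcl1 n (FreeMonoid.of c) u 1 1 (one_mem _) (one_mem _)
      (by simpa using h))
  -- every word has a first letter
  have hF : ∀ n, ∃ c t, w n = FreeMonoid.of c * t := by
    intro n
    rcases word_cases (w n) (hne n) with ⟨c, h⟩ | ⟨c, v, d, h⟩
    · exact ⟨c, 1, by simpa using h⟩
    · exact ⟨c, v * FreeMonoid.of d, by simpa [mul_assoc] using h⟩
  -- no word is a single letter
  have single : ∀ n c, w n = FreeMonoid.of c → False := by
    intro n c h
    rcases word_cases (w (n+1)) (hne (n+1)) with ⟨c', h'⟩ | ⟨c', v, d', h'⟩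
    · have hcc : c' ≠ c := by
        intro he
        rw [he] at h'
        exact FL (n+1) n c 1 1 (by omega) (by simpa using h') (by simpa using h)
      obtain ⟨x, t, hx⟩ := hF (n+2)
      have h1 : x ≠ c := by
        intro he; rw [he] at hx
        exact FL (n+2) n c t 1 (by omega) hx (by simpa using h)
      have h2 : x ≠ c' := by
        intro he; rw [he] at hx
        exact FL (n+2) (n+1) c' t 1 (by omega) hx (by simpa using h')
      exact bool_three h1 h2 hcc
    · have hc' : c' ≠ c := by
        intro he; rw [he] at h'
        exact FL (n+1) n c (v * FreeMonoid.of d') 1 (by omega)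
          (by simpa [mul_assoc] using h') (by simpa using h)
      have hd' : d' ≠ c := by
        intro he; rw [he] at h'
        exact FL n (n+1) c 1 (FreeMonoid.of c' * v) (by omega) (by simpa using h) h'
      have hcd : c' = d' := (bool_ne_iff hc').trans (bool_ne_iff hd').symm
      rw [hcd] at h'
      exact B (n+1) d' v h'
  -- every word has the form c * v * d with d ≠ c
  have shape : ∀ n, ∃ c v d, w n = FreeMonoid.of c * v * FreeMonoid.of d ∧ d ≠ c := by
    intro n
    rcases word_cases (w n) (hne n) with ⟨c, h⟩ | ⟨c, v, d, h⟩
    · exact absurd h (fun h => single n c h)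
    · refine ⟨c, v, d, h, fun he => ?_⟩
      rw [he] at h
      exact B n c v h
  -- all words share the same first letter c and last letter !c
  have key : ∃ c, ∀ n, ∃ v, w n = FreeMonoid.of c * v * FreeMonoid.of (!c) := by
    obtain ⟨c₀, v₀, d₀, h₀, hd₀⟩ := shape 0
    have hd0 : d₀ = !c₀ := bool_ne_iff hd₀
    refine ⟨c₀, fun n => ?_⟩
    rcases eq_or_ne n 0 with rfl | hn
    · exact ⟨v₀, by rw [h₀, hd0]⟩
    obtain ⟨cn, vn, dn, hnn, hdn⟩ := shape n
    have hcn : cn ≠ d₀ := by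
      intro he; rw [he] at hnn
      exact FL n 0 d₀ (vn * FreeMonoid.of dn) (FreeMonoid.of c₀ * v₀) hn
        (by simpa [mul_assoc] using hnn) h₀
    have hc : cn = c₀ := bool_ne_not (hd0 ▸ hcn)
    have hd : dn = !c₀ := hc ▸ bool_ne_iff hdn
    exact ⟨vn, by rw [hnn, hc, hd]⟩
  obtain ⟨c, hc⟩ := key
  -- P: no word contains (element of Sw) followed by the letter !c
  have P : ∀ m (s t : Word), s ∈ Sw → w m = s * FreeMonoid.of (!c) * t → False := by
    intro m s t hs h
    obtain ⟨v, hv⟩ := hc (m+1)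
    exact hletter (!c) (hcl2 m (m+1) (FreeMonoid.of (!c)) s 1 t (FreeMonoid.of c * v)
      (by omega) hs (one_mem _) h (by simp only [hv, mul_assoc, one_mul, mul_one]))
  -- Q: no word contains the letter c followed by an element of Sw
  have Q : ∀ m (t s : Word), s ∈ Sw → w m = t * FreeMonoid.of c * s → False := by
    intro m t s hs h
    obtain ⟨v, hv⟩ := hc (m+1)
    exact hletter c (hcl2 (m+1) m (FreeMonoid.of c) 1 s (v * FreeMonoid.of (!c)) t
      (by omega) (one_mem _) hs (by simp only [hv, mul_assoc, one_mul, mul_one]) h)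
  -- the submonoid of words of the form c * v * !c (plus the empty word)
  set T : Submonoid Word :=
    { carrier := {x | x = 1 ∨ ∃ v, x = FreeMonoid.of c * v * FreeMonoid.of (!c)}
      one_mem' := Or.inl rfl
      mul_mem' := by
        rintro x y (rfl | ⟨v, rfl⟩) (rfl | ⟨v', rfl⟩)
        · exact Or.inl (one_mul 1)
        · exact Or.inr ⟨v', by rw [one_mul]⟩
        · exact Or.inr ⟨v, by rw [mul_one]⟩
        · exact Or.inr ⟨v * FreeMonoid.of (!c) * (FreeMonoid.of c * v'),
            by simp [mul_assoc]⟩ } with hT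
  have hmemT : ∀ x : Word, x ∈ T ↔
      (x = 1 ∨ ∃ v, x = FreeMonoid.of c * v * FreeMonoid.of (!c)) := fun x => Iff.rfl
  -- T ⊓ Sw is closed
  have hclosed : ClosedSw w (Sw ⊓ T) := by
    constructor
    · intro n vv u s s' hs hs' h
      obtain ⟨hs1, _⟩ := Submonoid.mem_inf.mp hs
      obtain ⟨hs'1, _⟩ := Submonoid.mem_inf.mp hs'
      have hvSw : vv ∈ Sw := hcl1 n vv u s s' hs1 hs'1 h
      refine Submonoid.mem_inf.mpr ⟨hvSw, (hmemT vv).mpr ?_⟩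
      by_cases hv1 : vv = 1
      · exact Or.inl hv1
      rcases word_cases vv hv1 with ⟨x, rfl⟩ | ⟨x, v₁, y, rfl⟩
      · exfalso
        by_cases hx : x = c
        · rw [hx] at h
          exact Q n (s * FreeMonoid.of c * u) s' hs'1 (by simp only [h, mul_assoc])
        · have hx' : x = !c := bool_ne_iff hx
          rw [hx'] at h
          exact P n s (u * FreeMonoid.of (!c) * s') hs1 (by simp only [h, mul_assoc])
      · have hx : x = c := by
          by_contra hx
          have hx' : x = !c := bool_ne_iff hx
          rw [hx'] at h
          exact P n s
            (v₁ * FreeMonoid.of y * u * (FreeMonoid.of (!c) * v₁ * FreeMonoid.of y) * s')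
            hs1 (by simp only [h, mul_assoc])
        have hy : y = !c := by
          by_contra hy
          have hy' : y = c := bool_ne_not hy
          rw [hy'] at h
          exact Q n (s * (FreeMonoid.of x * v₁ * FreeMonoid.of c) * u * FreeMonoid.of x * v₁)
            s' hs'1 (by simp only [h, mul_assoc])
        exact Or.inr ⟨v₁, by rw [hx, hy]⟩
    · intro m n vv s s' t t' hmn hs hs' h1 h2
      obtain ⟨hs1, _⟩ := Submonoid.mem_inf.mp hs
      obtain ⟨hs'1, _⟩ := Submonoid.mem_inf.mp hs'
      have hvSw : vv ∈ Sw := hcl2 m n vv s s' t t' hmn hs1 hs'1 h1 h2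
      refine Submonoid.mem_inf.mpr ⟨hvSw, (hmemT vv).mpr ?_⟩
      by_cases hv1 : vv = 1
      · exact Or.inl hv1
      rcases word_cases vv hv1 with ⟨x, rfl⟩ | ⟨x, v₁, y, rfl⟩
      · exfalso
        by_cases hx : x = c
        · rw [hx] at h2
          exact Q n t' s' hs'1 h2
        · have hx' : x = !c := bool_ne_iff hx
          rw [hx'] at h1
          exact P m s t hs1 h1
      · have hx : x = c := by
          by_contra hx
          have hx' : x = !c := bool_ne_iff hx
          rw [hx'] at h1
          exact P m s (v₁ * FreeMonoid.of y * t) hs1 (by simp only [h1, mul_assoc])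
        have hy : y = !c := by
          by_contra hy
          have hy' : y = c := bool_ne_not hy
          rw [hy'] at h2
          exact Q n (t' * (FreeMonoid.of x * v₁)) s' hs'1 (by simp only [h2, mul_assoc])
        exact Or.inr ⟨v₁, by rw [hx, hy]⟩
  have hsub : Sw ≤ Sw ⊓ T := hleast _ hclosed
  have hmem : ∀ x ∈ Sw, x = 1 ∨ ∃ v, x = FreeMonoid.of c * v * FreeMonoid.of (!c) :=
    fun x hx => (hmemT x).mp (Submonoid.mem_inf.mp (hsub hx)).2
  cases c with
  | true =>
    left
    constructor
    · intro n
      obtain ⟨v, hv⟩ := hc n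
      exact ⟨v, by simpa [la, lb] using hv⟩
    · intro x hx
      rcases hmem x hx with h1 | ⟨v, hv⟩
      · exact Or.inl h1
      · exact Or.inr ⟨v, by simpa [la, lb] using hv⟩
  | false =>
    right
    constructor
    · intro n
      obtain ⟨v, hv⟩ := hc n
      exact ⟨v, by simpa [la, lb] using hv⟩
    · intro x hx
      rcases hmem x hx with h1 | ⟨v, hv⟩
      · exact Or.inl h1
      · exact Or.inr ⟨v, by simpa [la, lb] using hv⟩
end

section
/- Let w = (w₁, w₂, …) be a sequence of nonempty words over A = {a, b} such that no wₙ can be written as wₙ = s t v with s t ∈ S_w and t v ∈ S_w (s, t, v ∈ A*). Then for each n, writing pₙ for the longest prefix of wₙ in S_w and sₙ for the longest suffix of wₙ in S_w, there exists a nonempty word uₙ with wₙ = pₙ uₙ sₙ. -/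
/-- List-level dichotomy: a prefix `p` and a suffix `s` of `l` either overlap
(or abut), yielding `l = x ++ t ++ v` with `p = x ++ t`, `s = t ++ v`, or they
leave a nonempty middle. -/
lemma list_dichotomy (l p s : List Bool) (r r' : List Bool)
    (hp : l = p ++ r) (hs : l = r' ++ s) :
    (∃ x t v, l = x ++ (t ++ v) ∧ p = x ++ t ∧ s = t ++ v) ∨
    (∃ u : List Bool, u ≠ [] ∧ l = p ++ (u ++ s)) := by
  have hpl : p = l.take p.length := by rw [hp]; simp
  have hsl : s = l.drop r'.length := by rw [hs]; simp
  have hr'le : r'.length ≤ l.length := by rw [hs]; simp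
  have hple : p.length ≤ l.length := by rw [hp]; simp
  by_cases hcase : r'.length ≤ p.length
  · left
    set j := r'.length
    set k := p.length with hk
    set t := (l.drop j).take (k - j) with ht
    have hA : l.take k = l.take j ++ t := by
      conv_lhs => rw [← List.take_append_drop j (l.take k)]
      rw [List.take_take, Nat.min_eq_left hcase, List.drop_take]
    have hB : l.drop j = t ++ l.drop k := by
      conv_lhs => rw [← List.take_append_drop (k - j) (l.drop j)]
      rw [List.drop_drop]
      congr 2
      omega
    refine ⟨l.take j, t, l.drop k, ?_, ?_, ?_⟩
    · rw [← hB]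
      exact (List.take_append_drop j l).symm
    · exact hpl.trans hA
    · exact hsl.trans hB
  · right
    push_neg at hcase
    refine ⟨(l.drop p.length).take (r'.length - p.length), ?_, ?_⟩
    · have hlen : ((l.drop p.length).take (r'.length - p.length)).length
          = r'.length - p.length := by
        simp
        omega
      intro h
      rw [h] at hlen
      simp at hlen
      omega
    · have hB : l.drop p.length
          = (l.drop p.length).take (r'.length - p.length) ++ s := by
        conv_lhs => rw [← List.take_append_drop (r'.length - p.length) (l.drop p.length)]
        rw [List.drop_drop, hsl]
        congr 2
        omega
      conv_lhs => rw [← List.take_append_drop p.length l, ← hpl, hB]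

/-- If no `wₙ` factors as `s t v` with `s t ∈ S_w` and `t v ∈ S_w`, then the longest
`S_w`-prefix `p` and the longest `S_w`-suffix `s` of `wₙ` leave a nonempty middle:
`wₙ = p u s` with `u ≠ ε`. -/
theorem stmt11 (w : ℕ → Word) (hne : ∀ n, w n ≠ 1)
    (Sw : Submonoid Word) (hcl : ClosedSw w Sw)
    (hleast : ∀ S : Submonoid Word, ClosedSw w S → Sw ≤ S)
    (hno : ∀ n s t v, w n = s * t * v → s * t ∈ Sw → t * v ∈ Sw → False)
    (n : ℕ) (p s : Word)
    (hpmem : p ∈ Sw) (hppre : ∃ r, w n = p * r)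
    (hpmax : ∀ q ∈ Sw, (∃ r, w n = q * r) → q.length ≤ p.length)
    (hsmem : s ∈ Sw) (hssuf : ∃ r, w n = r * s)
    (hsmax : ∀ q ∈ Sw, (∃ r, w n = r * q) → q.length ≤ s.length) :
    ∃ u : Word, u ≠ 1 ∧ w n = p * u * s := by
  obtain ⟨r, hr⟩ := hppre
  obtain ⟨r', hr'⟩ := hssuf
  have key := list_dichotomy (FreeMonoid.toList (w n)) (FreeMonoid.toList p)
    (FreeMonoid.toList s) (FreeMonoid.toList r) (FreeMonoid.toList r')
    (by rw [hr]; rfl) (by rw [hr']; rfl)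
  rcases key with ⟨x, t, v, hl, hpxt, hstv⟩ | ⟨u, hu, hl⟩
  · exfalso
    refine hno n (FreeMonoid.ofList x) (FreeMonoid.ofList t) (FreeMonoid.ofList v) ?_ ?_ ?_
    · apply FreeMonoid.toList.injective
      rw [hl]; simp [FreeMonoid.toList_mul, List.append_assoc]
    · have h : p = FreeMonoid.ofList x * FreeMonoid.ofList t := by
        apply FreeMonoid.toList.injective
        rw [FreeMonoid.toList_mul]; exact hpxt
      rwa [← h]
    · have h : s = FreeMonoid.ofList t * FreeMonoid.ofList v := by
        apply FreeMonoid.toList.injective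
        rw [FreeMonoid.toList_mul]; exact hstv
      rwa [← h]
  · refine ⟨FreeMonoid.ofList u, ?_, ?_⟩
    · intro h
      apply hu
      simpa using congrArg FreeMonoid.toList h
    · apply FreeMonoid.toList.injective
      simp only [FreeMonoid.toList_mul]
      rw [hl]
      simp [List.append_assoc]
end

section
/- Under the hypotheses of Theorem 3.2 (with S_w ⊆ aA*b ∪ {ε} and T an irredundant generating set for S_w with ε ∉ T): for every v ∈ T there exist t, t' ∈ S_w and n, m ∈ ℕ such that t v is a prefix of pₙ and v t' is a suffix of sₘ, where pₖ and sₖ denote the longest prefix and longest suffix of wₖ belonging to S_w. -/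

lemma word_pref {a b c d : Word} (h : a * b = c * d) (hl : c.length ≤ a.length) :
    ∃ r : Word, a = c * r := by
  have h' : FreeMonoid.toList a ++ FreeMonoid.toList b
      = FreeMonoid.toList c ++ FreeMonoid.toList d := by
    simpa [FreeMonoid.toList_mul] using congrArg FreeMonoid.toList h
  have h1 : FreeMonoid.toList c <+: FreeMonoid.toList a ++ FreeMonoid.toList b := by
    rw [h']; exact List.prefix_append _ _
  have h2 : FreeMonoid.toList a <+: FreeMonoid.toList a ++ FreeMonoid.toList b :=
    List.prefix_append _ _
  obtain ⟨r, hr⟩ := List.prefix_of_prefix_length_le h1 h2 hl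
  exact ⟨FreeMonoid.ofList r, FreeMonoid.toList.injective (by
    simpa [FreeMonoid.toList_mul] using hr.symm)⟩

lemma word_suff {a b c d : Word} (h : a * b = c * d) (hl : d.length ≤ b.length) :
    ∃ r : Word, b = r * d := by
  have h' : FreeMonoid.toList a ++ FreeMonoid.toList b
      = FreeMonoid.toList c ++ FreeMonoid.toList d := by
    simpa [FreeMonoid.toList_mul] using congrArg FreeMonoid.toList h
  have h1 : FreeMonoid.toList d <:+ FreeMonoid.toList a ++ FreeMonoid.toList b := by
    rw [h']; exact List.suffix_append _ _
  have h2 : FreeMonoid.toList b <:+ FreeMonoid.toList a ++ FreeMonoid.toList b :=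
    List.suffix_append _ _
  obtain ⟨r, hr⟩ := List.suffix_of_suffix_length_le h1 h2 hl
  exact ⟨FreeMonoid.ofList r, FreeMonoid.toList.injective (by
    simpa [FreeMonoid.toList_mul] using hr.symm)⟩

/-- Under the hypotheses of Theorem 3.2: every element `v` of the irredundant
generating set `T` of `S_w` occurs with `t v` a prefix of some `pₙ` and `v t`
a suffix of some `sₘ`, for `t, t ∈ S_w`. -/
theorem stmt13
    (w : ℕ → Word) (hne : ∀ n, w n ≠ 1)
    (Sw : Submonoid Word) (hcl : ClosedSw w Sw)
    (hleast : ∀ S : Submonoid Word, ClosedSw w S → Sw ≤ S)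
    (hno : ∀ n s t v, w n = s * t * v → s * t ∈ Sw → t * v ∈ Sw → False)
    (hab : ∀ n, ∃ v, w n = la * v * lb)
    (hSwab : ∀ x ∈ Sw, x = 1 ∨ ∃ v, x = la * v * lb)
    (p u s : ℕ → Word)
    (hfact : ∀ n, w n = p n * u n * s n)
    (hpmem : ∀ n, p n ∈ Sw) (hsmem : ∀ n, s n ∈ Sw)
    (hpmax : ∀ n, ∀ q ∈ Sw, (∃ r, w n = q * r) → q.length ≤ (p n).length)
    (hsmax : ∀ n, ∀ q ∈ Sw, (∃ r, w n = r * q) → q.length ≤ (s n).length)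
    (hsubw : ∀ n m, (∃ x y, w m = x * u n * y) ↔ n = m)
    (hnpsub : ∀ n, ¬ ∃ x y, p n = x * u n * y)
    (T : Set Word) (hT1 : (1 : Word) ∉ T)
    (hTsub : T ⊆ (Sw : Set Word))
    (hTgen : Submonoid.closure T = Sw)
    (hTirr : ∀ v ∈ T, v ∉ Submonoid.closure (T \ {v}))
    (hTflank : ∀ v ∈ T,
      (∃ n x t t', t ∈ Sw ∧ t' ∈ Sw ∧ w n = t * v * x * v * t') ∨
      (∃ n m x x' t t', n ≠ m ∧ t ∈ Sw ∧ t' ∈ Sw ∧ w n = t * v * x ∧ w m = x' * v * t'))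
    :
    ∀ v ∈ T, ∃ t t' n m, t ∈ Sw ∧ t' ∈ Sw ∧
      (∃ r, p n = t * v * r) ∧ (∃ r, s m = r * v * t') := by
  intro v hv
  have hvS : v ∈ Sw := hTsub hv
  rcases hTflank v hv with ⟨n, x, t, t', ht, ht', heq⟩ | ⟨n, m, x, x', t, t', _, ht, ht', heq1, heq2⟩
  · refine ⟨t, t', n, n, ht, ht', ?_, ?_⟩
    · have htv : t * v ∈ Sw := mul_mem ht hvS
      have hl : (t * v).length ≤ (p n).length :=
        hpmax n (t * v) htv ⟨x * v * t', by rw [heq]; simp [mul_assoc]⟩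
      have heq' : (t * v) * (x * v * t') = p n * (u n * s n) := by
        simp only [← mul_assoc]; rw [← heq]; exact hfact n
      obtain ⟨r, hr⟩ := word_pref heq'.symm hl
      exact ⟨r, by rw [hr, mul_assoc]⟩
    · have hvt : v * t' ∈ Sw := mul_mem hvS ht'
      have hl : (v * t').length ≤ (s n).length :=
        hsmax n (v * t') hvt ⟨t * v * x, by rw [heq]; simp [mul_assoc]⟩
      have heq' : (p n * u n) * s n = (t * v * x) * (v * t') := by
        simp only [← mul_assoc]; rw [← heq]; exact (hfact n).symm
      obtain ⟨r, hr⟩ := word_suff heq' hl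
      exact ⟨r, by rw [hr, mul_assoc]⟩
  · refine ⟨t, t', n, m, ht, ht', ?_, ?_⟩
    · have htv : t * v ∈ Sw := mul_mem ht hvS
      have hl : (t * v).length ≤ (p n).length :=
        hpmax n (t * v) htv ⟨x, by rw [heq1]⟩
      have heq' : (t * v) * x = p n * (u n * s n) := by
        rw [← heq1, hfact n, mul_assoc]
      obtain ⟨r, hr⟩ := word_pref heq'.symm hl
      exact ⟨r, by rw [hr, mul_assoc]⟩
    · have hvt : v * t' ∈ Sw := mul_mem hvS ht'
      have hl : (v * t').length ≤ (s m).length :=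
        hsmax m (v * t') hvt ⟨x', by rw [heq2]; simp [mul_assoc]⟩
      have heq' : (p m * u m) * s m = x' * (v * t') := by
        simp only [← mul_assoc]; rw [← heq2]; exact (hfact m).symm
      obtain ⟨r, hr⟩ := word_suff heq' hl
      exact ⟨r, by rw [hr, mul_assoc]⟩
end

section
/- Under the hypotheses of Theorem 3.2: for every v, v' in the irredundant generating set T of S_w, if a nonempty prefix q of v is a suffix of v', then q = v = v'. In particular distinct elements of T have no nonempty prefix–suffix overlap, and no element of T properly overlaps itself. -/
/-- If `a * u = c * v` and `a` is no longer than `c`, then `a` is a prefix of `c`. -/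
lemma word_pref_split (a u c v : Word) (h : a * u = c * v) (hl : a.length ≤ c.length) :
    ∃ e : Word, c = a * e := by
  have h' : a.toList ++ u.toList = c.toList ++ v.toList := congrArg FreeMonoid.toList h
  have h1 : a.toList <+: c.toList ++ v.toList := ⟨u.toList, h'⟩
  have h2 : c.toList <+: c.toList ++ v.toList := ⟨v.toList, rfl⟩
  obtain ⟨e, he⟩ := List.prefix_of_prefix_length_le h1 h2 hl
  exact ⟨FreeMonoid.ofList e, FreeMonoid.toList.injective he.symm⟩

/-- If `u * a = v * c` and `a` is no longer than `c`, then `a` is a suffix of `c`. -/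
lemma word_suff_split (u a v c : Word) (h : u * a = v * c) (hl : a.length ≤ c.length) :
    ∃ e : Word, c = e * a := by
  have h' : u.toList ++ a.toList = v.toList ++ c.toList := congrArg FreeMonoid.toList h
  have h1 : a.toList <:+ v.toList ++ c.toList := ⟨u.toList, h'⟩
  have h2 : c.toList <:+ v.toList ++ c.toList := ⟨v.toList, rfl⟩
  obtain ⟨e, he⟩ := List.suffix_of_suffix_length_le h1 h2 hl
  exact ⟨FreeMonoid.ofList e, FreeMonoid.toList.injective he.symm⟩

/-- Under the hypotheses of Theorem 3.2: if a nonempty prefix `q` of `v ∈ T` is a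
suffix of `v ∈ T`, then `q = v = v`. -/
theorem stmt15
    (w : ℕ → Word) (hne : ∀ n, w n ≠ 1)
    (Sw : Submonoid Word) (hcl : ClosedSw w Sw)
    (hleast : ∀ S : Submonoid Word, ClosedSw w S → Sw ≤ S)
    (hno : ∀ n s t v, w n = s * t * v → s * t ∈ Sw → t * v ∈ Sw → False)
    (hab : ∀ n, ∃ v, w n = la * v * lb)
    (hSwab : ∀ x ∈ Sw, x = 1 ∨ ∃ v, x = la * v * lb)
    (p u s : ℕ → Word)
    (hfact : ∀ n, w n = p n * u n * s n)
    (hpmem : ∀ n, p n ∈ Sw) (hsmem : ∀ n, s n ∈ Sw)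
    (hpmax : ∀ n, ∀ q ∈ Sw, (∃ r, w n = q * r) → q.length ≤ (p n).length)
    (hsmax : ∀ n, ∀ q ∈ Sw, (∃ r, w n = r * q) → q.length ≤ (s n).length)
    (hsubw : ∀ n m, (∃ x y, w m = x * u n * y) ↔ n = m)
    (hnpsub : ∀ n, ¬ ∃ x y, p n = x * u n * y)
    (T : Set Word) (hT1 : (1 : Word) ∉ T)
    (hTsub : T ⊆ (Sw : Set Word))
    (hTgen : Submonoid.closure T = Sw)
    (hTirr : ∀ v ∈ T, v ∉ Submonoid.closure (T \ {v}))
    (hTflank : ∀ v ∈ T,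
      (∃ n x t t', t ∈ Sw ∧ t' ∈ Sw ∧ w n = t * v * x * v * t') ∨
      (∃ n m x x' t t', n ≠ m ∧ t ∈ Sw ∧ t' ∈ Sw ∧ w n = t * v * x ∧ w m = x' * v * t'))
    :
    ∀ v ∈ T, ∀ v' ∈ T, ∀ q : Word, q ≠ 1 →
      (∃ r, v = q * r) → (∃ r', v' = r' * q) → q = v ∧ v = v' := by
  obtain ⟨hcl1, hcl2⟩ := hcl
  -- Key lemma: a word that occurs left-flanked (inside an `Sw`-prefix of some `w n`)
  -- and right-flanked (inside an `Sw`-suffix of some `w m`) belongs to `Sw`.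
  have key : ∀ q : Word,
      (∃ n t e z, t ∈ Sw ∧ t * q * e ∈ Sw ∧ w n = t * q * e * z) →
      (∃ m t'' e' z', t'' ∈ Sw ∧ e' * q * t'' ∈ Sw ∧ w m = z' * (e' * q * t'')) →
      q ∈ Sw := by
    intro q ⟨n, t, e, z, ht, hte, hwn⟩ ⟨m, t'', e', z', ht'', he', hwm⟩
    by_cases hnm : n = m
    · subst hnm
      -- the left occurrence lies inside `p n`
      have hlen1 : (t * q * e).length ≤ (p n).length :=
        hpmax n (t * q * e) hte ⟨z, hwn⟩
      obtain ⟨ρ, hρ⟩ : ∃ ρ, p n = t * q * e * ρ := by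
        refine word_pref_split (t * q * e) z (p n) (u n * s n) ?_ hlen1
        rw [← hwn, hfact n, mul_assoc]
      -- the right occurrence lies inside `s n`
      have hlen2 : (e' * q * t'').length ≤ (s n).length :=
        hsmax n (e' * q * t'') he' ⟨z', hwm⟩
      obtain ⟨σ, hσ⟩ : ∃ σ, s n = σ * (e' * q * t'') := by
        refine word_suff_split z' (e' * q * t'') (p n * u n) (s n) ?_ hlen2
        rw [← hwm, hfact n, mul_assoc]
      refine hcl1 n q (e * ρ * u n * σ * e') t t'' ht ht'' ?_
      rw [hfact n, hρ, hσ]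
      simp only [mul_assoc]
    · refine hcl2 n m q t t'' (e * z) (z' * e') hnm ht ht'' ?_ ?_
      · rw [hwn]; simp only [mul_assoc]
      · rw [hwm]; simp only [mul_assoc]
  -- Every element of `T` occurs left-flanked and right-flanked in the sequence.
  have flank : ∀ v ∈ T,
      (∃ n t z, t ∈ Sw ∧ w n = t * v * z) ∧ (∃ m y t', t' ∈ Sw ∧ w m = y * v * t') := by
    intro v hv
    rcases hTflank v hv with ⟨n, x, t, t', ht, ht', h⟩ |
      ⟨n, m, x, x', t, t', hnm, ht, ht', h1, h2⟩
    · exact ⟨⟨n, t, x * v * t', ht, by rw [h]; simp only [mul_assoc]⟩,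
        ⟨n, t * v * x, t', ht', by rw [h]⟩⟩
    · exact ⟨⟨n, t, x, ht, h1⟩, ⟨m, x', t', ht', h2⟩⟩
  -- Elements of `Sw` shorter than `v₀` lie in the submonoid generated by `T \ {v₀}`.
  have hclos : ∀ v₀ : Word, ∀ x ∈ Sw, x.length < v₀.length →
      x ∈ Submonoid.closure (T \ {v₀}) := by
    intro v₀ x hx
    rw [← hTgen] at hx
    induction hx using Submonoid.closure_induction with
    | mem g hg =>
      intro hlen
      refine Submonoid.subset_closure ⟨hg, ?_⟩
      simp only [Set.mem_singleton_iff]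
      rintro rfl
      exact lt_irrefl _ hlen
    | one => intro _; exact one_mem _
    | mul x y hx hy ihx ihy =>
      intro hlen
      rw [FreeMonoid.length_mul] at hlen
      exact mul_mem (ihx (lt_of_le_of_lt (Nat.le_add_right _ _) hlen))
        (ihy (lt_of_le_of_lt (Nat.le_add_left _ _) hlen))
  rintro v hv v' hv' q hq ⟨r, hr⟩ ⟨r', hr'⟩
  obtain ⟨⟨n, t, z, ht, hL⟩, ⟨m, y, t', ht', hR⟩⟩ := flank v hv
  obtain ⟨⟨n₂, t₂, z₂, ht₂, hL'⟩, ⟨m₂, y₂, t₃, ht₃, hR'⟩⟩ := flank v' hv'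
  have hvS : v ∈ Sw := hTsub hv
  have hv'S : v' ∈ Sw := hTsub hv'
  -- `q ∈ Sw`
  have hqS : q ∈ Sw := by
    refine key q ⟨n, t, r, z, ht, ?_, ?_⟩ ⟨m₂, t₃, r', y₂, ht₃, ?_, ?_⟩
    · rw [mul_assoc, ← hr]; exact mul_mem ht hvS
    · rw [hL, hr]; simp only [mul_assoc]
    · rw [← hr']; exact mul_mem hv'S ht₃
    · rw [hR', hr']; simp only [mul_assoc]
  -- `r ∈ Sw`
  have hrS : r ∈ Sw := by
    refine key r ⟨n, t * q, 1, z, mul_mem ht hqS, ?_, ?_⟩ ⟨m, t', q, y, ht', ?_, ?_⟩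
    · rw [mul_one, mul_assoc, ← hr]; exact mul_mem ht hvS
    · rw [hL, hr]; simp only [mul_one, mul_assoc]
    · rw [← hr]; exact mul_mem hvS ht'
    · rw [hR, hr]; simp only [mul_assoc]
  -- `r' ∈ Sw`
  have hr'S : r' ∈ Sw := by
    refine key r' ⟨n₂, t₂, q, z₂, ht₂, ?_, ?_⟩ ⟨m₂, q * t₃, 1, y₂, mul_mem hqS ht₃, ?_, ?_⟩
    · rw [mul_assoc, ← hr']; exact mul_mem ht₂ hv'S
    · rw [hL', hr']; simp only [mul_assoc]
    · rw [one_mul, ← mul_assoc, ← hr']; exact mul_mem hv'S ht₃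
    · rw [hR', hr']; simp only [one_mul, mul_assoc]
  have hqpos : 0 < q.length := by
    rcases Nat.eq_zero_or_pos q.length with h0 | h0
    · exact absurd (FreeMonoid.length_eq_zero.mp h0) hq
    · exact h0
  -- `r = 1`
  have hr1 : r = 1 := by
    by_contra hr1
    have hrpos : 0 < r.length := by
      rcases Nat.eq_zero_or_pos r.length with h0 | h0
      · exact absurd (FreeMonoid.length_eq_zero.mp h0) hr1
      · exact h0
    have hvlen : v.length = q.length + r.length := by rw [hr, FreeMonoid.length_mul]
    have : q * r ∈ Submonoid.closure (T \ {v}) :=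
      mul_mem (hclos v q hqS (by omega)) (hclos v r hrS (by omega))
    rw [← hr] at this
    exact hTirr v hv this
  -- `r' = 1`
  have hr'1 : r' = 1 := by
    by_contra hr'1
    have hr'pos : 0 < r'.length := by
      rcases Nat.eq_zero_or_pos r'.length with h0 | h0
      · exact absurd (FreeMonoid.length_eq_zero.mp h0) hr'1
      · exact h0
    have hv'len : v'.length = r'.length + q.length := by rw [hr', FreeMonoid.length_mul]
    have : r' * q ∈ Submonoid.closure (T \ {v'}) :=
      mul_mem (hclos v' r' hr'S (by omega)) (hclos v' q hqS (by omega))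
    rw [← hr'] at this
    exact hTirr v' hv' this
  have h1 : q = v := by rw [hr, hr1, mul_one]
  have h2 : v' = q := by rw [hr', hr'1, one_mul]
  exact ⟨h1, h1 ▸ h2.symm ▸ rfl⟩
end

section
/- Let X be an infinite set and let w₁, w₂, … be nonempty words over a two-letter alphabet A = {a, b} such that (i) no proper prefix of any wₙ is a suffix of any wₘ, and (ii) wₙ is not a subword of wₘ for n ≠ m. Then (w₁, w₂, …) is a universal sequence for the full transformation monoid X^X: for every sequence f₁, f₂, … ∈ X^X there is a semigroup homomorphism Φ : A⁺ → X^X with Φ(wₙ) = fₙ for all n. -/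
section Aux

variable {X : Type*} (w : ℕ → FreeMonoid Bool) (f : ℕ → Function.End X)
  (θ : X ≃ X × List Bool)

open scoped Classical in
/-- One step of the automaton: prepend the letter to the history; if some `w m`
(in word order) is now a prefix of the history, fire `f m` on the decoded state. -/
noncomputable def stepAux (c : Bool) : Function.End (X × List Bool) := fun z =>
  if H : ∃ m r, c :: z.2 = FreeMonoid.toList (w m) ++ r then
    θ (f H.choose (θ.symm (z.1, H.choose_spec.choose)))
  else (z.1, c :: z.2)

noncomputable def sigAux : FreeMonoid Bool →* Function.End (X × List Bool) :=
  FreeMonoid.lift (stepAux w f θ)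

end Aux

theorem freeMonoid_eq_of_toList {u v : FreeMonoid Bool}
    (h : FreeMonoid.toList u = FreeMonoid.toList v) : u = v := h

theorem ofList_ne_one' {s : List Bool} (hs : s ≠ []) : FreeMonoid.ofList s ≠ 1 :=
  fun hcon => hs (by simpa using congrArg FreeMonoid.toList hcon)

theorem uniqAux (w : ℕ → FreeMonoid Bool)
    (h2 : ∀ n m, n ≠ m → ¬ ∃ x y, w m = x * w n * y)
    {m m' : ℕ} {r r' : List Bool}
    (h : FreeMonoid.toList (w m) ++ r = FreeMonoid.toList (w m') ++ r') :
    m = m' ∧ r = r' := by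
  have key : ∀ {a b : ℕ} {t : List Bool},
      FreeMonoid.toList (w b) = FreeMonoid.toList (w a) ++ t → a = b := by
    rintro a b t ht
    by_contra hab
    exact h2 a b hab ⟨1, FreeMonoid.ofList t, by
      apply freeMonoid_eq_of_toList
      simp [FreeMonoid.toList_mul, ht]⟩
  rcases List.append_eq_append_iff.mp h with ⟨t, ht, hr⟩ | ⟨t, ht, hr⟩
  · -- ht : toList (w m') = toList (w m) ++ t, hr : r = t ++ r'
    have hmm : m = m' := key ht
    subst hmm
    have hlen := congrArg List.length ht
    simp only [List.length_append] at hlen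
    have ht0 : t = [] := List.length_eq_zero_iff.mp (by omega)
    exact ⟨rfl, by simp [hr, ht0]⟩
  · -- ht : toList (w m) = toList (w m') ++ t, hr : r' = t ++ r
    have hmm : m' = m := key ht
    subst hmm
    have hlen := congrArg List.length ht
    simp only [List.length_append] at hlen
    have ht0 : t = [] := List.length_eq_zero_iff.mp (by omega)
    exact ⟨rfl, by simp [hr, ht0]⟩

/-- No completion can happen while reading a nonempty proper suffix of `w n`. -/
theorem noCompAux (w : ℕ → FreeMonoid Bool)
    (h1 : ∀ n m (q : FreeMonoid Bool), q ≠ 1 → (∃ r, r ≠ 1 ∧ w n = q * r) →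
      ¬ ∃ r, w m = r * q)
    (h2 : ∀ n m, n ≠ m → ¬ ∃ x y, w m = x * w n * y)
    {n : ℕ} {pre s : List Bool} (hw : FreeMonoid.toList (w n) = pre ++ s)
    (hpre : pre ≠ []) (hs : s ≠ []) (h : List Bool) :
    ¬ ∃ m r, s ++ h = FreeMonoid.toList (w m) ++ r := by
  rintro ⟨m, r, heq⟩
  rcases List.append_eq_append_iff.mp heq with ⟨t, ht, _⟩ | ⟨t, ht, _⟩
  · -- ht : toList (w m) = s ++ t : s is a prefix of w m
    rcases eq_or_ne t [] with rfl | htne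
    · -- w m equals s, so w m sits inside w n with nonempty pre
      simp only [List.append_nil] at ht
      rcases eq_or_ne m n with rfl | hmn
      · apply hpre
        have hlen := congrArg List.length (hw.symm.trans ht)
        simp only [List.length_append] at hlen
        exact List.length_eq_zero_iff.mp (by omega)
      · exact h2 m n hmn ⟨FreeMonoid.ofList pre, 1, by
          apply freeMonoid_eq_of_toList
          simp [FreeMonoid.toList_mul, hw, ht]⟩
    · -- s is a nonempty proper prefix of w m and a suffix of w n : contradicts h1
      refine h1 m n (FreeMonoid.ofList s) (ofList_ne_one' hs)
        ⟨FreeMonoid.ofList t, ofList_ne_one' htne, by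
          apply freeMonoid_eq_of_toList
          simp [FreeMonoid.toList_mul, ht]⟩
        ⟨FreeMonoid.ofList pre, by
          apply freeMonoid_eq_of_toList
          simp [FreeMonoid.toList_mul, hw]⟩
  · -- ht : s = toList (w m) ++ t : w m is a subword of w n
    rcases eq_or_ne m n with rfl | hmn
    · apply hpre
      have hlen := congrArg List.length (hw.trans (by rw [ht]))
      simp only [List.length_append] at hlen
      exact List.length_eq_zero_iff.mp (by omega)
    · exact h2 m n hmn ⟨FreeMonoid.ofList pre, FreeMonoid.ofList t, by
        apply freeMonoid_eq_of_toList
        simp [FreeMonoid.toList_mul, hw, ht]⟩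

theorem runNC {X : Type*} (w : ℕ → FreeMonoid Bool) (f : ℕ → Function.End X)
    (θ : X ≃ X × List Bool)
    (h1 : ∀ n m (q : FreeMonoid Bool), q ≠ 1 → (∃ r, r ≠ 1 ∧ w n = q * r) →
      ¬ ∃ r, w m = r * q)
    (h2 : ∀ n m, n ≠ m → ¬ ∃ x y, w m = x * w n * y)
    {n : ℕ} (s : List Bool) : ∀ (pre : List Bool),
    FreeMonoid.toList (w n) = pre ++ s → pre ≠ [] → ∀ x h,
    sigAux w f θ (FreeMonoid.ofList s) (x, h) = (x, s ++ h) := by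
  induction s with
  | nil =>
    intro pre _ _ x h
    show sigAux w f θ 1 (x, h) = (x, h)
    rw [map_one]; rfl
  | cons c s' ih =>
    intro pre hw hpre x h
    have hsplit : FreeMonoid.ofList (c :: s') =
        FreeMonoid.of c * FreeMonoid.ofList s' := rfl
    rw [hsplit, map_mul]
    have hrec := ih (pre ++ [c]) (by simp [hw]) (by simp) x h
    show (sigAux w f θ (FreeMonoid.of c) * sigAux w f θ (FreeMonoid.ofList s'))
      (x, h) = (x, (c :: s') ++ h)
    rw [Function.End.mul_def]
    show sigAux w f θ (FreeMonoid.of c) (sigAux w f θ (FreeMonoid.ofList s') (x, h)) = _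
    rw [hrec]
    show stepAux w f θ c (x, s' ++ h) = (x, (c :: s') ++ h)
    unfold stepAux
    exact dif_neg (noCompAux w h1 h2 (s := c :: s') (by simpa using hw) hpre
      (by simp) h)

theorem runFull {X : Type*} (w : ℕ → FreeMonoid Bool) (f : ℕ → Function.End X)
    (θ : X ≃ X × List Bool) (hne : ∀ n, w n ≠ 1)
    (h1 : ∀ n m (q : FreeMonoid Bool), q ≠ 1 → (∃ r, r ≠ 1 ∧ w n = q * r) →
      ¬ ∃ r, w m = r * q)
    (h2 : ∀ n m, n ≠ m → ¬ ∃ x y, w m = x * w n * y)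
    (n : ℕ) (z : X × List Bool) :
    sigAux w f θ (w n) z = θ (f n (θ.symm z)) := by
  classical
  obtain ⟨x, h⟩ := z
  obtain ⟨c, s', hcs⟩ : ∃ c s', FreeMonoid.toList (w n) = c :: s' := by
    cases hl : FreeMonoid.toList (w n) with
    | nil => exact absurd (freeMonoid_eq_of_toList (u := w n) (v := 1) hl) (hne n)
    | cons c s' => exact ⟨c, s', rfl⟩
  have hsplit : w n = FreeMonoid.of c * FreeMonoid.ofList s' := by
    apply freeMonoid_eq_of_toList; rw [hcs]; rfl
  rw [hsplit, map_mul, Function.End.mul_def]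
  show sigAux w f θ (FreeMonoid.of c) (sigAux w f θ (FreeMonoid.ofList s') (x, h)) = _
  rw [runNC w f θ h1 h2 (n := n) s' [c] (by simpa using hcs) (by simp) x h]
  show stepAux w f θ c (x, s' ++ h) = θ (f n (θ.symm (x, h)))
  unfold stepAux
  show (if H : ∃ m r, c :: (s' ++ h) = FreeMonoid.toList (w m) ++ r then
      θ (f H.choose (θ.symm (x, H.choose_spec.choose)))
    else (x, c :: (s' ++ h))) = θ (f n (θ.symm (x, h)))
  have Hex : ∃ m r, c :: (s' ++ h) = FreeMonoid.toList (w m) ++ r :=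
    ⟨n, h, by rw [hcs]; rfl⟩
  rw [dif_pos Hex]
  have hspec : c :: (s' ++ h) =
      FreeMonoid.toList (w Hex.choose) ++ Hex.choose_spec.choose :=
    Hex.choose_spec.choose_spec
  have heq : FreeMonoid.toList (w Hex.choose) ++ Hex.choose_spec.choose =
      FreeMonoid.toList (w n) ++ h := by
    rw [← hspec, hcs]; rfl
  obtain ⟨hm, hr⟩ := uniqAux w h2 heq
  rw [hr, hm]

/-- Corollary 3.3: if no nonempty proper prefix of any `wₙ` is a suffix of any `wₘ`,
and `wₙ` is not a subword of `wₘ` for `n ≠ m`, then `(w₁, w₂, …)` is a universal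
sequence for `X^X` for any infinite set `X`. -/
theorem stmt16 {X : Type*} [Infinite X]
    (w : ℕ → FreeMonoid Bool) (hne : ∀ n, w n ≠ 1)
    (h1 : ∀ n m (q : FreeMonoid Bool), q ≠ 1 → (∃ r, r ≠ 1 ∧ w n = q * r) →
      ¬ ∃ r, w m = r * q)
    (h2 : ∀ n m, n ≠ m → ¬ ∃ x y, w m = x * w n * y) :
    ∀ f : ℕ → Function.End X, ∃ Φ : FreeMonoid Bool →* Function.End X,
      ∀ n, Φ (w n) = f n := by
  intro f
  obtain ⟨θ⟩ : Nonempty (X ≃ X × List Bool) := by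
    rw [← Cardinal.eq, Cardinal.mk_prod, Cardinal.mk_list_eq_aleph0]
    simp [Cardinal.mk_mul_aleph0_eq]
  refine ⟨{ toFun := fun u => (fun x => θ.symm (sigAux w f θ u (θ x)) : Function.End X),
            map_one' := ?_, map_mul' := ?_ }, ?_⟩
  · funext x; simp only [map_one]
    show θ.symm ((1 : Function.End (X × List Bool)) (θ x)) = x
    rw [Function.End.one_def]; simp
  · intro u v
    funext x
    show θ.symm (sigAux w f θ (u * v) (θ x)) = _
    rw [map_mul, Function.End.mul_def]
    show θ.symm (sigAux w f θ u (sigAux w f θ v (θ x))) =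
      θ.symm (sigAux w f θ u (θ (θ.symm (sigAux w f θ v (θ x)))))
    rw [Equiv.apply_symm_apply]
  · intro n
    funext x
    show θ.symm (sigAux w f θ (w n) (θ x)) = f n x
    rw [runFull w f θ hne h1 h2 n (θ x)]
    simp
end

section
/- The Banach sequence (a b a^{n+1} b²)_{n∈ℕ} over the alphabet {a, b} satisfies: no proper prefix of any word in the sequence is a suffix of any word in the sequence, and no word of the sequence is a subword of another; consequently it is a universal sequence for X^X for every infinite set X. -/
open List

def Bl (n : ℕ) : List Bool := true :: false :: (List.replicate (n+1) true ++ [false, false])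

/-- The Banach sequence `wₙ = a b a^(n+1) b²` over `{a, b}`. -/
def banach (n : ℕ) : FreeMonoid Bool :=
  FreeMonoid.of true * FreeMonoid.of false * (FreeMonoid.of true) ^ (n + 1) *
    (FreeMonoid.of false) ^ 2

lemma toList_of_pow (a : Bool) (k : ℕ) : ((FreeMonoid.of a) ^ k).toList = List.replicate k a := by
  induction k with
  | zero => simp
  | succ k ih => rw [pow_succ, FreeMonoid.toList_mul, ih, FreeMonoid.toList_of,
      List.replicate_succ']

lemma banach_toList (n : ℕ) : (banach n).toList = Bl n := by
  simp [banach, FreeMonoid.toList_mul, toList_of_pow, Bl]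

lemma Bl_length (n : ℕ) : (Bl n).length = n + 5 := by simp [Bl]

lemma not_ff (k : ℕ) (w w' : List Bool) :
    List.replicate k true ++ (false :: true :: w) ≠ false :: false :: w' := by
  cases k <;> simp [List.replicate_succ]

lemma not_f (k : ℕ) (w w' : List Bool) :
    List.replicate (k+1) true ++ w ≠ false :: w' := by
  simp [List.replicate_succ]

lemma repR : ∀ {j j' : ℕ} {l l' : List Bool},
    List.replicate j true ++ (false :: l) = List.replicate j' true ++ (false :: l') →
    j = j' ∧ l = l' := by
  intro j
  induction j with
  | zero => intro j' l l' h; cases j' with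
    | zero => simpa using h
    | succ j' => simp [List.replicate_succ] at h
  | succ j ih => intro j' l l' h; cases j' with
    | zero => simp [List.replicate_succ] at h
    | succ j' =>
        simp only [List.replicate_succ, List.cons_append, List.cons.injEq] at h
        obtain ⟨-, h⟩ := h
        obtain ⟨h1, h2⟩ := ih h
        exact ⟨by omega, h2⟩

lemma pre_rep : ∀ (k : ℕ) (l s : List Bool), l <+: (List.replicate k true ++ s) →
    (∃ j ≤ k, l = List.replicate j true) ∨
    ∃ l', l = List.replicate k true ++ l' ∧ l' <+: s := by
  intro k
  induction k with
  | zero => intro l s h; right; exact ⟨l, by simp, by simpa using h⟩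
  | succ k ih =>
    intro l s h
    rw [List.replicate_succ, List.cons_append] at h
    cases l with
    | nil => left; exact ⟨0, by omega, rfl⟩
    | cons c l' =>
      rw [List.cons_prefix_cons] at h
      obtain ⟨rfl, h⟩ := h
      rcases ih l' s h with ⟨j, hj, rfl⟩ | ⟨l'', rfl, hl''⟩
      · exact Or.inl ⟨j+1, by omega, by rw [List.replicate_succ]⟩
      · exact Or.inr ⟨l'', by rw [List.replicate_succ, List.cons_append], hl''⟩

lemma prefix_classify (n : ℕ) (l : List Bool) (h : l <+: Bl n) :
    l = [] ∨ l = [true] ∨ (∃ j, j ≤ n+1 ∧ l = true :: false :: List.replicate j true) ∨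
    l = true :: false :: (List.replicate (n+1) true ++ [false]) ∨ l = Bl n := by
  cases l with
  | nil => exact Or.inl rfl
  | cons c l1 =>
    rw [Bl, List.cons_prefix_cons] at h
    obtain ⟨rfl, h⟩ := h
    cases l1 with
    | nil => exact Or.inr (Or.inl rfl)
    | cons c2 l2 =>
      rw [List.cons_prefix_cons] at h
      obtain ⟨rfl, h⟩ := h
      rcases pre_rep _ _ _ h with ⟨j, hj, rfl⟩ | ⟨l3, rfl, hl3⟩
      · exact Or.inr (Or.inr (Or.inl ⟨j, hj, rfl⟩))
      · rcases l3 with _ | ⟨c3, l4⟩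
        · exact Or.inr (Or.inr (Or.inl ⟨n+1, le_refl _, by simp⟩))
        · rw [List.cons_prefix_cons] at hl3
          obtain ⟨rfl, hl3⟩ := hl3
          rcases l4 with _ | ⟨c4, l5⟩
          · exact Or.inr (Or.inr (Or.inr (Or.inl rfl)))
          · rw [List.cons_prefix_cons] at hl3
            obtain ⟨rfl, hl3⟩ := hl3
            rcases l5 with _ | ⟨c5, l6⟩
            · right; right; right; right; rfl
            · simp at hl3

lemma key1 (n m : ℕ) (q r s : List Bool) (hq : q ≠ []) (hr : r ≠ [])
    (h1 : Bl n = q ++ r) (h2 : Bl m = s ++ q) : False := by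
  have hpre : q <+: Bl n := ⟨r, h1.symm⟩
  have hrev : (Bl m).reverse = q.reverse ++ s.reverse := by
    rw [h2]; simp
  have hBrev : (Bl m).reverse = false :: false :: (List.replicate (m+1) true ++ [false, true]) := by
    simp [Bl]
  rcases prefix_classify n q hpre with rfl | rfl | ⟨j, hj, rfl⟩ | rfl | rfl
  · exact hq rfl
  · rw [hBrev] at hrev; simp at hrev
  · rw [hBrev] at hrev
    simp only [List.reverse_cons, List.reverse_replicate, List.append_assoc,
      List.cons_append, List.nil_append, List.singleton_append] at hrev
    exact not_ff _ _ _ hrev.symm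
  · rw [hBrev] at hrev
    simp only [List.reverse_cons, List.reverse_append, List.reverse_replicate,
      List.append_assoc, List.cons_append, List.nil_append, List.singleton_append,
      List.reverse_nil] at hrev
    -- hrev : f::f::... = f :: (rep (n+1) ++ (f :: t :: srev))  (hopefully)
    rw [List.cons.injEq] at hrev
    exact not_f _ _ _ hrev.2.symm
  · have : Bl n ++ [] = Bl n ++ r := by simpa using h1
    exact hr (List.append_cancel_left this).symm

lemma key2 (n m : ℕ) (hnm : n ≠ m) (x y : List Bool)
    (h : Bl m = x ++ (Bl n ++ y)) : False := by
  have hpre : x <+: Bl m := ⟨Bl n ++ y, h.symm⟩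
  rcases prefix_classify m x hpre with rfl | rfl | ⟨j, hj, rfl⟩ | rfl | rfl
  · rw [List.nil_append, Bl, Bl] at h
    simp only [List.cons_append, List.cons.injEq] at h
    obtain ⟨-, -, h⟩ := h
    have h' : List.replicate (m+1) true ++ (false :: [false]) =
        List.replicate (n+1) true ++ (false :: ([false] ++ y)) := by
      simpa using h
    obtain ⟨h1, -⟩ := repR h'
    omega
  · rw [Bl] at h
    simp [Bl] at h
  · rw [Bl] at h
    simp only [List.cons_append, List.cons.injEq] at h
    obtain ⟨-, -, h⟩ := h
    have h' : List.replicate (m+1) true ++ (false :: [false]) =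
        List.replicate (j+1) true ++ (false :: ((List.replicate (n+1) true ++ [false, false]) ++ y)) := by
      rw [List.replicate_succ' (n := j)]
      simp [Bl] at h ⊢
      simpa using h
    obtain ⟨-, h2⟩ := repR h'
    have := congrArg List.length h2
    simp at this
    omega
  · rw [Bl] at h
    simp only [List.cons_append, List.cons.injEq, List.append_assoc] at h
    obtain ⟨-, -, h⟩ := h
    have h2 := List.append_cancel_left h
    have := congrArg List.length h2
    simp [Bl] at this
  · have := congrArg List.length h
    simp [Bl_length] at this

lemma uniqB (n m : ℕ) (u v : List Bool) (h : Bl n ++ u = Bl m ++ v) : n = m ∧ u = v := by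
  have hnm : n = m := by
    by_contra hne
    rcases le_total (Bl n).length (Bl m).length with hle | hle
    · obtain ⟨w, hw⟩ := List.prefix_of_prefix_length_le ⟨u, rfl⟩ ⟨v, h.symm⟩ hle
      exact key2 n m hne [] w (by rw [List.nil_append]; exact hw.symm)
    · obtain ⟨w, hw⟩ := List.prefix_of_prefix_length_le ⟨v, rfl⟩ ⟨u, h⟩ hle
      exact key2 m n (Ne.symm hne) [] w (by rw [List.nil_append]; exact hw.symm)
  subst hnm
  exact ⟨rfl, List.append_cancel_left h⟩

lemma notrig (n m i : ℕ) (hi1 : 1 ≤ i) (hi2 : i ≤ n+4) (u v : List Bool)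
    (h : (Bl n).drop i ++ u = Bl m ++ v) : False := by
  set s := (Bl n).drop i with hs
  have hslen : s.length = n + 5 - i := by rw [hs, List.length_drop, Bl_length]
  have hsx : Bl n = (Bl n).take i ++ s := (List.take_append_drop i (Bl n)).symm
  rcases le_or_gt s.length (Bl m).length with hle | hlt
  · obtain ⟨w, hw⟩ := List.prefix_of_prefix_length_le ⟨u, rfl⟩ ⟨v, h.symm⟩ hle
    rcases eq_or_ne w [] with rfl | hwne
    · have hsm : Bl m = s := by simpa using hw.symm
      have hne : m ≠ n := by
        intro hmn; subst hmn
        have := congrArg List.length hsm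
        rw [Bl_length, hslen] at this
        omega
      exact key2 m n hne ((Bl n).take i) [] (hsx.trans (by simp [hsm]))
    · refine key1 m n s w ((Bl n).take i) ?_ hwne hw.symm hsx
      intro hh; rw [hh] at hslen; simp at hslen; omega
  · obtain ⟨w, hw⟩ := List.prefix_of_prefix_length_le ⟨v, h.symm⟩ ⟨u, rfl⟩ (le_of_lt hlt)
    have hne : m ≠ n := by
      intro hmn; subst hmn
      have := congrArg List.length hw
      simp [Bl_length, hslen] at this
      omega
    exact key2 m n hne ((Bl n).take i) w (hsx.trans (by rw [hw]))

noncomputable def mstepAux {X : Type*} (e : X × List Bool ≃ X) (f : ℕ → Function.End X)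
    (c : Bool) (p : X × List Bool) : X :=
  letI := Classical.dec (∃ q : ℕ × List Bool, c :: p.2 = Bl q.1 ++ q.2)
  if h : ∃ q : ℕ × List Bool, c :: p.2 = Bl q.1 ++ q.2
  then f h.choose.1 (e (p.1, h.choose.2))
  else e (p.1, c :: p.2)

noncomputable def mstep {X : Type*} (e : X × List Bool ≃ X) (f : ℕ → Function.End X)
    (c : Bool) : Function.End X := fun x => mstepAux e f c (e.symm x)

lemma mstep_apply {X : Type*} (e : X × List Bool ≃ X) (f : ℕ → Function.End X)
    (c : Bool) (p : X × List Bool) : mstep e f c (e p) = mstepAux e f c p := by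
  show mstepAux e f c (e.symm (e p)) = mstepAux e f c p
  rw [Equiv.symm_apply_apply]

lemma mstep_run {X : Type*} (e : X × List Bool ≃ X) (f : ℕ → Function.End X) (n : ℕ) (x : X) :
    ∀ k, k ≤ n + 4 →
      ((Bl n).drop (n+5-k)).foldr (fun c y => mstep e f c y) x =
      e ((e.symm x).1, (Bl n).drop (n+5-k) ++ (e.symm x).2) := by
  intro k
  induction k with
  | zero =>
    intro _
    have hd : (Bl n).drop (n+5-0) = [] := by
      apply List.drop_eq_nil_of_le; rw [Bl_length]; omega
    rw [hd]; simp
  | succ k ih =>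
    intro hk
    have hk' := ih (by omega)
    have hlt : n+5-(k+1) < (Bl n).length := by rw [Bl_length]; omega
    have hd : (Bl n).drop (n+5-(k+1)) = (Bl n)[n+5-(k+1)] :: (Bl n).drop (n+5-k) := by
      rw [List.drop_eq_getElem_cons hlt]; congr 2; omega
    rw [hd, List.foldr_cons, hk', mstep_apply]
    simp only [mstepAux]
    rw [dif_neg]
    · simp
    · rintro ⟨⟨m, v⟩, hq⟩
      refine notrig n m (n+5-(k+1)) (by omega) (by omega) (e.symm x).2 v ?_
      rw [hd, List.cons_append]
      exact hq

lemma prod_map_end {X : Type*} (g : Bool → Function.End X) (l : List Bool) (x : X) :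
    (l.map g).prod x = l.foldr (fun c y => g c y) x := by
  induction l with
  | nil => rfl
  | cons c l ih =>
    simp only [List.map_cons, List.prod_cons, List.foldr_cons, ← ih]
    rfl

universe u

/-- The Banach sequence has no nonempty proper prefix of any word occurring as a
suffix of any word, no word is a subword of another, and consequently it is a
universal sequence for `X^X` for every infinite set `X`. -/
theorem stmt17 :
    (∀ n m (q : FreeMonoid Bool), q ≠ 1 → (∃ r, r ≠ 1 ∧ banach n = q * r) →
      ¬ ∃ r, banach m = r * q) ∧
    (∀ n m, n ≠ m → ¬ ∃ x y, banach m = x * banach n * y) ∧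
    (∀ (X : Type u), Infinite X →
      ∀ f : ℕ → Function.End X, ∃ Φ : FreeMonoid Bool →* Function.End X,
        ∀ n, Φ (banach n) = f n) := by
  refine ⟨?_, ?_, ?_⟩
  · rintro n m q hq ⟨r, hr, hqr⟩ ⟨s, hs⟩
    have h1 : Bl n = q.toList ++ r.toList := by
      rw [← banach_toList, hqr, FreeMonoid.toList_mul]
    have h2 : Bl m = s.toList ++ q.toList := by
      rw [← banach_toList, hs, FreeMonoid.toList_mul]
    refine key1 n m q.toList r.toList s.toList ?_ ?_ h1 h2
    · intro hh
      exact hq (FreeMonoid.toList.injective (by rw [hh, FreeMonoid.toList_one]))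
    · intro hh
      exact hr (FreeMonoid.toList.injective (by rw [hh, FreeMonoid.toList_one]))
  · rintro n m hnm ⟨x, y, hxy⟩
    refine key2 n m hnm x.toList y.toList ?_
    rw [← banach_toList, hxy]
    simp [FreeMonoid.toList_mul, banach_toList]
  · intro X hX f
    haveI := hX
    obtain ⟨e⟩ : Nonempty (X × List Bool ≃ X) := by
      rw [← Cardinal.eq, Cardinal.mk_prod, Cardinal.mk_list_eq_aleph0,
        Cardinal.lift_uzero, Cardinal.lift_aleph0]
      exact Cardinal.mul_aleph0_eq (Cardinal.aleph0_le_mk X)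
    refine ⟨FreeMonoid.lift (mstep e f), ?_⟩
    intro n
    funext x
    have hfold : (FreeMonoid.lift (mstep e f)) (banach n) x =
        (Bl n).foldr (fun c y => mstep e f c y) x := by
      rw [FreeMonoid.lift_apply, banach_toList, prod_map_end]
    rw [hfold]
    have hBd : Bl n = true :: (Bl n).drop 1 := rfl
    have hrun := mstep_run e f n x (n+4) (le_refl _)
    have h1 : n+5-(n+4) = 1 := by omega
    rw [h1] at hrun
    calc (Bl n).foldr (fun c y => mstep e f c y) x
        = mstep e f true (((Bl n).drop 1).foldr (fun c y => mstep e f c y) x) := by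
          nth_rewrite 1 [hBd]; rw [List.foldr_cons]
      _ = f n x := by
          rw [hrun, mstep_apply]
          simp only [mstepAux]
          have hex : ∃ q : ℕ × List Bool,
              true :: ((Bl n).drop 1 ++ (e.symm x).2) = Bl q.1 ++ q.2 :=
            ⟨(n, (e.symm x).2), by rw [← List.cons_append, ← hBd]⟩
          rw [dif_pos hex]
          have hspec := hex.choose_spec
          set p := hex.choose with hp
          have h2 : Bl n ++ (e.symm x).2 = Bl p.1 ++ p.2 := by
            rw [hBd, List.cons_append]; exact hspec
          obtain ⟨hm, hv⟩ := uniqB n p.1 (e.symm x).2 p.2 h2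
          rw [← hm, ← hv]
          simp
end
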